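/- arXiv:1303.7297 — 11 statements merged into one kernel-verified Lean document; each statement's English description precedes it below -/
import Mathlib

section
/- Let q > 0, let G : ℝ → [0,1] be a cumulative distribution function, and let c_m ∈ ℝ, d_m > 0 be sequences such that m·G(c_m + d_m z) → exp_q(z) as m → ∞ for each z ∈ ℝ at which exp_q(z) is finite. Let F be a Borel probability measure on ℝ^p, fix α ∈ ℝ and β ∈ ℝ^p, and let A ⊆ ℝ^p be a compact set such that exp_q(α + βᵀx) is finite for every x ∈ A (i.e., 1 + (1−q)(α + βᵀx) > 0 for all x ∈ A when q > 1). Then m · ∫_A G(c_m + d_m(α + βᵀx)) F(dx) → ∫_A exp_q(α + βᵀx) F(dx) as m → ∞. -/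
open Filter Topology MeasureTheory

/-- The `q`-exponential function: `exp_q(z) = e^z` if `q = 1` and
`exp_q(z) = [1+(1-q)z]₊^{1/(1-q)}` if `q ≠ 1` (real-valued; on the set where
`exp_q` is finite, i.e. everywhere for `q ≤ 1` and where `1+(1-q)z > 0` for `q > 1`,
this coincides with the extended-real-valued definition). -/
noncomputable def qexp (q z : ℝ) : ℝ :=
  if q = 1 then Real.exp z else (max (1 + (1 - q) * z) 0) ^ (1 / (1 - q))

/-- Let `q > 0`, let `G : ℝ → [0,1]` be a cumulative distribution function,
and let `c_m ∈ ℝ`, `d_m > 0` be sequences with `m·G(c_m + d_m z) → exp_q(z)` for each `z`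
at which `exp_q(z)` is finite.  Let `F` be a Borel probability measure on `ℝ^p`, fix
`α ∈ ℝ`, `β ∈ ℝ^p`, and let `A` be a compact set with `exp_q(α + βᵀx)` finite on `A`.
Then `m · ∫_A G(c_m + d_m(α + βᵀx)) F(dx) → ∫_A exp_q(α + βᵀx) F(dx)`. -/
theorem imbalanced_limit_of_intensity
    (q : ℝ) (hq : 0 < q)
    (G : ℝ → ℝ)
    (hG_mono : Monotone G)
    (hG_right : ∀ x : ℝ, ContinuousWithinAt G (Set.Ici x) x)
    (hG_range : ∀ x : ℝ, G x ∈ Set.Icc (0 : ℝ) 1)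
    (hG_bot : Tendsto G atBot (𝓝 0))
    (hG_top : Tendsto G atTop (𝓝 1))
    (c : ℕ → ℝ) (d : ℕ → ℝ) (hd : ∀ m, 0 < d m)
    (hGEV : ∀ z : ℝ, (q ≤ 1 ∨ 0 < 1 + (1 - q) * z) →
      Tendsto (fun m : ℕ => (m : ℝ) * G (c m + d m * z)) atTop (𝓝 (qexp q z)))
    (p : ℕ) (F : Measure (Fin p → ℝ)) [IsProbabilityMeasure F]
    (α : ℝ) (β : Fin p → ℝ)
    (A : Set (Fin p → ℝ)) (hA : IsCompact A)
    (hfin : ∀ x ∈ A, q ≤ 1 ∨ 0 < 1 + (1 - q) * (α + ∑ i, β i * x i)) :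
    Tendsto
      (fun m : ℕ => (m : ℝ) * ∫ x in A, G (c m + d m * (α + ∑ i, β i * x i)) ∂F)
      atTop (𝓝 (∫ x in A, qexp q (α + ∑ i, β i * x i) ∂F)) := by
  rcases A.eq_empty_or_nonempty with rfl | ⟨x0, hx0⟩
  · simp
  -- the linear functional
  set f : (Fin p → ℝ) → ℝ := fun x => α + ∑ i, β i * x i with hf
  have hf_cont : Continuous f := by
    apply continuous_const.add
    exact continuous_finset_sum _ fun i _ => continuous_const.mul (continuous_apply i)
  obtain ⟨xs, hxsA, hxs⟩ := hA.exists_isMaxOn ⟨x0, hx0⟩ hf_cont.continuousOn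
  have hzs := hGEV (f xs) (hfin xs hxsA)
  obtain ⟨C, hC⟩ := hzs.bddAbove_range
  have hC' : ∀ m : ℕ, (m : ℝ) * G (c m + d m * f xs) ≤ C := fun m =>
    hC ⟨m, rfl⟩
  have hAmeas : MeasurableSet A := hA.isClosed.measurableSet
  have hGmeas : Measurable G := hG_mono.measurable
  simp_rw [← integral_const_mul]
  apply MeasureTheory.tendsto_integral_of_dominated_convergence (fun _ => C)
  · intro m
    exact ((measurable_const.mul (hGmeas.comp
      (measurable_const.add (measurable_const.mul hf_cont.measurable)))).aestronglyMeasurable)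
  · exact MeasureTheory.integrable_const C
  · intro m
    filter_upwards [MeasureTheory.ae_restrict_mem hAmeas] with x hx
    have h0 : 0 ≤ G (c m + d m * f x) := (hG_range _).1
    have h1 : G (c m + d m * f x) ≤ G (c m + d m * f xs) := by
      apply hG_mono
      have h2 : f x ≤ f xs := hxs hx
      nlinarith [hd m]
    rw [Real.norm_eq_abs, abs_of_nonneg (by positivity)]
    calc (m : ℝ) * G (c m + d m * f x) ≤ (m : ℝ) * G (c m + d m * f xs) := by
          exact mul_le_mul_of_nonneg_left h1 (Nat.cast_nonneg m)
      _ ≤ C := hC' m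
  · filter_upwards [MeasureTheory.ae_restrict_mem hAmeas] with x hx
    exact hGEV (f x) (hfin x hx)
end

section
/- Let q > 0, let G : ℝ → [0,1] be a cumulative distribution function, and let c_m ∈ ℝ, d_m > 0 be sequences such that m·G(c_m + d_m z) → exp_q(z) as m → ∞ for each z ∈ ℝ at which exp_q(z) is finite. Let F be a Borel probability measure on ℝ^p and fix α ∈ ℝ, β ∈ ℝ^p. For each m, let μ_m be the probability measure on ℝ^p × {0,1} determined by μ_m(A × {1}) = ∫_A G(c_m + d_m(α + βᵀx)) F(dx) and μ_m(A × {0}) = ∫_A (1 − G(c_m + d_m(α + βᵀx))) F(dx), and let (X_1,Y_1),…,(X_m,Y_m) be i.i.d. with law μ_m. Then for any positive integer J, any nonnegative integers n_1,…,n_J, and any mutually disjoint compact sets A_1,…,A_J ⊆ ℝ^p on each of which exp_q(α + βᵀx) is finite, lim_{m→∞} P( #{i ≤ m : X_i ∈ A_j, Y_i = 1} = n_j for all j = 1,…,J ) = ∏_{j=1}^J λ(A_j)^{n_j} e^{−λ(A_j)} / n_j!, where λ(A_j) = ∫_{A_j} exp_q(α + βᵀx) F(dx). That is, the points X_i with Y_i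 = 1 converge in law to a Poisson point process with intensity measure exp_q(α + βᵀx) F(dx). -/
open Filter Topology MeasureTheory
open Finset

section AuxPoisson

lemma aux_card {ι : Type*} [Fintype ι] [DecidableEq ι] :
    ∀ (J : ℕ) (n : ℕ → ℕ) (t : Finset ι),
    ((Finset.univ : Finset (Fin J → Finset ι)).filter
      (fun s => (∀ j : Fin J, s j ⊆ t ∧ (s j).card = n ↑j) ∧
        ∀ j k, j ≠ k → Disjoint (s j) (s k))).card
    = ∏ j ∈ Finset.range J, Nat.choose (t.card - ∑ k ∈ Finset.range j, n k) (n j) := by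
  intro J
  induction J with
  | zero =>
      intro n t
      rw [Finset.filter_true_of_mem (fun s _ => ⟨fun j => j.elim0, fun j => j.elim0⟩)]
      simp
  | succ J ih =>
      intro n t
      classical
      have key : (Finset.univ.filter fun s : Fin (J+1) → Finset ι =>
            (∀ j : Fin (J+1), s j ⊆ t ∧ (s j).card = n ↑j) ∧ ∀ j k, j ≠ k → Disjoint (s j) (s k))
          = (t.powersetCard (n 0)).biUnion (fun s₀ =>
              (Finset.univ.filter fun s' : Fin J → Finset ι =>
                (∀ j : Fin J, s' j ⊆ t \ s₀ ∧ (s' j).card = n (↑j+1)) ∧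
                  ∀ j k, j ≠ k → Disjoint (s' j) (s' k)).image (Fin.cons s₀)) := by
        ext s
        simp only [Finset.mem_filter, Finset.mem_biUnion, Finset.mem_powersetCard,
          Finset.mem_image, Finset.mem_univ, true_and]
        constructor
        · rintro ⟨h1, h2⟩
          refine ⟨s 0, ⟨(h1 0).1, (h1 0).2⟩, Fin.tail s, ⟨fun j => ⟨?_, ?_⟩, ?_⟩,
            Fin.cons_self_tail s⟩
          · intro i hi
            refine Finset.mem_sdiff.2 ⟨(h1 j.succ).1 hi, fun hi0 => ?_⟩
            exact (Finset.disjoint_left.1 (h2 j.succ 0 (Fin.succ_ne_zero j)) hi) hi0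
          · simpa [Fin.val_succ, Fin.tail] using (h1 j.succ).2
          · intro j k hjk
            exact h2 j.succ k.succ (fun h => hjk (Fin.succ_injective _ h))
        · rintro ⟨s₀, ⟨hs₀t, hs₀c⟩, s', ⟨hs'1, hs'2⟩, rfl⟩
          have hsub : ∀ j', s' j' ⊆ t \ s₀ := fun j' => (hs'1 j').1
          refine ⟨fun j => ?_, fun j k hjk => ?_⟩
          · induction j using Fin.cases with
            | zero => simpa using ⟨hs₀t, hs₀c⟩
            | succ j' =>
                simp only [Fin.cons_succ]
                exact ⟨fun i hi => (Finset.mem_sdiff.1 (hsub j' hi)).1,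
                  by simpa [Fin.val_succ] using (hs'1 j').2⟩
          · induction j using Fin.cases with
            | zero =>
                induction k using Fin.cases with
                | zero => exact absurd rfl hjk
                | succ k' =>
                    simp only [Fin.cons_zero, Fin.cons_succ]
                    exact Finset.disjoint_left.2 fun i hi hi' =>
                      (Finset.mem_sdiff.1 (hsub k' hi')).2 hi
            | succ j' =>
                induction k using Fin.cases with
                | zero =>
                    simp only [Fin.cons_zero, Fin.cons_succ]
                    exact Finset.disjoint_left.2 fun i hi hi' =>
                      (Finset.mem_sdiff.1 (hsub j' hi)).2 hi'
                | succ k' =>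
                    simp only [Fin.cons_succ]
                    exact hs'2 j' k' (fun h => hjk (congrArg Fin.succ h))
      rw [key, Finset.card_biUnion]
      · have hterm : ∀ s₀ ∈ t.powersetCard (n 0),
            ((Finset.univ.filter fun s' : Fin J → Finset ι =>
              (∀ j : Fin J, s' j ⊆ t \ s₀ ∧ (s' j).card = n (↑j+1)) ∧
                ∀ j k, j ≠ k → Disjoint (s' j) (s' k)).image
                (Fin.cons (α := fun _ : Fin (J+1) => Finset ι) s₀)).card
            = ∏ j ∈ Finset.range J,
                Nat.choose ((t.card - n 0) - ∑ k ∈ Finset.range j, n (k+1)) (n (j+1)) := by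
          intro s₀ hs₀
          have hinj : Function.Injective
              (Fin.cons (α := fun _ : Fin (J+1) => Finset ι) s₀) := fun u v h =>
            funext fun j => by simpa using congrFun h j.succ
          rw [Finset.card_image_of_injective _ hinj]
          rw [Finset.mem_powersetCard] at hs₀
          rw [ih (fun k => n (k+1)) (t \ s₀), Finset.card_sdiff_of_subset hs₀.1, hs₀.2]
        rw [Finset.sum_congr rfl hterm, Finset.sum_const, Finset.card_powersetCard,
          smul_eq_mul, Finset.prod_range_succ', mul_comm]
        congr 1
        · refine Finset.prod_congr rfl fun j _ => ?_
          congr 1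
          rw [Finset.sum_range_succ']
          omega
      · intro x hx y hy hxy
        simp only [Finset.disjoint_left, Finset.mem_image]
        rintro a ⟨u, _, rfl⟩ ⟨v, _, hv⟩
        exact hxy (by simpa using (congrFun hv 0).symm)


section
open scoped ENNReal

lemma measure_count_eq {X : Type*} [MeasurableSpace X] (ν : Measure X) [IsProbabilityMeasure ν]
    {J : ℕ} (B : Fin J → Set X) (hB : ∀ j, MeasurableSet (B j))
    (hdisj : ∀ j k, j ≠ k → Disjoint (B j) (B k)) (n : ℕ → ℕ) (m : ℕ) :
    (Measure.pi fun _ : Fin m => ν)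
      {ω : Fin m → X | ∀ j : Fin J, {i : Fin m | ω i ∈ B j}.ncard = n ↑j}
    = (∏ j ∈ Finset.range J, Nat.choose (m - ∑ k ∈ Finset.range j, n k) (n j) : ℕ) *
      ((∏ j : Fin J, (ν (B j)) ^ (n ↑j)) *
        (1 - ∑ j : Fin J, ν (B j)) ^ (m - ∑ k ∈ Finset.range J, n k)) := by
  classical
  set D : Finset (Fin J → Finset (Fin m)) :=
    (Finset.univ.filter
      (fun s => (∀ j : Fin J, s j ⊆ Finset.univ ∧ (s j).card = n ↑j) ∧
        ∀ j k, j ≠ k → Disjoint (s j) (s k))) with hD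
  set fib : (Fin m → X) → Fin J → Finset (Fin m) :=
    fun ω j => Finset.univ.filter (fun i => ω i ∈ B j) with hfib
  set Cs : (Fin J → Finset (Fin m)) → Fin m → Set X :=
    fun s i => if h : ∃ j, i ∈ s j then B h.choose else (⋃ j, B j)ᶜ with hCs
  have hfib_mem : ∀ ω j i, i ∈ fib ω j ↔ ω i ∈ B j := by
    intro ω j i; simp [hfib]
  have hCs_meas : ∀ s i, MeasurableSet (Cs s i) := by
    intro s i
    by_cases h : ∃ j, i ∈ s j
    · simp only [hCs, dif_pos h]; exact hB _
    · simp only [hCs, dif_neg h]; exact (MeasurableSet.iUnion fun j => hB j).compl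
  have hkey : ∀ s : Fin J → Finset (Fin m), (∀ j k, j ≠ k → Disjoint (s j) (s k)) →
      ∀ ω : Fin m → X, (∀ i, ω i ∈ Cs s i) → ∀ j, fib ω j = s j := by
    intro s hs ω hω j
    ext i
    rw [hfib_mem]
    constructor
    · intro hBi
      by_contra hns
      by_cases h : ∃ k, i ∈ s k
      · have hω' := hω i
        simp only [hCs] at hω'
        rw [dif_pos h] at hω'
        have hne : h.choose ≠ j := fun he => hns (he ▸ h.choose_spec)
        exact (hdisj h.choose j hne).le_bot ⟨hω', hBi⟩
      · have hω' := hω i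
        simp only [hCs] at hω'
        rw [dif_neg h] at hω'
        exact hω' (Set.mem_iUnion.2 ⟨j, hBi⟩)
    · intro hi
      have h : ∃ k, i ∈ s k := ⟨j, hi⟩
      have hω' := hω i
      simp only [hCs] at hω'
      rw [dif_pos h] at hω'
      have : h.choose = j := by
        by_contra hne
        exact (Finset.disjoint_left.1 (hs _ _ hne) h.choose_spec) hi
      rwa [this] at hω'
  have hev : {ω : Fin m → X | ∀ j : Fin J, {i : Fin m | ω i ∈ B j}.ncard = n ↑j}
      = ⋃ s ∈ D, Set.pi Set.univ (Cs s) := by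
    have hnc : ∀ (ω : Fin m → X) (j : Fin J),
        {i : Fin m | ω i ∈ B j}.ncard = (fib ω j).card := by
      intro ω j
      rw [Set.ncard_eq_toFinset_card']
      congr 1
      ext i; simp [hfib]
    ext ω
    simp only [Set.mem_setOf_eq, Set.mem_iUnion, exists_prop]
    constructor
    · intro hc
      refine ⟨fib ω, ?_, ?_⟩
      · rw [hD, Finset.mem_filter]
        refine ⟨Finset.mem_univ _, fun j => ⟨Finset.subset_univ _, by rw [← hnc]; exact hc j⟩,
          fun j k hjk => Finset.disjoint_left.2 fun i hij hik => ?_⟩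
        exact (hdisj j k hjk).le_bot ⟨(hfib_mem ω j i).1 hij, (hfib_mem ω k i).1 hik⟩
      · intro i _
        by_cases h : ∃ j, i ∈ fib ω j
        · rw [hCs]; simp only [dif_pos h]
          exact (hfib_mem ω _ i).1 h.choose_spec
        · rw [hCs]; simp only [dif_neg h]
          intro hmem
          rcases Set.mem_iUnion.1 hmem with ⟨j, hj⟩
          exact h ⟨j, (hfib_mem ω j i).2 hj⟩
    · rintro ⟨s, hsD, hω⟩
      rw [hD, Finset.mem_filter] at hsD
      have := hkey s hsD.2.2 ω (fun i => hω i (Set.mem_univ i))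
      intro j
      rw [hnc, this j]
      exact (hsD.2.1 j).2
  rw [hev]
  haveI : ∀ _i : Fin m, SigmaFinite ν := fun _ => inferInstance
  rw [measure_biUnion_finset ?pd (fun s _ => MeasurableSet.univ_pi (hCs_meas s))]
  case pd =>
    intro s hs s' hs' hne
    simp only [Function.onFun]
    rw [Set.disjoint_left]
    intro ω hω hω'
    simp only [Finset.mem_coe, hD, Finset.mem_filter] at hs hs'
    apply hne
    funext j
    rw [← hkey s hs.2.2 ω (fun i => hω i (Set.mem_univ i)),
      ← hkey s' hs'.2.2 ω (fun i => hω' i (Set.mem_univ i))]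
  have hνc : ν ((⋃ j, B j)ᶜ) = 1 - ∑ j : Fin J, ν (B j) := by
    rw [measure_compl (MeasurableSet.iUnion fun j => hB j) (measure_ne_top ν _), measure_univ,
      measure_iUnion (fun j k hjk => hdisj j k hjk) (fun j => hB j), tsum_fintype]
  have hterm : ∀ s ∈ D, (Measure.pi fun _ : Fin m => ν) (Set.pi Set.univ (Cs s))
      = (∏ j : Fin J, (ν (B j)) ^ (n ↑j)) *
        (1 - ∑ j : Fin J, ν (B j)) ^ (m - ∑ k ∈ Finset.range J, n k) := by
    intro s hsD
    rw [hD, Finset.mem_filter] at hsD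
    obtain ⟨-, hs1, hs2⟩ := hsD
    have hpd : Set.PairwiseDisjoint (↑(Finset.univ : Finset (Fin J))) s :=
      fun j _ k _ hjk => hs2 j k hjk
    rw [Measure.pi_pi]
    set U : Finset (Fin m) := Finset.univ.biUnion s with hU
    rw [← Finset.prod_sdiff (Finset.subset_univ U)]
    have hUcard : U.card = ∑ k ∈ Finset.range J, n k := by
      rw [hU, Finset.card_biUnion hpd]
      rw [Finset.sum_congr rfl (fun j _ => (hs1 j).2)]
      exact (Fin.sum_univ_eq_sum_range (fun k => n k) J)
    have h1 : ∏ i ∈ Finset.univ \ U, ν (Cs s i)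
        = (1 - ∑ j : Fin J, ν (B j)) ^ (m - ∑ k ∈ Finset.range J, n k) := by
      have : ∀ i ∈ Finset.univ \ U, ν (Cs s i) = 1 - ∑ j : Fin J, ν (B j) := by
        intro i hi
        rw [Finset.mem_sdiff, hU] at hi
        have h : ¬∃ j, i ∈ s j := by
          rintro ⟨j, hj⟩
          exact hi.2 (Finset.mem_biUnion.2 ⟨j, Finset.mem_univ _, hj⟩)
        rw [hCs]; simp only [dif_neg h]
        exact hνc
      rw [Finset.prod_congr rfl this, Finset.prod_const, Finset.card_sdiff_of_subset (Finset.subset_univ U),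
        hUcard, Finset.card_univ, Fintype.card_fin]
    have h2 : ∏ i ∈ U, ν (Cs s i) = ∏ j : Fin J, (ν (B j)) ^ (n ↑j) := by
      rw [hU, Finset.prod_biUnion hpd]
      refine Finset.prod_congr rfl fun j _ => ?_
      have : ∀ i ∈ s j, ν (Cs s i) = ν (B j) := by
        intro i hi
        have h : ∃ k, i ∈ s k := ⟨j, hi⟩
        have hcj : h.choose = j := by
          by_contra hne
          exact (Finset.disjoint_left.1 (hs2 _ _ hne) h.choose_spec) hi
        rw [hCs]; simp only [dif_pos h, hcj]
      rw [Finset.prod_congr rfl this, Finset.prod_const, (hs1 j).2]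
    rw [h1, h2, mul_comm]
  have hcard : D.card
      = ∏ j ∈ Finset.range J, Nat.choose (m - ∑ k ∈ Finset.range j, n k) (n j) := by
    have := aux_card (ι := Fin m) J n Finset.univ
    rw [Finset.card_univ, Fintype.card_fin] at this
    exact this
  rw [Finset.sum_congr rfl hterm, Finset.sum_const, nsmul_eq_mul, hcard]
end


lemma tendsto_sub_div_self_nat (cc : ℝ) :
    Tendsto (fun m : ℕ => ((m : ℝ) - cc) / (m : ℝ)) atTop (𝓝 1) := by
  have h : Tendsto (fun m : ℕ => 1 - cc * (1 / (m : ℝ))) atTop (𝓝 1) := by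
    simpa using tendsto_const_nhds.sub (tendsto_one_div_atTop_nhds_zero_nat.const_mul cc)
  refine h.congr' ?_
  filter_upwards [eventually_ge_atTop 1] with m hm
  have hm0 : (m : ℝ) ≠ 0 := Nat.cast_ne_zero.2 (by omega)
  field_simp

lemma tendsto_choose_div_pow (a k : ℕ) :
    Tendsto (fun m : ℕ => (((m - a).choose k : ℕ) : ℝ) / (m : ℝ) ^ k) atTop
      (𝓝 (1 / (k.factorial : ℝ))) := by
  have hlim : Tendsto (fun m : ℕ =>
      (∏ i ∈ Finset.range k, (((m : ℝ) - (a + i)) / (m : ℝ))) * (1 / (k.factorial : ℝ)))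
      atTop (𝓝 (1 / (k.factorial : ℝ))) := by
    have := (tendsto_finset_prod (Finset.range k)
      (fun i _ => tendsto_sub_div_self_nat ((a : ℝ) + i))).mul_const (1 / (k.factorial : ℝ))
    simpa using this
  refine hlim.congr' ?_
  filter_upwards [eventually_ge_atTop (a + k + 1)] with m hm
  have hm0 : (m : ℝ) ≠ 0 := Nat.cast_ne_zero.2 (by omega)
  have hk : (k.factorial : ℝ) ≠ 0 := Nat.cast_ne_zero.2 k.factorial_ne_zero
  have hdesc : (((m - a).choose k : ℕ) : ℝ) * (k.factorial : ℝ)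
      = ∏ i ∈ Finset.range k, ((m : ℝ) - (a + i)) := by
    have h1 : (m - a).descFactorial k = ∏ i ∈ Finset.range k, (m - a - i) :=
      Nat.descFactorial_eq_prod_range _ k
    have h2 : k.factorial * (m - a).choose k = (m - a).descFactorial k :=
      (Nat.descFactorial_eq_factorial_mul_choose _ _).symm
    have h3 : ∀ i ∈ Finset.range k, ((m - a - i : ℕ) : ℝ) = (m : ℝ) - (a + i) := by
      intro i hi
      rw [Finset.mem_range] at hi
      rw [Nat.sub_sub, Nat.cast_sub (by omega)]
      push_cast
      ring
    calc (((m - a).choose k : ℕ) : ℝ) * (k.factorial : ℝ)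
        = ((k.factorial * (m - a).choose k : ℕ) : ℝ) := by push_cast; ring
      _ = (((m - a).descFactorial k : ℕ) : ℝ) := by rw [h2]
      _ = ((∏ i ∈ Finset.range k, (m - a - i) : ℕ) : ℝ) := by rw [h1]
      _ = ∏ i ∈ Finset.range k, ((m : ℝ) - (a + i)) := by
          rw [Nat.cast_prod]; exact Finset.prod_congr rfl h3
  rw [Finset.prod_div_distrib, Finset.prod_const, Finset.card_range, ← hdesc]
  field_simp

lemma tendsto_one_sub_pow_exp (N : ℕ) (Λ : ℝ) (a : ℕ → ℝ) (ha : ∀ m, 0 ≤ a m)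
    (h : Tendsto (fun m : ℕ => (m : ℝ) * a m) atTop (𝓝 Λ)) :
    Tendsto (fun m : ℕ => (1 - a m) ^ (m - N)) atTop (𝓝 (Real.exp (-Λ))) := by
  have ha0 : Tendsto a atTop (𝓝 0) := by
    have h2 : Tendsto (fun m : ℕ => ((m : ℝ) * a m) * (1 / (m : ℝ))) atTop (𝓝 (Λ * 0)) :=
      h.mul tendsto_one_div_atTop_nhds_zero_nat
    rw [mul_zero] at h2
    refine h2.congr' ?_
    filter_upwards [eventually_ge_atTop 1] with m hm
    have hm0 : (m : ℝ) ≠ 0 := Nat.cast_ne_zero.2 (by omega)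
    field_simp
  have hev : ∀ᶠ m : ℕ in atTop, a m < 1/2 ∧ N ≤ m := by
    filter_upwards [ha0.eventually (eventually_lt_nhds (by norm_num : (0:ℝ) < 1/2)),
      eventually_ge_atTop N] with m h1 h2
    exact ⟨h1, h2⟩
  -- limit of the log expression
  have hNa : Tendsto (fun m : ℕ => (N : ℝ) * a m) atTop (𝓝 0) := by
    simpa using ha0.const_mul (N : ℝ)
  have hU : Tendsto (fun m : ℕ => -((m : ℝ) * a m) + (N : ℝ) * a m) atTop (𝓝 (-Λ)) := by
    simpa using (h.neg.add hNa)
  have hLo : Tendsto (fun m : ℕ => (-((m : ℝ) * a m) + (N : ℝ) * a m) / (1 - a m))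
      atTop (𝓝 (-Λ)) := by
    have hden : Tendsto (fun m : ℕ => 1 - a m) atTop (𝓝 1) := by
      simpa using tendsto_const_nhds.sub ha0
    have := hU.div hden one_ne_zero
    rw [div_one] at this
    exact this
  have hL : Tendsto (fun m : ℕ => ((m : ℝ) - N) * Real.log (1 - a m)) atTop (𝓝 (-Λ)) := by
    refine tendsto_of_tendsto_of_tendsto_of_le_of_le' hLo hU ?_ ?_
    · filter_upwards [hev] with m ⟨h1, h2⟩
      have hpos : 0 < 1 - a m := by linarith
      have hlog : -(a m / (1 - a m)) ≤ Real.log (1 - a m) := by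
        have := Real.log_le_sub_one_of_pos (inv_pos.2 hpos)
        rw [Real.log_inv] at this
        have h4 : (1 - a m)⁻¹ - 1 = a m / (1 - a m) := by field_simp; ring
        linarith [this, h4.ge]
      have hmN : (0 : ℝ) ≤ (m : ℝ) - N := by
        have : (N : ℝ) ≤ m := Nat.cast_le.2 h2
        linarith
      have := mul_le_mul_of_nonneg_left hlog hmN
      calc (-((m : ℝ) * a m) + (N : ℝ) * a m) / (1 - a m)
          = ((m : ℝ) - N) * (-(a m / (1 - a m))) := by field_simp; ring
        _ ≤ ((m : ℝ) - N) * Real.log (1 - a m) := this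
    · filter_upwards [hev] with m ⟨h1, h2⟩
      have hpos : 0 < 1 - a m := by linarith
      have hlog : Real.log (1 - a m) ≤ -(a m) := by
        have := Real.log_le_sub_one_of_pos hpos
        linarith
      have hmN : (0 : ℝ) ≤ (m : ℝ) - N := by
        have : (N : ℝ) ≤ m := Nat.cast_le.2 h2
        linarith
      have := mul_le_mul_of_nonneg_left hlog hmN
      calc ((m : ℝ) - N) * Real.log (1 - a m) ≤ ((m : ℝ) - N) * (-(a m)) := this
        _ = -((m : ℝ) * a m) + (N : ℝ) * a m := by ring
  have := (Real.continuous_exp.continuousAt (x := -Λ)).tendsto.comp hL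
  refine this.congr' ?_
  filter_upwards [hev] with m ⟨h1, h2⟩
  have hpos : 0 < 1 - a m := by linarith
  have hcast : ((m - N : ℕ) : ℝ) = (m : ℝ) - N := by
    rw [Nat.cast_sub h2]
  calc Real.exp (((m : ℝ) - N) * Real.log (1 - a m))
      = Real.exp (((m - N : ℕ) : ℝ) * Real.log (1 - a m)) := by rw [hcast]
    _ = Real.exp (Real.log (1 - a m)) ^ (m - N) := by rw [Real.exp_nat_mul]
    _ = (1 - a m) ^ (m - N) := by rw [Real.exp_log hpos]

end AuxPoisson

/-- imbalanced binomial regression converges in law to the Poisson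
point process with intensity measure `exp_q(α + βᵀx) F(dx)`.
Let `q > 0`, `G` a cdf satisfying the GEV assumption with sequences `c_m, d_m`,
`F` a Borel probability measure on `ℝ^p`, `α, β` fixed; for each `m` let `μ_m`
be the law on `ℝ^p × {0,1}` of a single observation `(X_i, Y_i)` and consider
`m` i.i.d. copies.  Then for disjoint compact sets `A_1, …, A_J` on which
`exp_q(α+βᵀx)` is finite and nonnegative integers `n_1, …, n_J`,
`P(#{i : X_i ∈ A_j, Y_i = 1} = n_j ∀j) → ∏_j λ(A_j)^{n_j} e^{-λ(A_j)} / n_j!`,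
where `λ(A_j) = ∫_{A_j} exp_q(α+βᵀx) F(dx)`. -/
theorem binomial_regression_tendsto_poisson_point_process
    (q : ℝ) (hq : 0 < q)
    (G : ℝ → ℝ)
    (hG_mono : Monotone G)
    (hG_right : ∀ x : ℝ, ContinuousWithinAt G (Set.Ici x) x)
    (hG_range : ∀ x : ℝ, G x ∈ Set.Icc (0 : ℝ) 1)
    (hG_bot : Tendsto G atBot (𝓝 0))
    (hG_top : Tendsto G atTop (𝓝 1))
    (c : ℕ → ℝ) (d : ℕ → ℝ) (hd : ∀ m, 0 < d m)
    (hGEV : ∀ z : ℝ, (q ≤ 1 ∨ 0 < 1 + (1 - q) * z) →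
      Tendsto (fun m : ℕ => (m : ℝ) * G (c m + d m * z)) atTop (𝓝 (qexp q z)))
    (p : ℕ) (F : Measure (Fin p → ℝ)) [IsProbabilityMeasure F]
    (α : ℝ) (β : Fin p → ℝ)
    -- the law `μ m` of one observation `(X_i, Y_i)` under the true parameter
    (μ : ℕ → Measure ((Fin p → ℝ) × Bool))
    (hμprob : ∀ m, IsProbabilityMeasure (μ m))
    (hμ1 : ∀ m, ∀ S : Set (Fin p → ℝ), MeasurableSet S →
      μ m (S ×ˢ ({true} : Set Bool)) =
        ENNReal.ofReal (∫ x in S, G (c m + d m * (α + ∑ i, β i * x i)) ∂F))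
    (hμ0 : ∀ m, ∀ S : Set (Fin p → ℝ), MeasurableSet S →
      μ m (S ×ˢ ({false} : Set Bool)) =
        ENNReal.ofReal (∫ x in S, (1 - G (c m + d m * (α + ∑ i, β i * x i))) ∂F))
    (J : ℕ) (hJ : 0 < J)
    (n : Fin J → ℕ)
    (A : Fin J → Set (Fin p → ℝ))
    (hA_compact : ∀ j, IsCompact (A j))
    (hA_disj : ∀ j k, j ≠ k → Disjoint (A j) (A k))
    (hfin : ∀ j, ∀ x ∈ A j, q ≤ 1 ∨ 0 < 1 + (1 - q) * (α + ∑ i, β i * x i)) :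
    Tendsto
      (fun m : ℕ =>
        ((Measure.pi fun _ : Fin m => μ m)
            {ω : Fin m → (Fin p → ℝ) × Bool |
              ∀ j, {i : Fin m | (ω i).1 ∈ A j ∧ (ω i).2 = true}.ncard = n j}).toReal)
      atTop
      (𝓝 (∏ j, (∫ x in A j, qexp q (α + ∑ i, β i * x i) ∂F) ^ (n j) *
            Real.exp (-(∫ x in A j, qexp q (α + ∑ i, β i * x i) ∂F)) /
            (Nat.factorial (n j)))) := by
  classical
  have hℓc : Continuous (fun x : Fin p → ℝ => α + ∑ i, β i * x i) :=
    continuous_const.add (continuous_finset_sum _ fun i _ =>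
      continuous_const.mul (continuous_apply i))
  have hAmeas : ∀ j, MeasurableSet (A j) := fun j => (hA_compact j).isClosed.measurableSet
  set ℓ : (Fin p → ℝ) → ℝ := fun x => α + ∑ i, β i * x i with hℓdef
  set g : ℕ → Fin J → ℝ := fun m j => ∫ x in A j, G (c m + d m * ℓ x) ∂F with hgdef
  set lam : Fin J → ℝ := fun j => ∫ x in A j, qexp q (ℓ x) ∂F with hlamdef
  have hGmeas : ∀ m, Measurable (fun x : Fin p → ℝ => G (c m + d m * ℓ x)) := fun m =>
    hG_mono.measurable.comp (measurable_const.add (measurable_const.mul hℓc.measurable))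
  have hg0 : ∀ m j, 0 ≤ g m j := fun m j =>
    setIntegral_nonneg (hAmeas j) fun x _ => (hG_range _).1
  -- convergence of m * g m j to lam j
  have hmg : ∀ j, Tendsto (fun m : ℕ => (m : ℝ) * g m j) atTop (𝓝 (lam j)) := by
    intro j
    rcases Set.eq_empty_or_nonempty (A j) with h | hne
    · have hgz : ∀ m, g m j = 0 := fun m => by simp [hgdef, h]
      have hlz : lam j = 0 := by simp [hlamdef, h]
      simpa [hgz, hlz] using (tendsto_const_nhds : Tendsto (fun _ : ℕ => (0:ℝ)) atTop (𝓝 0))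
    · obtain ⟨x₀, hx₀, hmax⟩ := (hA_compact j).exists_isMaxOn hne hℓc.continuousOn
      have hM : Tendsto (fun m : ℕ => (m : ℝ) * G (c m + d m * ℓ x₀)) atTop
          (𝓝 (qexp q (ℓ x₀))) := hGEV (ℓ x₀) (hfin j x₀ hx₀)
      obtain ⟨M, hMb⟩ := hM.bddAbove_range
      have hub : ∀ m : ℕ, ∀ x ∈ A j, |(m : ℝ) * G (c m + d m * ℓ x)| ≤ M := by
        intro m x hx
        have h0 : 0 ≤ (m : ℝ) * G (c m + d m * ℓ x) :=
          mul_nonneg (Nat.cast_nonneg m) (hG_range _).1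
        rw [abs_of_nonneg h0]
        have h1 : G (c m + d m * ℓ x) ≤ G (c m + d m * ℓ x₀) := by
          apply hG_mono
          have hle : ℓ x ≤ ℓ x₀ := hmax hx
          have := mul_le_mul_of_nonneg_left hle (le_of_lt (hd m))
          linarith
        calc (m : ℝ) * G (c m + d m * ℓ x) ≤ (m : ℝ) * G (c m + d m * ℓ x₀) :=
              mul_le_mul_of_nonneg_left h1 (Nat.cast_nonneg m)
          _ ≤ M := hMb ⟨m, rfl⟩
      have hdct : Tendsto (fun m : ℕ => ∫ x in A j, (m : ℝ) * G (c m + d m * ℓ x) ∂F)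
          atTop (𝓝 (∫ x in A j, qexp q (ℓ x) ∂F)) := by
        refine tendsto_integral_of_dominated_convergence (fun _ => M)
          (fun m => ((hGmeas m).const_mul (m : ℝ)).aestronglyMeasurable)
          (integrable_const M) (fun m => ?_) ?_
        · rw [ae_restrict_iff' (hAmeas j)]
          exact ae_of_all _ fun x hx => by
            rw [Real.norm_eq_abs]; exact hub m x hx
        · rw [ae_restrict_iff' (hAmeas j)]
          exact ae_of_all _ fun x hx => hGEV (ℓ x) (hfin j x hx)
      refine hdct.congr fun m => ?_
      rw [MeasureTheory.integral_const_mul]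
  -- the sets B j
  set B : Fin J → Set ((Fin p → ℝ) × Bool) := fun j => (A j) ×ˢ ({true} : Set Bool) with hBdef
  have hBmeas : ∀ j, MeasurableSet (B j) := fun j =>
    (hAmeas j).prod (measurableSet_singleton true)
  have hBdisj : ∀ j k, j ≠ k → Disjoint (B j) (B k) := fun j k hjk =>
    Set.disjoint_left.2 fun z hz hz' => Set.disjoint_left.1 (hA_disj j k hjk) hz.1 hz'.1
  set nn : ℕ → ℕ := fun k => if h : k < J then n ⟨k, h⟩ else 0 with hnn
  have hnnj : ∀ j : Fin J, nn ↑j = n j := fun j => by simp [hnn, j.is_lt]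
  set N : ℕ := ∑ j, n j with hN
  have hNsum : (∑ k ∈ Finset.range J, nn k) = N := by
    rw [hN, ← Fin.sum_univ_eq_sum_range (fun k => nn k) J]
    exact Finset.sum_congr rfl fun j _ => hnnj j
  set S : ℕ → ℝ := fun m => ∑ j, g m j with hS
  have hS0 : ∀ m, 0 ≤ S m := fun m => Finset.sum_nonneg fun j _ => hg0 m j
  set K : ℕ → ℕ :=
    fun m => ∏ j ∈ Finset.range J, Nat.choose (m - ∑ k ∈ Finset.range j, nn k) (nn j) with hK
  set a : Fin J → ℕ := fun j => ∑ k ∈ Finset.range (j : ℕ), nn k with ha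
  -- probability identity
  have hμB : ∀ m j, μ m (B j) = ENNReal.ofReal (g m j) := fun m j => hμ1 m (A j) (hAmeas j)
  have hsum_le : ∀ m, (∑ j, ENNReal.ofReal (g m j)) ≤ 1 := by
    intro m
    have h1 : (∑ j, ENNReal.ofReal (g m j)) = μ m (⋃ j, B j) := by
      rw [measure_iUnion (fun j k hjk => hBdisj j k hjk) (fun j => hBmeas j), tsum_fintype]
      exact Finset.sum_congr rfl fun j _ => (hμB m j).symm
    rw [h1]
    exact prob_le_one
  have hPm : ∀ m : ℕ,
      ((Measure.pi fun _ : Fin m => μ m)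
        {ω : Fin m → (Fin p → ℝ) × Bool |
          ∀ j, {i : Fin m | (ω i).1 ∈ A j ∧ (ω i).2 = true}.ncard = n j}).toReal
      = (K m : ℝ) * ((∏ j, (g m j) ^ (n j)) * (1 - S m) ^ (m - N)) := by
    intro m
    haveI := hμprob m
    have hevent : {ω : Fin m → (Fin p → ℝ) × Bool |
          ∀ j, {i : Fin m | (ω i).1 ∈ A j ∧ (ω i).2 = true}.ncard = n j}
        = {ω : Fin m → (Fin p → ℝ) × Bool |
            ∀ j : Fin J, {i : Fin m | ω i ∈ B j}.ncard = nn ↑j} := by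
      ext ω
      simp only [Set.mem_setOf_eq]
      refine forall_congr' fun j => ?_
      rw [hnnj j]
      have : {i : Fin m | (ω i).1 ∈ A j ∧ (ω i).2 = true} = {i : Fin m | ω i ∈ B j} := by
        ext i
        simp only [hBdef, Set.mem_setOf_eq, Set.mem_prod, Set.mem_singleton_iff]
      rw [this]
    rw [hevent, measure_count_eq (μ m) B hBmeas hBdisj nn m]
    have e1 : (∏ j : Fin J, (μ m) (B j) ^ nn ↑j)
        = ∏ j : Fin J, ENNReal.ofReal (g m j) ^ n j :=
      Finset.prod_congr rfl fun j _ => by rw [hμB m j, hnnj j]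
    have e2 : (∑ j : Fin J, (μ m) (B j)) = ∑ j, ENNReal.ofReal (g m j) :=
      Finset.sum_congr rfl fun j _ => hμB m j
    rw [e1, e2, hNsum]
    rw [ENNReal.toReal_mul, ENNReal.toReal_mul, ENNReal.toReal_natCast, ENNReal.toReal_prod,
      ENNReal.toReal_pow, ENNReal.toReal_sub_of_le (hsum_le m) ENNReal.one_ne_top,
      ENNReal.toReal_one, ENNReal.toReal_sum (fun j _ => ENNReal.ofReal_ne_top)]
    congr 2
    · exact Finset.prod_congr rfl fun j _ => by
        rw [ENNReal.toReal_pow, ENNReal.toReal_ofReal (hg0 m j)]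
    · have h5 : (∑ j : Fin J, (ENNReal.ofReal (g m j)).toReal) = S m :=
        Finset.sum_congr rfl fun j _ => ENNReal.toReal_ofReal (hg0 m j)
      rw [h5]
  -- limit computation
  set Λ : ℝ := ∑ j, lam j with hΛ
  have hmS : Tendsto (fun m : ℕ => (m : ℝ) * S m) atTop (𝓝 Λ) := by
    have := tendsto_finset_sum Finset.univ (fun j (_ : j ∈ Finset.univ) => hmg j)
    refine this.congr fun m => ?_
    rw [hS, Finset.mul_sum]
  have hexp : Tendsto (fun m : ℕ => (1 - S m) ^ (m - N)) atTop (𝓝 (Real.exp (-Λ))) :=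
    tendsto_one_sub_pow_exp N Λ S hS0 hmS
  have hfac : ∀ j : Fin J, Tendsto (fun m : ℕ =>
      (((m - a j).choose (n j) : ℕ) : ℝ) / (m : ℝ) ^ (n j) * ((m : ℝ) * g m j) ^ (n j))
      atTop (𝓝 (1 / ((n j).factorial : ℝ) * lam j ^ (n j))) := fun j =>
    (tendsto_choose_div_pow (a j) (n j)).mul ((hmg j).pow (n j))
  have hT : Tendsto (fun m : ℕ =>
      (∏ j, (((m - a j).choose (n j) : ℕ) : ℝ) / (m : ℝ) ^ (n j) * ((m : ℝ) * g m j) ^ (n j)) *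
        (1 - S m) ^ (m - N)) atTop
      (𝓝 ((∏ j, 1 / ((n j).factorial : ℝ) * lam j ^ (n j)) * Real.exp (-Λ))) :=
    (tendsto_finset_prod Finset.univ fun j _ => hfac j).mul hexp
  have hfinal : (∏ j, 1 / ((n j).factorial : ℝ) * lam j ^ (n j)) * Real.exp (-Λ)
      = ∏ j, lam j ^ (n j) * Real.exp (-(lam j)) / ((n j).factorial : ℝ) := by
    have he : Real.exp (-Λ) = ∏ j, Real.exp (-(lam j)) := by
      rw [← Real.exp_sum]
      congr 1
      rw [hΛ, ← Finset.sum_neg_distrib]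
    rw [he, ← Finset.prod_mul_distrib]
    exact Finset.prod_congr rfl fun j _ => by
      field_simp
  rw [show (∏ j, (∫ x in A j, qexp q (α + ∑ i, β i * x i) ∂F) ^ (n j) *
        Real.exp (-(∫ x in A j, qexp q (α + ∑ i, β i * x i) ∂F)) / (Nat.factorial (n j) : ℝ))
      = ∏ j, lam j ^ (n j) * Real.exp (-(lam j)) / ((n j).factorial : ℝ) from rfl]
  rw [← hfinal]
  refine hT.congr' ?_
  filter_upwards [eventually_ge_atTop 1] with m hm
  have hm0 : (m : ℝ) ≠ 0 := Nat.cast_ne_zero.2 (by omega)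
  rw [hPm m]
  have hKcast : (K m : ℝ) = ∏ j : Fin J, (((m - a j).choose (n j) : ℕ) : ℝ) := by
    rw [hK]
    push_cast
    rw [← Fin.prod_univ_eq_prod_range
      (fun k => ((m - ∑ kk ∈ Finset.range k, nn kk).choose (nn k) : ℝ)) J]
    exact Finset.prod_congr rfl fun j _ => by rw [hnnj j, ha]
  rw [hKcast, ← mul_assoc, ← Finset.prod_mul_distrib]
  congr 1
  refine Finset.prod_congr rfl fun j _ => ?_
  rw [mul_pow]
  field_simp
end

section
/- For every t ∈ ℝ and every z ∈ ℝ, there exists a unique γ ∈ ℝ such that exp_t(z − γ) + exp_t(−γ) = 1 (where the equation is understood in [0,∞], so neither term may be infinite). -/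
open ENNReal

/-- The `t`-exponential function, with values in `[0,∞]`:
`exp_t(z) = e^z` if `t = 1` and `exp_t(z) = [1+(1-t)z]₊^{1/(1-t)}` if `t ≠ 1`,
where `[0]₊^r = ∞` when the exponent `r` is negative (this convention is built
into `ENNReal.rpow`: `0 ^ r = ∞` for `r < 0`). -/
noncomputable def qexpE (t z : ℝ) : ℝ≥0∞ :=
  if t = 1 then ENNReal.ofReal (Real.exp z)
  else (ENNReal.ofReal (1 + (1 - t) * z)) ^ (1 / (1 - t))

section Aux

/-- real model for the `t < 1` branch -/
noncomputable def rq (s x : ℝ) : ℝ := (max (1 + s * x) 0) ^ (1 / s)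

lemma rq_nonneg (s x : ℝ) : 0 ≤ rq s x :=
  Real.rpow_nonneg (le_max_right _ 0) _

lemma qexpE_eq_rq {t : ℝ} (ht : t < 1) (x : ℝ) :
    qexpE t x = ENNReal.ofReal (rq (1 - t) x) := by
  have hs : 0 < 1 - t := by linarith
  have hp : 0 < 1 / (1 - t) := by positivity
  rw [qexpE, if_neg (by linarith), rq]
  rcases le_or_gt (1 + (1 - t) * x) 0 with h | h
  · rw [ENNReal.ofReal_eq_zero.mpr h, max_eq_right h,
      Real.zero_rpow hp.ne', ENNReal.ofReal_zero, ENNReal.zero_rpow_of_pos hp]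
  · rw [max_eq_left h.le, ENNReal.ofReal_rpow_of_pos h]

lemma aux_pos (s z : ℝ) (hs : 0 < s) :
    ∃! γ : ℝ, ENNReal.ofReal (rq s (z - γ)) + ENNReal.ofReal (rq s (-γ)) = 1 := by
  have hs1 : s * (1/s) = 1 := by field_simp
  set p := 1 / s with hp_def
  have hp : 0 < p := by positivity
  set g : ℝ → ℝ := fun γ => rq s (z - γ) + rq s (-γ) with hg_def
  -- translation to the real equation
  have key : ∀ γ : ℝ, (ENNReal.ofReal (rq s (z - γ)) + ENNReal.ofReal (rq s (-γ)) = 1)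
      ↔ g γ = 1 := by
    intro γ
    rw [← ENNReal.ofReal_add (rq_nonneg s _) (rq_nonneg s _), ENNReal.ofReal_eq_one]
  set M : ℝ := max (z + 1/s) (1/s) with hM_def
  -- g vanishes from M on
  have hzero : ∀ γ, M ≤ γ → g γ = 0 := by
    intro γ hγ
    have h1 : 1 + s * (z - γ) ≤ 0 := by
      have : z + 1/s ≤ γ := le_trans (le_max_left _ _) hγ
      nlinarith
    have h2 : 1 + s * (-γ) ≤ 0 := by
      have : 1/s ≤ γ := le_trans (le_max_right _ _) hγ
      nlinarith
    have e1 : rq s (z - γ) = 0 := by rw [rq, max_eq_right h1, Real.zero_rpow hp.ne']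
    have e2 : rq s (-γ) = 0 := by rw [rq, max_eq_right h2, Real.zero_rpow hp.ne']
    simp [hg_def, e1, e2]
  -- strict antitonicity on Iic M
  have hanti : StrictAntiOn g (Set.Iic M) := by
    intro a ha b hb hab
    have hterm1 : rq s (z - b) ≤ rq s (z - a) := by
      apply Real.rpow_le_rpow (le_max_right _ 0) _ (by positivity)
      exact max_le_max (by nlinarith) le_rfl
    have hterm2 : rq s (-b) ≤ rq s (-a) := by
      apply Real.rpow_le_rpow (le_max_right _ 0) _ (by positivity)
      exact max_le_max (by nlinarith) le_rfl
    rcases max_cases (z + 1/s) (1/s) with ⟨hM, _⟩ | ⟨hM, _⟩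
    · have hb1 : 0 ≤ 1 + s * (z - b) := by
        have : b ≤ z + 1/s := hM ▸ hb
        nlinarith
      have ha1 : 1 + s * (z - b) < 1 + s * (z - a) := by nlinarith
      have : rq s (z - b) < rq s (z - a) := by
        rw [rq, rq, max_eq_left hb1, max_eq_left (by linarith)]
        exact Real.rpow_lt_rpow hb1 ha1 hp
      exact add_lt_add_of_lt_of_le this hterm2
    · have hb1 : 0 ≤ 1 + s * (-b) := by
        have : b ≤ 1/s := hM ▸ hb
        nlinarith
      have ha1 : 1 + s * (-b) < 1 + s * (-a) := by nlinarith
      have : rq s (-b) < rq s (-a) := by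
        rw [rq, rq, max_eq_left hb1, max_eq_left (by linarith)]
        exact Real.rpow_lt_rpow hb1 ha1 hp
      exact add_lt_add_of_le_of_lt hterm1 this
  -- continuity
  have hcont : Continuous g := by
    apply Continuous.add <;>
    · apply Continuous.rpow_const
      · exact (continuous_const.add (continuous_const.mul (by continuity))).max continuous_const
      · exact fun x => Or.inr hp.le
  -- endpoints
  have hM0 : (0:ℝ) ≤ M := le_trans (by positivity) (le_max_right _ _)
  have hg0 : 1 ≤ g 0 := by
    have h2 : rq s (-0) = 1 := by
      rw [rq, neg_zero, mul_zero, add_zero, max_eq_left zero_le_one, Real.one_rpow]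
    have := rq_nonneg s (z - 0)
    simp only [hg_def, h2]
    linarith
  have hgM : g M = 0 := hzero M le_rfl
  -- existence by IVT
  obtain ⟨γ, hγmem, hγ⟩ : ∃ γ ∈ Set.Icc (0:ℝ) M, g γ = 1 := by
    have := intermediate_value_Icc' hM0 hcont.continuousOn
      (a := 0) (b := M) (show (1:ℝ) ∈ Set.Icc (g M) (g 0) from ⟨by rw [hgM]; norm_num, hg0⟩)
    obtain ⟨γ, hmem, hγ⟩ := this
    exact ⟨γ, hmem, hγ⟩
  refine ⟨γ, (key γ).mpr hγ, ?_⟩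
  intro γ' h'
  have hγ' : g γ' = 1 := (key γ').mp h'
  have hγ'M : γ' ≤ M := by
    by_contra h
    rw [hzero γ' (le_of_lt (not_le.mp h))] at hγ'
    norm_num at hγ'
  exact hanti.injOn hγ'M hγmem.2 (by rw [hγ, hγ'])

lemma aux_neg (s z : ℝ) (hs : s < 0) :
    ∃! γ : ℝ, ENNReal.ofReal (1 + s * (z - γ)) ^ (1/s) + ENNReal.ofReal (1 + s * (-γ)) ^ (1/s)
      = 1 := by
  have hsne : s ≠ 0 := hs.ne
  have hs1 : s * (1/s) = 1 := mul_one_div_cancel hsne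
  set p := 1 / s with hp_def
  have hp : p < 0 := by
    rw [hp_def]; exact div_neg_of_pos_of_neg one_pos hs
  set g : ℝ → ℝ := fun γ => (1 + s * (z - γ)) ^ p + (1 + s * (-γ)) ^ p with hg_def
  set m : ℝ := max (z + 1/s) (1/s) with hm_def
  -- bases are positive beyond m
  have hbase : ∀ γ, m < γ → 0 < 1 + s * (z - γ) ∧ 0 < 1 + s * (-γ) := by
    intro γ hγ
    have h1 : z + 1/s < γ := lt_of_le_of_lt (le_max_left _ _) hγ
    have h2 : 1/s < γ := lt_of_le_of_lt (le_max_right _ _) hγ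
    constructor
    · nlinarith [mul_pos (neg_pos.mpr hs) (sub_pos.mpr h1)]
    · nlinarith [mul_pos (neg_pos.mpr hs) (sub_pos.mpr h2)]
  -- any solution of the ENNReal equation lies beyond m
  have hforce : ∀ γ : ℝ,
      ENNReal.ofReal (1 + s * (z - γ)) ^ (1/s) + ENNReal.ofReal (1 + s * (-γ)) ^ (1/s) = 1 →
      m < γ := by
    intro γ h
    have hb1 : 0 < 1 + s * (z - γ) := by
      by_contra hb
      rw [ENNReal.ofReal_eq_zero.mpr (not_lt.mp hb), ENNReal.zero_rpow_of_neg hp] at h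
      simp at h
    have hb2 : 0 < 1 + s * (-γ) := by
      by_contra hb
      rw [ENNReal.ofReal_eq_zero.mpr (not_lt.mp hb), ENNReal.zero_rpow_of_neg hp] at h
      simp at h
    have hγ1 : z + 1/s < γ := by
      by_contra hcon
      push_neg at hcon
      nlinarith [mul_nonneg (neg_nonneg.mpr hs.le) (sub_nonneg.mpr hcon)]
    have hγ2 : 1/s < γ := by
      by_contra hcon
      push_neg at hcon
      nlinarith [mul_nonneg (neg_nonneg.mpr hs.le) (sub_nonneg.mpr hcon)]
    exact max_lt hγ1 hγ2
  -- translation to the real equation beyond m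
  have key : ∀ γ : ℝ, m < γ →
      ((ENNReal.ofReal (1 + s * (z - γ)) ^ (1/s) + ENNReal.ofReal (1 + s * (-γ)) ^ (1/s) = 1)
        ↔ g γ = 1) := by
    intro γ hγ
    obtain ⟨hb1, hb2⟩ := hbase γ hγ
    rw [ENNReal.ofReal_rpow_of_pos hb1, ENNReal.ofReal_rpow_of_pos hb2,
      ← ENNReal.ofReal_add (Real.rpow_nonneg hb1.le _) (Real.rpow_nonneg hb2.le _),
      ENNReal.ofReal_eq_one]
  -- strict antitonicity on Ioi m
  have hanti : StrictAntiOn g (Set.Ioi m) := by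
    intro a ha b hb hab
    obtain ⟨ha1, ha2⟩ := hbase a ha
    have h1 : 1 + s * (z - a) < 1 + s * (z - b) := by nlinarith
    have h2 : 1 + s * (-a) < 1 + s * (-b) := by nlinarith
    exact add_lt_add (Real.rpow_lt_rpow_of_neg ha1 h1 hp)
      (Real.rpow_lt_rpow_of_neg ha2 h2 hp)
  -- lower endpoint
  set a : ℝ := m - 1/(2*s) with ha_def
  have ham : m < a := by
    have : 0 < -(1/(2*s)) := by
      rw [neg_pos]
      exact div_neg_of_pos_of_neg one_pos (by linarith)
    rw [ha_def]; linarith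
  have hga : 1 ≤ g a := by
    obtain ⟨hb1, hb2⟩ := hbase a ham
    rcases max_cases (z + 1/s) (1/s) with ⟨hm, _⟩ | ⟨hm, _⟩
    · have e : 1 + s * (z - a) = 1/2 := by
        rw [ha_def, hm_def, hm]; field_simp; ring
      have h1 : (1:ℝ) ≤ (1 + s * (z - a)) ^ p := by
        rw [e]
        exact Real.one_le_rpow_of_pos_of_le_one_of_nonpos (by norm_num) (by norm_num) hp.le
      have h2 : (0:ℝ) ≤ (1 + s * (-a)) ^ p := Real.rpow_nonneg hb2.le _
      simp only [hg_def]; linarith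
    · have e : 1 + s * (-a) = 1/2 := by
        rw [ha_def, hm_def, hm]; field_simp; ring
      have h1 : (1:ℝ) ≤ (1 + s * (-a)) ^ p := by
        rw [e]
        exact Real.one_le_rpow_of_pos_of_le_one_of_nonpos (by norm_num) (by norm_num) hp.le
      have h2 : (0:ℝ) ≤ (1 + s * (z - a)) ^ p := Real.rpow_nonneg hb1.le _
      simp only [hg_def]; linarith
  -- upper endpoint
  set c : ℝ := (1/2 : ℝ) ^ s with hc_def
  have hc : 0 < c := Real.rpow_pos_of_pos (by norm_num) _
  have hcp : c ^ p = 1/2 := by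
    rw [hc_def, ← Real.rpow_mul (by norm_num : (0:ℝ) ≤ 1/2), hs1, Real.rpow_one]
  set b : ℝ := m + c / (-s) with hb_def
  have hbm : m < b := by
    have : 0 < c / (-s) := div_pos hc (by linarith)
    rw [hb_def]; linarith
  have hcb1 : c ≤ 1 + s * (z - b) := by
    have h1 : z + 1/s ≤ m := le_max_left _ _
    have e : 1 + s * (z - b) = (-s) * (b - (z + 1/s)) := by field_simp; ring
    have e2 : (-s) * (c / (-s)) = c := by field_simp
    rw [e, ← e2]
    apply mul_le_mul_of_nonneg_left _ (by linarith : (0:ℝ) ≤ -s)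
    rw [hb_def]; linarith
  have hcb2 : c ≤ 1 + s * (-b) := by
    have h1 : 1/s ≤ m := le_max_right _ _
    have e : 1 + s * (-b) = (-s) * (b - 1/s) := by field_simp; ring
    have e2 : (-s) * (c / (-s)) = c := by field_simp
    rw [e, ← e2]
    apply mul_le_mul_of_nonneg_left _ (by linarith : (0:ℝ) ≤ -s)
    rw [hb_def]; linarith
  have hgb : g b ≤ 1 := by
    have h1 : (1 + s * (z - b)) ^ p ≤ c ^ p := Real.rpow_le_rpow_of_nonpos hc hcb1 hp.le
    have h2 : (1 + s * (-b)) ^ p ≤ c ^ p := Real.rpow_le_rpow_of_nonpos hc hcb2 hp.le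
    simp only [hg_def]; rw [hcp] at h1 h2; linarith
  -- a ≤ b
  have hab : a ≤ b := by
    by_contra h
    have := hanti (Set.mem_Ioi.mpr hbm) (Set.mem_Ioi.mpr ham) (not_le.mp h)
    linarith
  -- continuity on [a, b]
  have hcont : ContinuousOn g (Set.Icc a b) := by
    have hsub : Set.Icc a b ⊆ Set.Ioi m := fun x hx => lt_of_lt_of_le ham hx.1
    apply ContinuousOn.add <;>
    · apply ContinuousOn.rpow_const
      · exact Continuous.continuousOn (by fun_prop)
      · intro x hx
        refine Or.inl ?_
        rcases hbase x (hsub hx) with ⟨h1, h2⟩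
        first
          | exact ne_of_gt h1
          | exact ne_of_gt h2
  -- existence by IVT
  obtain ⟨γ, hγmem, hγ⟩ : ∃ γ ∈ Set.Icc a b, g γ = 1 := by
    have := intermediate_value_Icc' hab hcont
      (show (1:ℝ) ∈ Set.Icc (g b) (g a) from ⟨hgb, hga⟩)
    obtain ⟨γ, hmem, hγ⟩ := this
    exact ⟨γ, hmem, hγ⟩
  have hγm : m < γ := lt_of_lt_of_le ham hγmem.1
  refine ⟨γ, (key γ hγm).mpr hγ, ?_⟩
  intro γ' h'
  have hγ'm : m < γ' := hforce γ' h'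
  have hγ' : g γ' = 1 := (key γ' hγ'm).mp h'
  exact hanti.injOn (Set.mem_Ioi.mpr hγ'm) (Set.mem_Ioi.mpr hγm) (by rw [hγ, hγ'])

end Aux

/-- for every `t ∈ ℝ` and every `z ∈ ℝ` there exists a unique
`γ ∈ ℝ` with `exp_t(z - γ) + exp_t(-γ) = 1` (equation in `[0,∞]`, so neither
term may be infinite). -/
theorem t_logistic_normalizer_exists_unique (t z : ℝ) :
    ∃! γ : ℝ, qexpE t (z - γ) + qexpE t (-γ) = 1 := by
  rcases lt_trichotomy t 1 with ht | ht | ht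
  · simp only [qexpE_eq_rq ht]
    exact aux_pos (1 - t) z (by linarith)
  · subst ht
    have hq : ∀ x : ℝ, qexpE 1 x = ENNReal.ofReal (Real.exp x) := fun x => by
      simp [qexpE]
    have hpos : (0:ℝ) < Real.exp z + 1 := by positivity
    have key : ∀ γ : ℝ, (qexpE 1 (z - γ) + qexpE 1 (-γ) = 1)
        ↔ Real.exp (-γ) * (Real.exp z + 1) = 1 := by
      intro γ
      rw [hq, hq, ← ENNReal.ofReal_add (Real.exp_nonneg _) (Real.exp_nonneg _),
        ENNReal.ofReal_eq_one]
      have hsplit : Real.exp (z - γ) = Real.exp z * Real.exp (-γ) := by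
        rw [← Real.exp_add]; ring_nf
      rw [hsplit]
      constructor <;> intro h <;> linear_combination h
    refine ⟨Real.log (Real.exp z + 1), (key _).mpr ?_, ?_⟩
    · rw [Real.exp_neg, Real.exp_log hpos]
      exact inv_mul_cancel₀ hpos.ne'
    · intro γ' h'
      rw [key γ'] at h'
      rw [Real.exp_neg] at h'
      have hE : Real.exp γ' = Real.exp z + 1 := by
        have hne : Real.exp γ' ≠ 0 := (Real.exp_pos _).ne'
        field_simp at h'
        linarith
      have := congrArg Real.log hE
      rwa [Real.log_exp] at this
  · have ht' : t ≠ 1 := ne_of_gt ht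
    simp only [qexpE, if_neg ht']
    exact aux_neg (1 - t) z (by linarith)
end

section
/- For every t ∈ ℝ, the t-logistic distribution function satisfies the symmetry G_t(−z) = 1 − G_t(z) for all z ∈ ℝ; equivalently, γ_t(−z) = −z + γ_t(z) for all z ∈ ℝ. -/
open ENNReal

lemma ennreal_rpow_anti {x y : ℝ≥0∞} {c : ℝ} (h : x ≤ y) (hc : c ≤ 0) : y ^ c ≤ x ^ c := by
  have hx : x ^ c = (x ^ (-c))⁻¹ := by
    rw [← ENNReal.rpow_neg, neg_neg]
  have hy : y ^ c = (y ^ (-c))⁻¹ := by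
    rw [← ENNReal.rpow_neg, neg_neg]
  rw [hx, hy]
  exact ENNReal.inv_le_inv.2 (ENNReal.rpow_le_rpow h (by linarith))

lemma qexpE_mono (t : ℝ) : Monotone (qexpE t) := by
  intro a b hab
  unfold qexpE
  split
  · exact ENNReal.ofReal_le_ofReal (Real.exp_le_exp.2 hab)
  · rename_i ht
    rcases lt_or_gt_of_ne (sub_ne_zero.mpr (Ne.symm ht)) with h | h
    · exact ennreal_rpow_anti (ENNReal.ofReal_le_ofReal (by nlinarith)) (by
        rw [div_nonpos_iff]; left; constructor <;> linarith)
    · exact ENNReal.rpow_le_rpow (ENNReal.ofReal_le_ofReal (by nlinarith)) (by positivity)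

lemma qexpE_inj {t a b : ℝ} (h : qexpE t a = qexpE t b) (h0 : qexpE t a ≠ 0)
    (htop : qexpE t a ≠ ∞) : a = b := by
  by_cases ht : t = 1
  · simp only [qexpE, if_pos ht] at h h0 htop
    have ha : (0:ℝ) < Real.exp a := Real.exp_pos a
    have hb : (0:ℝ) < Real.exp b := Real.exp_pos b
    rw [ENNReal.ofReal_eq_ofReal_iff ha.le hb.le] at h
    exact Real.exp_eq_exp.mp h
  · simp only [qexpE, if_neg ht] at h h0 htop
    have hc : 1 / (1 - t) ≠ 0 := by
      have : (1:ℝ) - t ≠ 0 := sub_ne_zero.mpr (Ne.symm ht)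
      simp [this]
    set x := ENNReal.ofReal (1 + (1 - t) * a) with hxdef
    set y := ENNReal.ofReal (1 + (1 - t) * b) with hydef
    have hx : x = y := by
      have h1t : (1:ℝ) - t ≠ 0 := sub_ne_zero.mpr (Ne.symm ht)
      have := congrArg (fun u : ℝ≥0∞ => u ^ (1 / (1 - t))⁻¹) h
      simpa [← ENNReal.rpow_mul, one_div, inv_mul_cancel₀ h1t] using this
    have hx0 : x ≠ 0 := by
      intro hz
      rw [hz] at h0 htop
      rcases lt_trichotomy (1 / (1 - t)) 0 with hlt | heq | hgt
      · exact htop (ENNReal.zero_rpow_of_neg hlt)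
      · exact hc heq
      · exact h0 (ENNReal.zero_rpow_of_pos hgt)
    have hpa : 0 < 1 + (1 - t) * a := by
      by_contra hn
      exact hx0 (by simp [hxdef, ENNReal.ofReal_eq_zero.2 (not_lt.mp hn)])
    have hpb : 0 < 1 + (1 - t) * b := by
      by_contra hn
      exact hx0 (by rw [hx]; simp [hydef, ENNReal.ofReal_eq_zero.2 (not_lt.mp hn)])
    rw [hxdef, hydef, ENNReal.ofReal_eq_ofReal_iff hpa.le hpb.le] at hx
    have h1t : (1:ℝ) - t ≠ 0 := sub_ne_zero.mpr (Ne.symm ht)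
    have : (1 - t) * a = (1 - t) * b := by linarith
    exact mul_left_cancel₀ h1t this

lemma qexpE_uniq {t w a b : ℝ}
    (ha : qexpE t (w - a) + qexpE t (-a) = 1)
    (hb : qexpE t (w - b) + qexpE t (-b) = 1) : a = b := by
  wlog hab : a ≤ b generalizing a b
  · exact (this hb ha (le_of_not_ge hab)).symm
  have h1 : qexpE t (w - b) ≤ qexpE t (w - a) := qexpE_mono t (by linarith)
  have h2 : qexpE t (-b) ≤ qexpE t (-a) := qexpE_mono t (by linarith)
  have fa1 : qexpE t (w - a) ≠ ∞ := by
    intro h; rw [h] at ha; simp at ha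
  have fa2 : qexpE t (-a) ≠ ∞ := by
    intro h; rw [h, add_top] at ha; simp at ha
  -- termwise equality
  have hmid : qexpE t (w - b) + qexpE t (-a) = 1 := by
    have hle : qexpE t (w - b) + qexpE t (-a) ≤ 1 := by
      rw [← ha]; exact add_le_add_left h1 _
    have hge : (1:ℝ≥0∞) ≤ qexpE t (w - b) + qexpE t (-a) := by
      rw [← hb]; exact add_le_add_right h2 _
    exact le_antisymm hle hge
  have e1 : qexpE t (w - a) = qexpE t (w - b) :=
    WithTop.add_right_cancel fa2 (ha.trans hmid.symm)
  have hb' : qexpE t (w - a) + qexpE t (-b) = 1 := by rw [e1]; exact hb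
  have e2 : qexpE t (-a) = qexpE t (-b) :=
    WithTop.add_left_cancel fa1 (ha.trans hb'.symm)
  by_cases h0 : qexpE t (w - a) = 0
  · have h02 : qexpE t (-a) ≠ 0 := by
      intro hz; rw [h0, hz] at ha; simp at ha
    have := qexpE_inj e2 h02 fa2
    linarith [neg_injective this]
  · have := qexpE_inj e1 h0 fa1
    linarith

/-- for every `t ∈ ℝ`, the `t`-logistic distribution function
`G_t(z) = exp_t(z - γ_t(z))` (where `γ_t(z)` is the unique real with
`exp_t(z - γ_t(z)) + exp_t(-γ_t(z)) = 1`) satisfies the symmetry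
`G_t(-z) = 1 - G_t(z)` for all `z`; equivalently `γ_t(-z) = -z + γ_t(z)`. -/
theorem t_logistic_symmetry (t : ℝ) (γ : ℝ → ℝ)
    (hγ : ∀ z : ℝ, qexpE t (z - γ z) + qexpE t (-(γ z)) = 1) :
    ∀ z : ℝ,
      qexpE t (-z - γ (-z)) = 1 - qexpE t (z - γ z) ∧ γ (-z) = -z + γ z := by
  intro z
  have hw : qexpE t (-z - (-z + γ z)) + qexpE t (-(-z + γ z)) = 1 := by
    rw [show -z - (-z + γ z) = -(γ z) by ring, show -(-z + γ z) = z - γ z by ring,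
      add_comm]
    exact hγ z
  have hgz : γ (-z) = -z + γ z := qexpE_uniq (hγ (-z)) hw
  refine ⟨?_, hgz⟩
  rw [hgz, show -z - (-z + γ z) = -(γ z) by ring]
  have h := hγ z
  have hfin : qexpE t (z - γ z) ≠ ∞ := by
    intro hh; rw [hh] at h; simp at h
  rw [← h, ENNReal.add_sub_cancel_left hfin]
end

section
/- Let t > 1. Then the t-logistic distribution function satisfies G_t(z) = [(1−t)z]^{1/(1−t)} + o((−z)^{1/(1−t)}) as z → −∞; equivalently, lim_{z→−∞} G_t(z) / ((1−t)z)^{1/(1−t)} = 1. Moreover, γ_t(z) → 0 as z → −∞. -/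
open ENNReal Filter Topology

/-- let `t > 1`.  The `t`-logistic distribution function
`G_t(z) = exp_t(z - γ_t(z))` satisfies
`G_t(z) = [(1-t)z]^{1/(1-t)} + o((-z)^{1/(1-t)})` as `z → -∞`; equivalently
`lim_{z→-∞} G_t(z) / ((1-t)z)^{1/(1-t)} = 1`.  Moreover `γ_t(z) → 0` as `z → -∞`. -/
theorem t_logistic_tail_t_gt_one (t : ℝ) (ht : 1 < t) (γ : ℝ → ℝ)
    (hγ : ∀ z : ℝ, qexpE t (z - γ z) + qexpE t (-(γ z)) = 1) :
    Tendsto (fun z : ℝ => (qexpE t (z - γ z)).toReal / ((1 - t) * z) ^ (1 / (1 - t)))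
        atBot (𝓝 1) ∧
      Tendsto γ atBot (𝓝 0) := by
  have htne : t ≠ 1 := ne_of_gt ht
  set p : ℝ := 1 / (1 - t) with hp_def
  have hc : 0 < t - 1 := by linarith
  have hp_neg : p < 0 := by
    rw [hp_def]
    apply div_neg_of_pos_of_neg one_pos
    linarith
  -- γ is nonneg
  have hγ_nonneg : ∀ z, 0 ≤ γ z := by
    intro z
    by_contra hneg
    push_neg at hneg
    have hB_le : qexpE t (-(γ z)) ≤ 1 := le_of_le_of_eq le_add_self (hγ z)
    have hb : 1 + (1 - t) * (-(γ z)) < 1 := by nlinarith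
    rw [qexpE, if_neg htne] at hB_le
    rcases le_or_gt (1 + (1 - t) * (-(γ z))) 0 with h0 | h0
    · rw [ENNReal.ofReal_eq_zero.mpr h0, ENNReal.zero_rpow_of_neg hp_neg] at hB_le
      simp at hB_le
    · rw [ENNReal.ofReal_rpow_of_pos h0] at hB_le
      have : 1 < (1 + (1 - t) * (-(γ z))) ^ p :=
        (Real.one_lt_rpow_iff_of_pos h0).mpr (Or.inr ⟨hb, hp_neg⟩)
      have := (ENNReal.one_lt_ofReal).mpr this
      exact absurd hB_le (not_le.mpr this)
  -- express terms as real powers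
  have hbase1 : ∀ z ≤ (0:ℝ), (1:ℝ) ≤ 1 + (1 - t) * (z - γ z) := by
    intro z hz
    have := hγ_nonneg z
    nlinarith
  have hA_eq : ∀ z ≤ (0:ℝ), (qexpE t (z - γ z)).toReal
      = (1 + (1 - t) * (z - γ z)) ^ p := by
    intro z hz
    rw [qexpE, if_neg htne, ENNReal.ofReal_rpow_of_pos (by linarith [hbase1 z hz]),
      ENNReal.toReal_ofReal]
    exact Real.rpow_nonneg (by linarith [hbase1 z hz]) p
  have hbase2 : ∀ z, (1:ℝ) ≤ 1 + (1 - t) * (-(γ z)) := by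
    intro z
    have := hγ_nonneg z
    nlinarith
  have hB_eq : ∀ z, (qexpE t (-(γ z))).toReal = (1 + (1 - t) * (-(γ z))) ^ p := by
    intro z
    rw [qexpE, if_neg htne, ENNReal.ofReal_rpow_of_pos (by linarith [hbase2 z]),
      ENNReal.toReal_ofReal]
    exact Real.rpow_nonneg (by linarith [hbase2 z]) p
  -- the first term tends to 0
  have hd_top : Tendsto (fun z : ℝ => 1 + (1 - t) * z) atBot atTop := by
    apply tendsto_atTop_add_const_left
    exact (tendsto_neg_atBot_atTop.const_mul_atTop (by linarith : (0:ℝ) < t - 1)).congr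
      (fun z => by ring)
  have hA0 : Tendsto (fun z : ℝ => (qexpE t (z - γ z)).toReal) atBot (𝓝 0) := by
    have hupper : Tendsto (fun z : ℝ => (1 + (1 - t) * z) ^ p) atBot (𝓝 0) := by
      have := (tendsto_rpow_neg_atTop (by linarith : (0:ℝ) < -p)).comp hd_top
      simpa [Function.comp_def] using this
    apply squeeze_zero' (g := fun z : ℝ => (1 + (1 - t) * z) ^ p) _ _ hupper
    · filter_upwards [eventually_le_atBot (0:ℝ)] with z hz
      exact ENNReal.toReal_nonneg
    · filter_upwards [eventually_le_atBot (0:ℝ), hd_top.eventually_gt_atTop 0]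
        with z hz hdz
      rw [hA_eq z hz]
      apply Real.rpow_le_rpow_of_nonpos hdz _ hp_neg.le
      have := hγ_nonneg z
      nlinarith
  -- the second term tends to 1
  have hAfin : ∀ z, qexpE t (z - γ z) ≠ ⊤ := fun z =>
    (lt_of_le_of_lt (le_of_le_of_eq (le_add_right le_rfl) (hγ z))
      ENNReal.one_lt_top).ne
  have hBfin : ∀ z, qexpE t (-(γ z)) ≠ ⊤ := fun z =>
    (lt_of_le_of_lt (le_of_le_of_eq (le_add_left le_rfl) (hγ z))
      ENNReal.one_lt_top).ne
  have hsum : ∀ z, (qexpE t (z - γ z)).toReal + (qexpE t (-(γ z))).toReal = 1 := by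
    intro z
    rw [← ENNReal.toReal_add (hAfin z) (hBfin z), hγ z, ENNReal.toReal_one]
  have hB1 : Tendsto (fun z : ℝ => (qexpE t (-(γ z))).toReal) atBot (𝓝 1) := by
    have : Tendsto (fun z : ℝ => 1 - (qexpE t (z - γ z)).toReal) atBot (𝓝 1) := by
      simpa using tendsto_const_nhds.sub hA0
    exact this.congr fun z => by linarith [hsum z]
  -- base2 tends to 1
  have hb2 : Tendsto (fun z : ℝ => 1 + (1 - t) * (-(γ z))) atBot (𝓝 1) := by
    have hcont : ContinuousAt (fun x : ℝ => x ^ (1/p)) 1 :=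
      Real.continuousAt_rpow_const 1 (1/p) (Or.inl one_ne_zero)
    have := (hcont.tendsto.comp (hB1.congr fun z => hB_eq z))
    simp only [Real.one_rpow] at this
    apply this.congr
    intro z
    simp only [Function.comp]
    rw [← Real.rpow_mul (by linarith [hbase2 z]), mul_one_div,
      div_self hp_neg.ne, Real.rpow_one]
  -- γ tends to 0
  have hγ0 : Tendsto γ atBot (𝓝 0) := by
    have : Tendsto (fun z : ℝ => ((1 + (1 - t) * (-(γ z))) - 1) * (t - 1)⁻¹)
        atBot (𝓝 0) := by
      simpa using (hb2.sub_const 1).mul_const (t - 1)⁻¹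
    apply this.congr
    intro z
    field_simp
    ring
  refine ⟨?_, hγ0⟩
  -- main limit
  have hratio : Tendsto (fun z : ℝ => 1 + (1 + (1 - t) * (-(γ z))) / ((1 - t) * z))
      atBot (𝓝 1) := by
    have hden : Tendsto (fun z : ℝ => (1 - t) * z) atBot atTop := by
      exact (tendsto_neg_atBot_atTop.const_mul_atTop
        (by linarith : (0:ℝ) < t - 1)).congr (fun z => by ring)
    have := hb2.div_atTop hden
    simpa using tendsto_const_nhds.add this
  have hcont : ContinuousAt (fun x : ℝ => x ^ p) 1 :=
    Real.continuousAt_rpow_const 1 p (Or.inl one_ne_zero)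
  have hmain := hcont.tendsto.comp hratio
  simp only [Real.one_rpow] at hmain
  apply hmain.congr'
  filter_upwards [eventually_lt_atBot (0:ℝ)] with z hz
  have hdz : 0 < (1 - t) * z := by nlinarith
  have hb1 := hbase1 z hz.le
  simp only [Function.comp]
  rw [hA_eq z hz.le, ← Real.div_rpow (by linarith) hdz.le]
  congr 1
  field_simp [hz.ne]
  ring
end

section
/- Let 0 < t < 1 and set z_* = −1/(1−t). Then the t-logistic distribution function satisfies G_t(z) = [(1−t)(z−z_*)]^{1/(1−t)} + o((z−z_*)^{1/(1−t)}) as z → z_* from above; equivalently, lim_{z→z_*+} G_t(z) / ((1−t)(z−z_*))^{1/(1−t)} = 1. Moreover, γ_t(z) = O((z−z_*)^{1/(1−t)}) = o(z−z_*) as z → z_* from above. -/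
open ENNReal Filter Topology Asymptotics

lemma tlog_aux (t : ℝ) (ht0 : 0 < t) (ht1 : t < 1) (γ : ℝ → ℝ)
    (hγ : ∀ z : ℝ, qexpE t (z - γ z) + qexpE t (-(γ z)) = 1)
    (z : ℝ) (hz1 : -1/(1-t) < z) (hz2 : 1 + (1-t)*z < 1) :
    0 < (1-t) * γ z ∧ (1-t) * γ z < 1 + (1-t)*z ∧
      (1-t) * γ z ≤ (1 + (1-t)*z) ^ (1/(1-t)) := by
  have h1t : 0 < 1 - t := by linarith
  set p : ℝ := 1/(1-t) with hp
  have hp0 : 0 < p := by positivity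
  have hp1 : 1 < p := by
    rw [hp, lt_div_iff₀ h1t]; linarith
  set a : ℝ := 1 + (1-t)*z with ha
  have ha0 : 0 < a := by
    rw [ha]
    have : -1 < (1-t)*z := by
      rw [div_lt_iff₀ h1t] at hz1
      linarith [hz1]
    linarith
  set g : ℝ := (1-t) * γ z with hg
  have hu : 1 + (1-t)*(z - γ z) = a - g := by ring
  have hv : 1 + (1-t)*(-(γ z)) = 1 - g := by ring
  -- real form of the constraint
  have key : max (a - g) 0 ^ p + max (1 - g) 0 ^ p = 1 := by
    have h := hγ z
    rw [qexpE, qexpE, if_neg ht1.ne, if_neg ht1.ne, hu, hv] at h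
    have e1 : ENNReal.ofReal (a - g) ^ p = ENNReal.ofReal (max (a-g) 0 ^ p) := by
      rw [← ENNReal.ofReal_rpow_of_nonneg (le_max_right _ _) hp0.le]
      congr 1
      rcases le_total (a - g) 0 with h' | h'
      · simp [ENNReal.ofReal_of_nonpos h', max_eq_right h']
      · rw [max_eq_left h']
    have e2 : ENNReal.ofReal (1 - g) ^ p = ENNReal.ofReal (max (1-g) 0 ^ p) := by
      rw [← ENNReal.ofReal_rpow_of_nonneg (le_max_right _ _) hp0.le]
      congr 1
      rcases le_total (1 - g) 0 with h' | h'
      · simp [ENNReal.ofReal_of_nonpos h', max_eq_right h']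
      · rw [max_eq_left h']
    rw [e1, e2, ← ENNReal.ofReal_add (by positivity) (by positivity)] at h
    have := ENNReal.ofReal_eq_one.mp h
    linarith [this]
  -- step 1 : a - g > 0
  have hU0 : (0:ℝ) ≤ max (a-g) 0 := le_max_right _ _
  have hV0 : (0:ℝ) ≤ max (1-g) 0 := le_max_right _ _
  have hug : 0 < a - g := by
    by_contra hle
    push_neg at hle
    have hU : max (a-g) 0 = 0 := max_eq_right hle
    rw [hU, Real.zero_rpow hp0.ne', zero_add] at key
    have hV1 : max (1-g) 0 = 1 := by
      rcases lt_trichotomy (max (1-g) 0) 1 with h' | h' | h'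
      · have := Real.rpow_lt_one hV0 h' hp0
        simp [key] at this
      · exact h'
      · have := (Real.one_lt_rpow_iff_of_pos (lt_of_le_of_lt zero_le_one h') (y := p)).mpr
          (Or.inl ⟨h', hp0⟩)
        simp [key] at this
    have : g = 0 := by
      have h1g : 1 - g ≤ max (1-g) 0 := le_max_left _ _
      rcases le_total (1-g) 0 with h' | h'
      · rw [max_eq_right h'] at hV1; linarith
      · rw [max_eq_left h'] at hV1; linarith
    simp [this] at hle
    linarith
  have hUu : max (a-g) 0 = a - g := max_eq_left hug.le
  have hupos : (0:ℝ) < (a-g) ^ p := Real.rpow_pos_of_pos hug p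
  have hVlt : max (1-g) 0 < 1 := by
    by_contra h'
    push_neg at h'
    have := Real.one_le_rpow h' hp0.le
    rw [hUu] at key
    linarith
  have hg1 : 0 < g := by
    have : 1 - g ≤ max (1-g) 0 := le_max_left _ _
    linarith
  -- step: 1 - g > 0
  have hv0 : 0 < 1 - g := by
    by_contra h'
    push_neg at h'
    have hV : max (1-g) 0 = 0 := max_eq_right h'
    rw [hUu, hV, Real.zero_rpow hp0.ne', add_zero] at key
    have : a - g = 1 := by
      rcases lt_trichotomy (a-g) 1 with h2 | h2 | h2
      · have := Real.rpow_lt_one hug.le h2 hp0; linarith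
      · exact h2
      · have := (Real.one_lt_rpow_iff_of_pos hug (y := p)).mpr (Or.inl ⟨h2, hp0⟩); linarith
    nlinarith
  have hVv : max (1-g) 0 = 1 - g := max_eq_left hv0.le
  rw [hUu, hVv] at key
  -- g ≤ (a-g)^p ≤ a^p
  have h5 : (1-g) ^ p ≤ 1 - g := by
    calc (1-g)^p ≤ (1-g)^(1:ℝ) :=
          Real.rpow_le_rpow_of_exponent_ge hv0 (by linarith) hp1.le
      _ = 1 - g := Real.rpow_one _
  have h6 : g ≤ (a-g)^p := by linarith
  have h7 : (a-g)^p ≤ a^p := Real.rpow_le_rpow hug.le (by linarith) hp0.le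
  exact ⟨hg1, by linarith, by linarith⟩

/-- let `0 < t < 1` and `z_* = -1/(1-t)`.  The `t`-logistic
distribution function `G_t(z) = exp_t(z - γ_t(z))` satisfies
`G_t(z) = [(1-t)(z-z_*)]^{1/(1-t)} + o((z-z_*)^{1/(1-t)})` as `z → z_*+`;
equivalently `lim_{z→z_*+} G_t(z) / ((1-t)(z-z_*))^{1/(1-t)} = 1`.
Moreover `γ_t(z) = O((z-z_*)^{1/(1-t)}) = o(z-z_*)` as `z → z_*+`. -/
theorem t_logistic_boundary_t_in_zero_one (t : ℝ) (ht0 : 0 < t) (ht1 : t < 1)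
    (γ : ℝ → ℝ)
    (hγ : ∀ z : ℝ, qexpE t (z - γ z) + qexpE t (-(γ z)) = 1) :
    Tendsto
        (fun z : ℝ => (qexpE t (z - γ z)).toReal /
          ((1 - t) * (z - (-1 / (1 - t)))) ^ (1 / (1 - t)))
        (𝓝[>] (-1 / (1 - t))) (𝓝 1) ∧
      γ =O[𝓝[>] (-1 / (1 - t))] (fun z : ℝ => (z - (-1 / (1 - t))) ^ (1 / (1 - t))) ∧
      γ =o[𝓝[>] (-1 / (1 - t))] (fun z : ℝ => z - (-1 / (1 - t))) := by
  have h1t : 0 < 1 - t := by linarith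
  set p : ℝ := 1/(1-t) with hp
  have hp0 : 0 < p := by positivity
  have hp1 : 1 < p := by rw [hp, lt_div_iff₀ h1t]; linarith
  set zs : ℝ := -1/(1-t) with hzs
  set l : Filter ℝ := 𝓝[>] zs with hl
  set a : ℝ → ℝ := fun z => 1 + (1-t)*z with ha
  set g : ℝ → ℝ := fun z => (1-t) * γ z with hg
  have haz : ∀ z : ℝ, (1-t) * (z - zs) = a z := by
    intro z; rw [ha, hzs]; field_simp; ring
  have hmem : ∀ᶠ z in l, zs < z := self_mem_nhdsWithin
  have ha0 : ∀ᶠ z in l, 0 < a z := by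
    filter_upwards [hmem] with z hz
    rw [ha]
    have : -1 < (1-t)*z := by
      rw [hzs, div_lt_iff₀ h1t] at hz; linarith
    simpa using by linarith
  have ha_tendsto : Tendsto a l (𝓝 0) := by
    have h1 : Tendsto a (𝓝 zs) (𝓝 (a zs)) := by
      apply Continuous.tendsto; rw [ha]; continuity
    have hzs0 : a zs = 0 := by rw [ha, hzs]; field_simp; norm_num
    rw [hzs0] at h1
    exact h1.mono_left nhdsWithin_le_nhds
  have ha1 : ∀ᶠ z in l, a z < 1 := ha_tendsto.eventually_lt_const zero_lt_one
  have haux : ∀ᶠ z in l, 0 < g z ∧ g z < a z ∧ g z ≤ a z ^ p := by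
    filter_upwards [hmem, ha1] with z hz hza
    exact tlog_aux t ht0 ht1 γ hγ z hz hza
  -- a ^ (p-1) → 0
  have hpow : Tendsto (fun z => a z ^ (p-1)) l (𝓝 0) := by
    have hc : ContinuousAt (fun x : ℝ => x ^ (p-1)) 0 :=
      Real.continuousAt_rpow_const 0 (p-1) (Or.inr (by linarith))
    have := hc.tendsto.comp ha_tendsto
    rwa [Real.zero_rpow (by linarith : p - 1 ≠ 0)] at this
  -- g/a → 0
  have hga : Tendsto (fun z => g z / a z) l (𝓝 0) := by
    apply squeeze_zero' (g := fun z => a z ^ (p-1)) _ _ hpow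
    · filter_upwards [haux, ha0] with z hz hza
      exact div_nonneg hz.1.le hza.le
    · filter_upwards [haux, ha0] with z hz hza
      rw [div_le_iff₀ hza]
      calc g z ≤ a z ^ p := hz.2.2
        _ = a z ^ (p-1) * a z := by
            rw [← Real.rpow_add_one hza.ne' (p-1)]
            norm_num
  -- (a - g)/a → 1
  have hua : Tendsto (fun z => (a z - g z) / a z) l (𝓝 1) := by
    have h2 : Tendsto (fun z => 1 - g z / a z) l (𝓝 (1 - 0)) :=
      tendsto_const_nhds.sub hga
    rw [sub_zero] at h2
    apply h2.congr'
    filter_upwards [ha0] with z hza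
    rw [sub_div, div_self hza.ne']
  refine ⟨?_, ?_, ?_⟩
  · -- main limit
    have hc1 : ContinuousAt (fun x : ℝ => x ^ p) 1 :=
      Real.continuousAt_rpow_const 1 p (Or.inl one_ne_zero)
    have h3 := hc1.tendsto.comp hua
    rw [Real.one_rpow] at h3
    apply h3.congr'
    filter_upwards [haux, ha0] with z hz hza
    have hug : 0 < a z - g z := by linarith [hz.2.1]
    have hq : qexpE t (z - γ z) = ENNReal.ofReal ((a z - g z) ^ p) := by
      rw [qexpE, if_neg ht1.ne]
      have : 1 + (1 - t) * (z - γ z) = a z - g z := by rw [ha, hg]; ring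
      rw [this, ENNReal.ofReal_rpow_of_nonneg hug.le hp0.le]
    show ((a z - g z)/a z) ^ p = _
    rw [hq, ENNReal.toReal_ofReal (by positivity), haz z,
      Real.div_rpow hug.le hza.le]
  · -- BigO
    apply Asymptotics.IsBigO.of_bound ((1-t) ^ (p-1))
    filter_upwards [haux, hmem] with z hz hzm
    have hzz : 0 < z - zs := by linarith
    have h4 : g z ≤ (1-t) ^ p * (z - zs) ^ p := by
      have := hz.2.2
      rwa [← haz z, Real.mul_rpow h1t.le hzz.le] at this
    have h5 : (1-t) * γ z ≤ (1-t) * ((1-t) ^ (p-1) * (z - zs) ^ p) := by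
      have e : (1-t) * ((1-t) ^ (p-1) * (z - zs) ^ p) = (1-t) ^ p * (z - zs) ^ p := by
        rw [← mul_assoc, ← Real.rpow_one_add' h1t.le (by linarith : (1:ℝ) + (p-1) ≠ 0)]
        norm_num
      rw [e]; exact h4
    have h6 : γ z ≤ (1-t) ^ (p-1) * (z - zs) ^ p := le_of_mul_le_mul_left h5 h1t
    have h7 : 0 < γ z := by
      have h8 : 0 < (1-t) * γ z := hz.1
      nlinarith
    rw [Real.norm_eq_abs, Real.norm_eq_abs, abs_of_pos h7,
      abs_of_pos (Real.rpow_pos_of_pos hzz p)]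
    exact h6
  · -- littleO
    rw [Asymptotics.isLittleO_iff]
    intro c hc
    filter_upwards [haux, hmem, hpow.eventually_lt_const hc, ha0] with z hz hzm hple hza
    have hzz : 0 < z - zs := by linarith
    have h4 : g z ≤ a z ^ (p-1) * ((1-t) * (z - zs)) := by
      calc g z ≤ a z ^ p := hz.2.2
        _ = a z ^ (p-1) * a z := by
            rw [← Real.rpow_add_one hza.ne' (p-1)]; norm_num
        _ = a z ^ (p-1) * ((1-t) * (z - zs)) := by rw [haz z]
    have h6 : γ z ≤ a z ^ (p-1) * (z - zs) := by
      have h5 : (1-t) * γ z ≤ (1-t) * (a z ^ (p-1) * (z - zs)) := by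
        calc (1-t) * γ z = g z := by rw [hg]
          _ ≤ a z ^ (p-1) * ((1-t) * (z - zs)) := h4
          _ = (1-t) * (a z ^ (p-1) * (z - zs)) := by ring
      exact le_of_mul_le_mul_left h5 h1t
    have h7 : 0 < γ z := by
      have h8 : 0 < (1-t) * γ z := hz.1
      nlinarith
    rw [Real.norm_eq_abs, Real.norm_eq_abs, abs_of_pos h7, abs_of_pos hzz]
    calc γ z ≤ a z ^ (p-1) * (z - zs) := h6
      _ ≤ c * (z - zs) := by
          apply mul_le_mul_of_nonneg_right hple.le hzz.le
end

section
/- Let t < 0 and set z_* = −1/(1−t). Then the t-logistic distribution function satisfies G_t(z) = (z−z_*) + o(z−z_*) as z → z_* from above; equivalently, lim_{z→z_*+} G_t(z)/(z−z_*) = 1. -/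
open ENNReal Filter Topology

/-- Auxiliary function `G`. -/
noncomputable def Gfun (t : ℝ) (γ : ℝ → ℝ) (z : ℝ) : ℝ := (qexpE t (z - γ z)).toReal

/-- Auxiliary function `ψ`. -/
noncomputable def psiF (a x : ℝ) : ℝ := x ^ a - (1 - x) ^ a + 1

lemma psiF_zero {a : ℝ} (ha : 0 < a) : psiF a 0 = 0 := by
  simp [psiF, Real.zero_rpow ha.ne']

lemma psiF_hasDerivAt {a : ℝ} (ha : 1 < a) : HasDerivAt (psiF a) a 0 := by
  have h1 : HasDerivAt (fun x : ℝ => x ^ a) 0 0 := by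
    have := Real.hasDerivAt_rpow_const (x := 0) (p := a) (Or.inr ha.le)
    simpa [Real.zero_rpow (show a - 1 ≠ 0 by linarith)] using this
  have h2 : HasDerivAt (fun x : ℝ => (1 - x) ^ a) (-a) 0 := by
    have hbase : HasDerivAt (fun x : ℝ => 1 - x) (-1) 0 := by
      exact (hasDerivAt_id' (0:ℝ)).const_sub (1:ℝ)
    have hr : HasDerivAt (fun y : ℝ => y ^ a) (a * 1 ^ (a - 1)) ((fun x : ℝ => 1 - x) 0) := by
      simpa using Real.hasDerivAt_rpow_const (x := (1:ℝ)) (p := a) (Or.inl one_ne_zero)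
    have h : HasDerivAt (fun x : ℝ => (1 - x) ^ a) (a * 1 ^ (a - 1) * (-1)) 0 := hr.comp 0 hbase
    convert h using 1; simp
  have := (h1.sub h2).add_const 1
  exact this.congr_deriv (by ring)

/-- let `t < 0` and `z_* = -1/(1-t)`.  The `t`-logistic
distribution function `G_t(z) = exp_t(z - γ_t(z))` satisfies
`G_t(z) = (z - z_*) + o(z - z_*)` as `z → z_*` from above; equivalently
`lim_{z→z_*+} G_t(z)/(z - z_*) = 1`. -/
theorem t_logistic_boundary_t_neg (t : ℝ) (ht : t < 0) (γ : ℝ → ℝ)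
    (hγ : ∀ z : ℝ, qexpE t (z - γ z) + qexpE t (-(γ z)) = 1) :
    Tendsto (fun z : ℝ => (qexpE t (z - γ z)).toReal / (z - (-1 / (1 - t))))
      (𝓝[>] (-1 / (1 - t))) (𝓝 1) := by
  have ht1 : t ≠ 1 := by linarith
  set a : ℝ := 1 - t with ha_def
  have ha : 1 < a := by rw [ha_def]; linarith
  have ha0 : 0 < a := by linarith
  set p : ℝ := 1 / a with hp_def
  have hp0 : 0 < p := by positivity
  have hpa : p * a = 1 := by rw [hp_def]; field_simp
  set zs : ℝ := -1 / a with hzs_def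
  have hzs_neg : zs < 0 := by
    rw [hzs_def]
    exact div_neg_of_neg_of_pos (by norm_num) ha0
  have hazs : a * zs = -1 := by rw [hzs_def]; field_simp
  -- Key pointwise facts
  have key : ∀ z ∈ Set.Ioo zs (0:ℝ),
      0 < Gfun t γ z ∧ Gfun t γ z < 1 ∧ psiF a (Gfun t γ z) = a * (z - zs) := by
    rintro z ⟨hz1, hz2⟩
    have haz : -1 < a * z := by
      rw [hzs_def] at hz1
      have := (div_lt_iff₀ ha0).mp hz1
      linarith
    have heq := hγ z
    simp only [qexpE, if_neg ht1, ← ha_def, ← hp_def] at heq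
    set v : ℝ := 1 + a * (z - γ z) with hv_def
    set u : ℝ := 1 + a * -(γ z) with hu_def
    have hu : 0 < u := by
      by_contra hcon
      push_neg at hcon
      rw [ENNReal.ofReal_eq_zero.mpr hcon, ENNReal.zero_rpow_of_pos hp0, add_zero] at heq
      have hv1 : ENNReal.ofReal v = 1 := by
        have h2 := congrArg (fun x : ℝ≥0∞ => x ^ a) heq
        simpa [← ENNReal.rpow_mul, hpa] using h2
      have hv1' : v = 1 := ENNReal.ofReal_eq_one.mp hv1
      have hA : a * (z - γ z) = 0 := by linarith [hv_def.symm.le, hv_def.symm.ge]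
      have hzc : z = γ z := by
        rcases mul_eq_zero.mp hA with h | h
        · linarith
        · linarith
      have hu' : u = 1 - a * z := by rw [hu_def, ← hzc]; ring
      nlinarith [mul_neg_of_pos_of_neg ha0 hz2]
    have hv : 0 < v := by
      by_contra hcon
      push_neg at hcon
      rw [ENNReal.ofReal_eq_zero.mpr hcon, ENNReal.zero_rpow_of_pos hp0, zero_add] at heq
      have hu1 : u = 1 := ENNReal.ofReal_eq_one.mp (by
        have h2 := congrArg (fun x : ℝ≥0∞ => x ^ a) heq
        simpa [← ENNReal.rpow_mul, hpa] using h2)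
      have hA : a * -(γ z) = 0 := by linarith [hu_def.symm.le, hu_def.symm.ge]
      have hγ0 : γ z = 0 := by
        rcases mul_eq_zero.mp hA with h | h
        · linarith
        · linarith
      have hv' : v = 1 + a * z := by rw [hv_def, hγ0]; ring
      linarith
    rw [ENNReal.ofReal_rpow_of_pos hv, ENNReal.ofReal_rpow_of_pos hu,
      ← ENNReal.ofReal_add (by positivity) (by positivity), ← ENNReal.ofReal_one] at heq
    have hsum : v ^ p + u ^ p = 1 :=
      (ENNReal.ofReal_eq_ofReal_iff (by positivity) (by norm_num)).mp heq
    have hGval : Gfun t γ z = v ^ p := by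
      simp only [Gfun, qexpE, if_neg ht1, ← ha_def, ← hp_def, ← hv_def]
      rw [ENNReal.ofReal_rpow_of_pos hv, ENNReal.toReal_ofReal (by positivity)]
    set g : ℝ := v ^ p with hgdef
    have hg0 : 0 < g := Real.rpow_pos_of_pos hv p
    have hup : u ^ p = 1 - g := by linarith
    have hg1 : g < 1 := by
      have : 0 < u ^ p := Real.rpow_pos_of_pos hu p
      linarith
    have hga : g ^ a = v := by
      rw [hgdef, ← Real.rpow_mul hv.le, hpa, Real.rpow_one]
    have hua : (1 - g) ^ a = u := by
      rw [← hup, ← Real.rpow_mul hu.le, hpa, Real.rpow_one]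
    refine ⟨by rw [hGval]; exact hg0, by rw [hGval]; exact hg1, ?_⟩
    rw [hGval]
    show psiF a g = a * (z - zs)
    have e1 : v - u + 1 = a * z + 1 := by rw [hv_def, hu_def]; ring
    have e2 : a * (z - zs) = a * z + 1 := by rw [mul_sub, hazs]; ring
    simp only [psiF]
    rw [hga, hua, e2]
    exact e1
  -- limit machinery
  have hIoo : Set.Ioo zs (0:ℝ) ∈ 𝓝[>] zs := Ioo_mem_nhdsGT_of_mem ⟨le_refl zs, hzs_neg⟩
  have hub : ∀ z ∈ Set.Ioo zs (0:ℝ), Gfun t γ z ≤ a * (z - zs) := by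
    intro z hz
    obtain ⟨hg0, hg1, hψ⟩ := key z hz
    have h1 : (1 - Gfun t γ z) ^ a ≤ 1 - Gfun t γ z := by
      calc (1 - Gfun t γ z) ^ a ≤ (1 - Gfun t γ z) ^ (1:ℝ) :=
            Real.rpow_le_rpow_of_exponent_ge (by linarith) (by linarith) ha.le
        _ = 1 - Gfun t γ z := Real.rpow_one _
    have h2 : 0 ≤ (Gfun t γ z) ^ a := Real.rpow_nonneg hg0.le a
    simp only [psiF] at hψ
    linarith
  have htend0 : Tendsto (Gfun t γ) (𝓝[>] zs) (𝓝 0) := by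
    apply squeeze_zero' (eventually_of_mem hIoo fun z hz => (key z hz).1.le)
      (eventually_of_mem hIoo hub)
    have h : Tendsto (fun z : ℝ => a * (z - zs)) (𝓝 zs) (𝓝 (a * (zs - zs))) :=
      (continuous_const.mul (continuous_id.sub continuous_const)).tendsto zs
    simpa using h.mono_left nhdsWithin_le_nhds
  have htendne : Tendsto (Gfun t γ) (𝓝[>] zs) (𝓝[≠] 0) := by
    rw [tendsto_nhdsWithin_iff]
    exact ⟨htend0, eventually_of_mem hIoo fun z hz => (key z hz).1.ne'⟩
  have hslope : Tendsto (fun x : ℝ => psiF a x / x) (𝓝[≠] 0) (𝓝 a) := by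
    have h := hasDerivAt_iff_tendsto_slope.mp (psiF_hasDerivAt ha)
    refine h.congr fun x => ?_
    rw [slope_def_field, psiF_zero ha0, sub_zero, sub_zero]
  have hcomp : Tendsto (fun z => a / (psiF a (Gfun t γ z) / Gfun t γ z)) (𝓝[>] zs) (𝓝 1) := by
    have h := (tendsto_const_nhds : Tendsto (fun _ : ℝ => a) (𝓝[>] zs) (𝓝 a)).div (hslope.comp htendne) ha0.ne'
    have : a / a = 1 := div_self ha0.ne'
    rw [← this]
    exact h
  refine hcomp.congr' ?_
  filter_upwards [hIoo] with z hz
  obtain ⟨hg0, hg1, hψ⟩ := key z hz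
  have hzne : z - zs ≠ 0 := sub_ne_zero.mpr hz.1.ne'
  have hG : (qexpE t (z - γ z)).toReal = Gfun t γ z := rfl
  rw [hG, hψ]
  field_simp
end

section
/- For every t ∈ ℝ, the t-logistic distribution function G_t satisfies Assumption (GEV) with index q = max(t,0): there exist sequences c_m ∈ ℝ and d_m > 0 such that m·G_t(c_m + d_m z) → exp_{max(t,0)}(z) as m → ∞ for every z ∈ ℝ at which exp_{max(t,0)}(z) is finite. -/
open ENNReal Filter Topology

lemma qexpE_of_lt_one {t : ℝ} (ht : t < 1) (x : ℝ) :
    qexpE t x = ENNReal.ofReal ((max (1 + (1-t)*x) 0) ^ (1/(1-t))) := by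
  have hα : 0 < 1 - t := by linarith
  have hp : 0 < 1/(1-t) := by positivity
  rw [qexpE, if_neg ht.ne]
  rcases le_or_gt (1 + (1-t)*x) 0 with h | h
  · rw [ENNReal.ofReal_eq_zero.2 h, ENNReal.zero_rpow_of_pos hp,
      max_eq_right h, Real.zero_rpow hp.ne', ENNReal.ofReal_zero]
  · rw [ENNReal.ofReal_rpow_of_pos h, max_eq_left h.le]

lemma tlt_facts {t : ℝ} (ht : t < 1) {γ : ℝ → ℝ}
    (hγ : ∀ z, qexpE t (z - γ z) + qexpE t (-(γ z)) = 1) (w : ℝ) {u : ℝ}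
    (hu : u = (qexpE t (w - γ w)).toReal) :
    0 ≤ u ∧ u ≤ 1 ∧ u ≤ (max (1+(1-t)*w) 0)^(1/(1-t)) ∧
      (u < 1 → (1-u)^(1-t) + (1-t)*w ≤ u ^ (1-t)) ∧
      (0 < u → u < 1 → u ^ (1-t) = (1-u)^(1-t) + (1-t)*w) := by
  have hα : 0 < 1 - t := by linarith
  have hp : 0 < 1/(1-t) := by positivity
  set α := 1 - t with hαdef
  set a := (max (1+α*(w - γ w)) 0) ^ (1/α) with ha
  set b := (max (1+α*(-(γ w))) 0) ^ (1/α) with hb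
  have ha0 : 0 ≤ a := Real.rpow_nonneg (le_max_right _ _) _
  have hb0 : 0 ≤ b := Real.rpow_nonneg (le_max_right _ _) _
  have hab : a + b = 1 := by
    have := hγ w
    rw [qexpE_of_lt_one ht, qexpE_of_lt_one ht, ← ENNReal.ofReal_add ha0 hb0] at this
    have h2 : ENNReal.ofReal (a+b) = ENNReal.ofReal 1 := by simpa using this
    rwa [ENNReal.ofReal_eq_ofReal_iff (by positivity) zero_le_one] at h2
  have hua : u = a := by
    rw [hu, qexpE_of_lt_one ht, ENNReal.toReal_ofReal ha0]
  have hγ0 : 0 ≤ γ w := by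
    by_contra h
    push_neg at h
    have h1 : 1 < 1 + α*(-(γ w)) := by nlinarith
    have : 1 < b := by
      rw [hb, max_eq_left (by linarith)]
      exact Real.one_lt_rpow_iff_of_pos (by linarith) |>.2 (Or.inl ⟨h1, hp⟩)
    linarith
  have hu1 : u ≤ 1 := by rw [hua]; linarith
  have hupper : u ≤ (max (1+α*w) 0)^(1/α) := by
    rw [hua, ha]
    apply Real.rpow_le_rpow (le_max_right _ _) _ hp.le
    apply max_le_max_right
    nlinarith
  -- under u < 1, b-base is positive and (1-u)^α = 1 - α * γ w
  have hbeq : u < 1 → (1-u)^α = 1 + α*(-(γ w)) := by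
    intro hlt
    have hbpos : 0 < b := by rw [hua] at hlt; linarith
    have hbase : 0 < 1 + α*(-(γ w)) := by
      by_contra h
      push_neg at h
      rw [hb, max_eq_right h, Real.zero_rpow hp.ne'] at hbpos
      exact lt_irrefl _ hbpos
    have hbu : b = 1 - u := by rw [hua]; linarith
    have : b ^ α = 1 + α*(-(γ w)) := by
      rw [hb, max_eq_left hbase.le, one_div, Real.rpow_inv_rpow hbase.le hα.ne']
    rw [← hbu, this]
  -- when a-base positive, u^α = 1 + α (w - γ w)
  have haeq : 0 < u → u ^ α = 1 + α*(w - γ w) := by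
    intro hpos
    have hbase : 0 < 1 + α*(w - γ w) := by
      by_contra h
      push_neg at h
      rw [hua, ha, max_eq_right h, Real.zero_rpow hp.ne'] at hpos
      exact lt_irrefl _ hpos
    rw [hua, ha, max_eq_left hbase.le, one_div, Real.rpow_inv_rpow hbase.le hα.ne']
  refine ⟨hua ▸ ha0, hu1, hupper, ?_, ?_⟩
  · intro hlt
    have h1 := hbeq hlt
    rcases eq_or_lt_of_le (hua ▸ ha0 : (0:ℝ) ≤ u) with h0 | hpos
    · -- u = 0 : base of a nonpositive
      have hbase : 1 + α*(w - γ w) ≤ 0 := by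
        by_contra h
        push_neg at h
        have : 0 < a := by
          rw [ha, max_eq_left h.le]
          exact Real.rpow_pos_of_pos h _
        rw [← hua, ← h0] at this
        exact lt_irrefl _ this
      subst h0
      rw [Real.zero_rpow hα.ne', sub_zero, Real.one_rpow] at *
      linarith
    · linarith [haeq hpos, hbeq hlt]
  · intro hpos hlt
    rw [haeq hpos, hbeq hlt]; ring

lemma tgt_facts {t : ℝ} (ht : 1 < t) {γ : ℝ → ℝ}
    (hγ : ∀ z, qexpE t (z - γ z) + qexpE t (-(γ z)) = 1) (w : ℝ) {u : ℝ}
    (hu : u = (qexpE t (w - γ w)).toReal) :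
    0 < u ∧ u < 1 ∧ u ^ (1-t) = (1-u)^(1-t) + (1-t)*w := by
  have hα : 1 - t < 0 := by linarith
  have hp : 1/(1-t) < 0 := div_neg_of_pos_of_neg one_pos hα
  set α := 1 - t with hαdef
  have key : ∀ x : ℝ, qexpE t x ≤ 1 →
      0 < 1 + α * x ∧ qexpE t x = ENNReal.ofReal ((1+α*x) ^ (1/α)) := by
    intro x hle
    have hbase : 0 < 1 + α * x := by
      by_contra h
      push_neg at h
      rw [qexpE, if_neg (by linarith : t ≠ 1), ENNReal.ofReal_eq_zero.2 h,
        ENNReal.zero_rpow_of_neg hp] at hle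
      simp at hle
    exact ⟨hbase, by rw [qexpE, if_neg (by linarith : t ≠ 1), ENNReal.ofReal_rpow_of_pos hbase]⟩
  have h1 := hγ w
  have hA1 : qexpE t (w - γ w) ≤ 1 := by
    rw [← h1]; exact le_self_add
  have hB1 : qexpE t (-(γ w)) ≤ 1 := by
    rw [← h1]; exact le_add_self
  obtain ⟨hbA, heA⟩ := key _ hA1
  obtain ⟨hbB, heB⟩ := key _ hB1
  set a := (1 + α*(w - γ w)) ^ (1/α) with ha
  set b := (1 + α*(-(γ w))) ^ (1/α) with hb
  have ha0 : 0 < a := Real.rpow_pos_of_pos hbA _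
  have hb0 : 0 < b := Real.rpow_pos_of_pos hbB _
  have hab : a + b = 1 := by
    rw [heA, heB, ← ENNReal.ofReal_add ha0.le hb0.le] at h1
    have h2 : ENNReal.ofReal (a+b) = ENNReal.ofReal 1 := by simpa using h1
    rwa [ENNReal.ofReal_eq_ofReal_iff (by positivity) zero_le_one] at h2
  have hua : u = a := by rw [hu, heA, ENNReal.toReal_ofReal ha0.le]
  have haα : a ^ α = 1 + α*(w - γ w) := by
    rw [ha, one_div, Real.rpow_inv_rpow hbA.le hα.ne]
  have hbα : b ^ α = 1 + α*(-(γ w)) := by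
    rw [hb, one_div, Real.rpow_inv_rpow hbB.le hα.ne]
  have hbu : b = 1 - u := by rw [hua]; linarith
  refine ⟨hua ▸ ha0, by rw [hua]; linarith, ?_⟩
  have hbu' : (1-u)^α = 1 + α*(-(γ w)) := by rw [← hbu, hbα]
  rw [hua] at hbu' ⊢
  rw [haα, hbu']; ring

lemma t1_facts {γ : ℝ → ℝ}
    (hγ : ∀ z, qexpE 1 (z - γ z) + qexpE 1 (-(γ z)) = 1) (w : ℝ) :
    (qexpE 1 (w - γ w)).toReal = Real.exp w / (1 + Real.exp w) := by
  have h1 := hγ w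
  rw [qexpE, if_pos rfl, qexpE, if_pos rfl,
    ← ENNReal.ofReal_add (Real.exp_nonneg _) (Real.exp_nonneg _)] at h1
  have h2 : Real.exp (w - γ w) + Real.exp (-(γ w)) = 1 := by
    have := congrArg ENNReal.toReal h1
    rwa [ENNReal.toReal_ofReal (by positivity), ENNReal.toReal_one] at this
  rw [qexpE, if_pos rfl, ENNReal.toReal_ofReal (Real.exp_nonneg _)]
  have h3 : Real.exp (w - γ w) = Real.exp w * Real.exp (-(γ w)) := by
    rw [← Real.exp_add]; ring_nf
  have hpos : 0 < 1 + Real.exp w := by positivity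
  rw [h3] at h2 ⊢
  have h4 : Real.exp (-(γ w)) = 1 / (1 + Real.exp w) := by
    field_simp
    nlinarith [h2]
  rw [h4]; field_simp

-- (1-u)^α ≥ 1 - max α 1 * u  for α > 0, u ∈ [0,1]

lemma H2 {α u : ℝ} (hα : 0 < α) (h0 : 0 ≤ u) (h1 : u ≤ 1) :
    1 - max α 1 * u ≤ (1-u)^α := by
  rcases le_or_gt 1 α with h | h
  · rw [max_eq_left h]
    have := one_add_mul_self_le_rpow_one_add (by linarith : (-1:ℝ) ≤ -u) h
    simpa [sub_eq_add_neg] using this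
  · rw [max_eq_right h.le]
    rcases eq_or_lt_of_le h1 with rfl | hlt
    · simp [Real.zero_rpow hα.ne']
    · calc 1 - 1 * u = (1-u) ^ (1:ℝ) := by rw [Real.rpow_one]; ring
        _ ≤ (1-u)^α := Real.rpow_le_rpow_of_exponent_ge (by linarith) (by linarith) h.le

-- (1-u)^β ≤ 1 + 2K u for β < 0, K = max (-β) 1, 0 ≤ u ≤ 1/(2K)

lemma H1 {β u : ℝ} (hβ : β < 0) (h0 : 0 ≤ u) (h1 : u ≤ 1/(2 * max (-β) 1)) :
    (1-u)^β ≤ 1 + 2 * max (-β) 1 * u := by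
  set K := max (-β) 1 with hK
  have hK1 : 1 ≤ K := le_max_right _ _
  have hKpos : (0:ℝ) < K := by linarith
  have hKu : K * u ≤ 1/2 := by
    rw [div_mul_eq_div_div, le_div_iff₀ hKpos] at h1
    linarith [h1, mul_comm u K]
  have hu2 : u ≤ 1/2 := by nlinarith
  have hlow : 1 - K * u ≤ (1-u)^(-β) := by
    have := H2 (by linarith : 0 < -β) h0 (by linarith)
    exact this
  have hpos : (0:ℝ) < 1 - K * u := by linarith
  have hpow : (0:ℝ) < (1-u)^(-β) := Real.rpow_pos_of_pos (by linarith) _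
  have : (1-u)^β = ((1-u)^(-β))⁻¹ := by
    rw [← Real.rpow_neg (by linarith : (0:ℝ) ≤ 1-u) (-β), neg_neg]
  rw [this]
  have h5 : ((1-u)^(-β))⁻¹ ≤ (1 - K*u)⁻¹ := by
    apply inv_anti₀ hpos hlow
  apply h5.trans
  rw [inv_eq_one_div, div_le_iff₀ hpos]
  nlinarith [mul_nonneg (mul_nonneg hKpos.le h0) (by linarith : (0:ℝ) ≤ 1 - 2*(K*u))]
-- (1-u)^α ≤ 1 - αu + (αu)^2 for α ≥ 1, u ∈ [0,1]

lemma H3 {α u : ℝ} (hα : 1 ≤ α) (h0 : 0 ≤ u) (h1 : u ≤ 1) :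
    (1-u)^α ≤ 1 - α*u + (α*u)^2 := by
  rcases eq_or_lt_of_le h1 with rfl | hlt
  · rw [sub_self, Real.zero_rpow (by linarith : α ≠ 0)]
    nlinarith
  · have hpos : (0:ℝ) < 1 - u := by linarith
    have hlog : Real.log (1-u) ≤ -u := by
      have := Real.log_le_sub_one_of_pos hpos
      linarith
    have e1 : (1-u)^α = Real.exp (α * Real.log (1-u)) := by
      rw [Real.rpow_def_of_pos hpos, mul_comm]
    have e2 : Real.exp (α * Real.log (1-u)) ≤ Real.exp (-(α * u)) :=
      Real.exp_le_exp.2 (by nlinarith)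
    have hau : (0:ℝ) < 1 + α*u := by nlinarith
    have e3 : Real.exp (-(α*u)) ≤ 1/(1+α*u) := by
      rw [Real.exp_neg, inv_eq_one_div]
      exact one_div_le_one_div_of_le hau (by linarith [Real.add_one_le_exp (α*u)])
    have e4 : 1/(1+α*u) ≤ 1 - α*u + (α*u)^2 := by
      rw [div_le_iff₀ hau]
      nlinarith [pow_nonneg (mul_nonneg (by linarith : (0:ℝ) ≤ α) h0) 3, mul_nonneg (by linarith : (0:ℝ) ≤ α) h0]
    calc (1-u)^α = Real.exp (α * Real.log (1-u)) := e1
      _ ≤ Real.exp (-(α*u)) := e2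
      _ ≤ 1/(1+α*u) := e3
      _ ≤ 1 - α*u + (α*u)^2 := e4

lemma tendsto_nat_inv : Tendsto (fun m : ℕ => ((m:ℝ))⁻¹) atTop (𝓝 0) :=
  tendsto_inv_atTop_zero.comp tendsto_natCast_atTop_atTop

lemma case_t1 (γ : ℝ → ℝ)
    (hγ : ∀ z : ℝ, qexpE 1 (z - γ z) + qexpE 1 (-(γ z)) = 1) :
    ∃ (c : ℕ → ℝ) (d : ℕ → ℝ), (∀ m, 0 < d m) ∧
      ∀ z : ℝ, (max (1:ℝ) 0 ≤ 1 ∨ 0 < 1 + (1 - max (1:ℝ) 0) * z) →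
        Tendsto
          (fun m : ℕ =>
            (m : ℝ) * (qexpE 1 (c m + d m * z - γ (c m + d m * z))).toReal)
          atTop (𝓝 (qexp (max 1 0) z)) := by
  refine ⟨fun m => -Real.log m, fun _ => 1, fun _ => one_pos, ?_⟩
  intro z _
  have hq : qexp (max 1 0) z = Real.exp z := by
    rw [max_eq_left zero_le_one, qexp, if_pos rfl]
  rw [hq]
  have hlim : Tendsto (fun m : ℕ => Real.exp z / (1 + Real.exp z * ((m:ℝ))⁻¹))
      atTop (𝓝 (Real.exp z)) := by
    have h2 : Tendsto (fun m : ℕ => 1 + Real.exp z * ((m:ℝ))⁻¹) atTop (𝓝 1) := by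
      have := (tendsto_nat_inv.const_mul (Real.exp z)).const_add 1
      simpa using this
    have := (tendsto_const_nhds : Tendsto (fun _ : ℕ => Real.exp z) atTop (𝓝 (Real.exp z))).div h2 one_ne_zero
    rw [div_one] at this; exact this
  apply hlim.congr'
  filter_upwards [eventually_ge_atTop 1] with m hm
  have hm0 : (0:ℝ) < m := by exact_mod_cast hm
  rw [t1_facts hγ]
  have hw : Real.exp (-Real.log m + 1 * z) = Real.exp z * ((m:ℝ))⁻¹ := by
    rw [Real.exp_add, Real.exp_neg, Real.exp_log hm0, one_mul]
    ring
  rw [hw]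
  have hd : 0 < 1 + Real.exp z * ((m:ℝ))⁻¹ := by positivity
  field_simp

lemma case_t0 (γ : ℝ → ℝ)
    (hγ : ∀ z : ℝ, qexpE 0 (z - γ z) + qexpE 0 (-(γ z)) = 1) :
    ∃ (c : ℕ → ℝ) (d : ℕ → ℝ), (∀ m, 0 < d m) ∧
      ∀ z : ℝ, (max (0:ℝ) 0 ≤ 1 ∨ 0 < 1 + (1 - max (0:ℝ) 0) * z) →
        Tendsto
          (fun m : ℕ =>
            (m : ℝ) * (qexpE 0 (c m + d m * z - γ (c m + d m * z))).toReal)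
          atTop (𝓝 (qexp (max 0 0) z)) := by
  have hq : ∀ z : ℝ, qexp (max 0 0) z = max (1+z) 0 := by
    intro z
    rw [max_self, qexp, if_neg one_ne_zero.symm]
    norm_num [Real.rpow_one]
  refine ⟨fun m => if m = 0 then 0 else -1 + 2/m, fun m => if m = 0 then 1 else 2/m,
    fun m => ?_, ?_⟩
  · by_cases h : m = 0
    · simp [h]
    · have : (0:ℝ) < m := by exact_mod_cast Nat.pos_of_ne_zero h
      simp only [if_neg h]
      positivity
  intro z _
  rw [hq]
  rcases le_or_gt (1+z) 0 with hz0 | hz0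
  · rw [max_eq_right hz0]
    apply tendsto_const_nhds.congr'
    filter_upwards [eventually_ge_atTop 1] with m hm
    have hm' : m ≠ 0 := by omega
    have hmR : (0:ℝ) < m := by exact_mod_cast Nat.pos_of_ne_zero hm'
    simp only [if_neg hm']
    set w := -1 + 2/(m:ℝ) + 2/(m:ℝ) * z with hwdef
    obtain ⟨f1, f2, f3, f4, f5⟩ := tlt_facts (by norm_num : (0:ℝ) < 1) hγ w rfl
    simp only [sub_zero, one_mul, Real.rpow_one, div_one] at f3
    have hww : 1 + w = 2/(m:ℝ)*(1+z) := by rw [hwdef]; ring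
    have hle : 1 + w ≤ 0 := by
      rw [hww]
      apply mul_nonpos_of_nonneg_of_nonpos _ hz0
      positivity
    rw [max_eq_right hle] at f3
    have : (qexpE 0 (w - γ w)).toReal = 0 := le_antisymm f3 f1
    rw [this, mul_zero]
  · rw [max_eq_left (by linarith)]
    apply tendsto_const_nhds.congr'
    filter_upwards [tendsto_natCast_atTop_atTop.eventually_gt_atTop (2*(1+z)),
      eventually_ge_atTop 1] with m hm1 hm
    have hm' : m ≠ 0 := by omega
    have hmR : (0:ℝ) < m := by exact_mod_cast Nat.pos_of_ne_zero hm'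
    simp only [if_neg hm']
    set w := -1 + 2/(m:ℝ) + 2/(m:ℝ) * z with hwdef
    obtain ⟨f1, f2, f3, f4, f5⟩ := tlt_facts (by norm_num : (0:ℝ) < 1) hγ w rfl
    simp only [sub_zero, one_mul, Real.rpow_one, div_one] at f3 f4 f5
    set u := (qexpE 0 (w - γ w)).toReal with hudef
    have hww : 1 + w = 2/(m:ℝ)*(1+z) := by rw [hwdef]; ring
    have hwpos : 0 < 1 + w := by rw [hww]; positivity
    have hwlt : 1 + w < 1 := by
      rw [hww, div_mul_eq_mul_div, div_lt_one hmR]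
      linarith
    have hu1 : u < 1 := by
      apply lt_of_le_of_lt f3
      rw [max_eq_left hwpos.le]
      linarith
    have hu0 : 0 < u := by
      rcases eq_or_lt_of_le f1 with h | h
      · exfalso; have := f4 hu1; rw [← h] at this; linarith
      · exact h
    have := f5 hu0 hu1
    have huval : u = (1+z)/(m:ℝ) := by
      have h2 : 2*u = 2/(m:ℝ)*(1+z) := by rw [← hww]; linarith
      field_simp at h2 ⊢
      linarith
    rw [huval]
    field_simp

lemma rpow_scale {α : ℝ} (hα : α ≠ 0) {m s : ℝ} (hm : 0 < m) (hs : 0 ≤ s) :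
    (m^(-α) * s)^(1/α) = m⁻¹ * s^(1/α) := by
  rw [Real.mul_rpow (Real.rpow_nonneg hm.le _) hs, ← Real.rpow_mul hm.le]
  congr 1
  rw [(by field_simp : -α * (1/α) = -1), Real.rpow_neg_one]

lemma tendsto_nat_rpow_neg {s : ℝ} (hs : s < 0) :
    Tendsto (fun m : ℕ => (m:ℝ)^s) atTop (𝓝 0) := by
  have := (tendsto_rpow_neg_atTop (by linarith : 0 < -s)).comp tendsto_natCast_atTop_atTop
  rw [neg_neg] at this; exact this



lemma lim_aux1 {b : ℝ} (c a : ℝ) (hb : b < 0) :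
    Tendsto (fun m : ℕ => c - a * (m:ℝ)^b) atTop (𝓝 c) := by
  have h1 := (tendsto_nat_rpow_neg hb).const_mul a
  have h2 := (tendsto_const_nhds : Tendsto (fun _ : ℕ => c) atTop (𝓝 c)).sub h1
  simpa using h2

lemma lim_aux2 (c a : ℝ) :
    Tendsto (fun m : ℕ => c + a * (m:ℝ)⁻¹) atTop (𝓝 c) := by
  have h0 : Tendsto (fun m : ℕ => ((m:ℝ))⁻¹) atTop (𝓝 0) :=
    tendsto_inv_atTop_zero.comp tendsto_natCast_atTop_atTop
  have h1 := h0.const_mul a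
  have h2 := (tendsto_const_nhds : Tendsto (fun _ : ℕ => c) atTop (𝓝 c)).add h1
  simpa using h2

lemma neg_core {α ε u : ℝ} (hα1 : 1 < α) (hεpos : 0 < ε) (h0 : 0 ≤ u) (h1 : u ≤ 1)
    (hu1 : u < 1) (heq : u ^ α = (1-u)^α + (ε - 1)) :
    u ≤ ε ∧ ε - ε^α ≤ α * u ∧ α * u ≤ ε + α^2 * ε^2 := by
  have hα : (0:ℝ) < α := by linarith
  have hcrude : u ≤ ε := by
    have ha : (1 - u)^α ≤ 1 - u := by
      calc (1-u)^α ≤ (1-u)^(1:ℝ) :=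
            Real.rpow_le_rpow_of_exponent_ge (by linarith) (by linarith) hα1.le
        _ = 1 - u := Real.rpow_one _
    have hb : (0:ℝ) ≤ u^α := Real.rpow_nonneg h0 _
    linarith
  have huα : u^α ≤ ε^α := Real.rpow_le_rpow h0 hcrude hα.le
  have hH2 : 1 - α * u ≤ (1-u)^α := by
    have := H2 hα h0 h1
    rwa [max_eq_left hα1.le] at this
  have hH3 : (1-u)^α ≤ 1 - α*u + (α*u)^2 := H3 hα1.le h0 h1
  have hb : (0:ℝ) ≤ u^α := Real.rpow_nonneg h0 _
  refine ⟨hcrude, by linarith, ?_⟩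
  have h9 : u * u ≤ ε * ε := mul_le_mul hcrude hcrude h0 hεpos.le
  nlinarith [h9, sq_nonneg (α * u)]


set_option maxHeartbeats 1000000 in
lemma case_mid (t : ℝ) (ht0 : 0 < t) (ht1 : t < 1) (γ : ℝ → ℝ)
    (hγ : ∀ z : ℝ, qexpE t (z - γ z) + qexpE t (-(γ z)) = 1) :
    ∃ (c : ℕ → ℝ) (d : ℕ → ℝ), (∀ m, 0 < d m) ∧
      ∀ z : ℝ, (max t 0 ≤ 1 ∨ 0 < 1 + (1 - max t 0) * z) →
        Tendsto
          (fun m : ℕ =>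
            (m : ℝ) * (qexpE t (c m + d m * z - γ (c m + d m * z))).toReal)
          atTop (𝓝 (qexp (max t 0) z)) := by
  have hα : 0 < 1 - t := by linarith
  set α := 1 - t with hαdef
  have hp : 0 < 1/α := by positivity
  refine ⟨fun m => if m = 0 then 0 else ((m:ℝ)^(-α) - 1)/α,
    fun m => if m = 0 then 1 else (m:ℝ)^(-α), fun m => ?_, ?_⟩
  · by_cases h : m = 0
    · simp [h]
    · have : (0:ℝ) < m := by exact_mod_cast Nat.pos_of_ne_zero h
      simp only [if_neg h]
      positivity
  intro z _
  have hq : qexp (max t 0) z = (max (1+α*z) 0)^(1/α) := by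
    rw [max_eq_left ht0.le, qexp, if_neg ht1.ne]
  rw [hq]
  set X := 1 + α*z with hX
  set w := fun m : ℕ => ((m:ℝ)^(-α) - 1)/α + (m:ℝ)^(-α) * z with hwdef
  set u := fun m : ℕ => (qexpE t (w m - γ (w m))).toReal with hudef
  -- reduce the goal function to m * u m (eventually)
  have hgu : ∀ᶠ m : ℕ in atTop, (fun m : ℕ =>
      (m : ℝ) * (qexpE t ((if m = 0 then 0 else ((m:ℝ)^(-α) - 1)/α) +
        (if m = 0 then 1 else (m:ℝ)^(-α)) * z -
        γ ((if m = 0 then 0 else ((m:ℝ)^(-α) - 1)/α) +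
          (if m = 0 then 1 else (m:ℝ)^(-α)) * z))).toReal) m = (m:ℝ) * u m := by
    filter_upwards [eventually_ge_atTop 1] with m hm
    have hm' : m ≠ 0 := by omega
    simp only [if_neg hm', hudef, hwdef]
  rw [tendsto_congr' hgu]
  clear hgu
  have hkey : ∀ m : ℕ, m ≠ 0 → 1 + α * w m = (m:ℝ)^(-α) * X := by
    intro m hm
    have hmR : (0:ℝ) < m := by exact_mod_cast Nat.pos_of_ne_zero hm
    rw [hwdef]
    field_simp
    ring
  have hfacts : ∀ m : ℕ, 0 ≤ u m ∧ u m ≤ 1 ∧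
      u m ≤ (max (1+α*(w m)) 0)^(1/α) ∧
      (u m < 1 → (1-u m)^α + α*(w m) ≤ (u m) ^ α) ∧
      (0 < u m → u m < 1 → (u m) ^ α = (1-u m)^α + α*(w m)) := by
    intro m
    exact tlt_facts ht1 hγ (w m) rfl
  rcases le_or_gt X 0 with hX0 | hX0
  · have hzero : (max X 0)^(1/α) = 0 := by
      rw [max_eq_right hX0, Real.zero_rpow hp.ne']
    rw [hzero]
    apply tendsto_const_nhds.congr'
    filter_upwards [eventually_ge_atTop 1] with m hm
    have hm' : m ≠ 0 := by omega
    have hmR : (0:ℝ) < m := by exact_mod_cast Nat.pos_of_ne_zero hm'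
    obtain ⟨f1, f2, f3, f4, f5⟩ := hfacts m
    rw [hkey m hm'] at f3
    have hb : (m:ℝ)^(-α) * X ≤ 0 :=
      mul_nonpos_of_nonneg_of_nonpos (Real.rpow_nonneg hmR.le _) hX0
    rw [max_eq_right hb, Real.zero_rpow hp.ne'] at f3
    rw [le_antisymm f3 f1, mul_zero]
  · rw [max_eq_left hX0.le]
    set Y := X^(1/α) with hY
    have hYpos : 0 < Y := Real.rpow_pos_of_pos hX0 _
    have hub : ∀ m : ℕ, m ≠ 0 → u m ≤ (m:ℝ)⁻¹ * Y := by
      intro m hm'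
      have hmR : (0:ℝ) < m := by exact_mod_cast Nat.pos_of_ne_zero hm'
      obtain ⟨f1, f2, f3, f4, f5⟩ := hfacts m
      rw [hkey m hm'] at f3
      have hb : 0 ≤ (m:ℝ)^(-α) * X :=
        mul_nonneg (Real.rpow_nonneg hmR.le _) hX0.le
      rwa [max_eq_left hb, rpow_scale hα.ne' hmR hX0.le] at f3
    have hgub : ∀ m : ℕ, m ≠ 0 → (m:ℝ) * u m ≤ Y := by
      intro m hm'
      have hmR : (0:ℝ) < m := by exact_mod_cast Nat.pos_of_ne_zero hm'
      calc (m:ℝ) * u m ≤ (m:ℝ) * ((m:ℝ)⁻¹ * Y) :=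
            mul_le_mul_of_nonneg_left (hub m hm') hmR.le
        _ = Y := by field_simp
    have hg0 : ∀ m : ℕ, 0 ≤ (m:ℝ) * u m := fun m =>
      mul_nonneg (Nat.cast_nonneg m) ENNReal.toReal_nonneg
    set K := max α 1 with hK
    have hKpos : (0:ℝ) < K := lt_of_lt_of_le one_pos (le_max_right _ _)
    have hevsmall : ∀ᶠ m : ℕ in atTop, (m:ℝ)⁻¹ * Y < 1 := by
      have h1 : Tendsto (fun m : ℕ => (m:ℝ)⁻¹ * Y) atTop (𝓝 0) := by
        have := (tendsto_inv_atTop_zero.comp tendsto_natCast_atTop_atTop).mul_const Y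
        simpa using this
      exact h1.eventually_lt_const one_pos
    have hlow : ∀ᶠ m : ℕ in atTop, X - K*Y*(m:ℝ)^(α-1) ≤ ((m:ℝ) * u m)^α := by
      filter_upwards [hevsmall, eventually_ge_atTop 1] with m hsmall hm
      have hm' : m ≠ 0 := by omega
      have hmR : (0:ℝ) < m := by exact_mod_cast Nat.pos_of_ne_zero hm'
      obtain ⟨f1, f2, f3, f4, f5⟩ := hfacts m
      have hu1 : u m < 1 := lt_of_le_of_lt (hub m hm') hsmall
      have hf4 := f4 hu1
      have hkm := hkey m hm'
      have hH2 : 1 - K * u m ≤ (1 - u m)^α := H2 hα f1 f2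
      have hua : (m:ℝ)^(-α) * X - K * ((m:ℝ)⁻¹ * Y) ≤ (u m) ^ α := by
        have h9 := mul_le_mul_of_nonneg_left (hub m hm') hKpos.le
        clear_value α X w u Y K
        linarith
      have hmα : (0:ℝ) < (m:ℝ)^α := Real.rpow_pos_of_pos hmR _
      have hA : (m:ℝ)^α * ((m:ℝ)^(-α) * X) = X := by
        rw [← mul_assoc, ← Real.rpow_add hmR]
        simp
      have hB : (m:ℝ)^α * ((m:ℝ)⁻¹ * Y) = (m:ℝ)^(α-1) * Y := by
        rw [← mul_assoc, ← Real.rpow_neg_one (m:ℝ), ← Real.rpow_add hmR]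
        ring_nf
      calc X - K*Y*(m:ℝ)^(α-1)
          = (m:ℝ)^α * ((m:ℝ)^(-α) * X - K * ((m:ℝ)⁻¹ * Y)) := by
            rw [mul_sub, hA, mul_comm K ((m:ℝ)⁻¹ * Y), ← mul_assoc, hB]
            ring
        _ ≤ (m:ℝ)^α * (u m) ^ α := mul_le_mul_of_nonneg_left hua hmα.le
        _ = ((m:ℝ) * u m)^α := (Real.mul_rpow hmR.le f1).symm
    have hup2 : ∀ᶠ m : ℕ in atTop, ((m:ℝ) * u m)^α ≤ X := by
      filter_upwards [eventually_ge_atTop 1] with m hm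
      have hm' : m ≠ 0 := by omega
      have hYα : Y^α = X := by
        rw [hY, one_div, Real.rpow_inv_rpow hX0.le hα.ne']
      calc ((m:ℝ) * u m)^α ≤ Y^α := Real.rpow_le_rpow (hg0 m) (hgub m hm') hα.le
        _ = X := hYα
    have hlowlim : Tendsto (fun m : ℕ => X - K*Y*(m:ℝ)^(α-1)) atTop (𝓝 X) := by
      have h1 := (tendsto_nat_rpow_neg (by linarith : α - 1 < 0)).const_mul (K*Y)
      have h2 := (tendsto_const_nhds : Tendsto (fun _ : ℕ => X) atTop (𝓝 X)).sub h1
      simpa using (h2 : Tendsto (fun m : ℕ => X - K*Y*(m:ℝ)^(α-1)) atTop (𝓝 (X - K*Y*0)))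
    have hsq : Tendsto (fun m : ℕ => ((m:ℝ) * u m)^α) atTop (𝓝 X) :=
      tendsto_of_tendsto_of_tendsto_of_le_of_le' hlowlim tendsto_const_nhds hlow hup2
    have hfin : Tendsto (fun m : ℕ => (((m:ℝ) * u m)^α)^(1/α)) atTop (𝓝 (X^(1/α))) :=
      hsq.rpow_const (Or.inl hX0.ne')
    apply hfin.congr
    intro m
    rw [one_div, Real.rpow_rpow_inv (hg0 m) hα.ne']

set_option maxHeartbeats 1000000 in
lemma case_gt (t : ℝ) (ht : 1 < t) (γ : ℝ → ℝ)
    (hγ : ∀ z : ℝ, qexpE t (z - γ z) + qexpE t (-(γ z)) = 1) :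
    ∃ (c : ℕ → ℝ) (d : ℕ → ℝ), (∀ m, 0 < d m) ∧
      ∀ z : ℝ, (max t 0 ≤ 1 ∨ 0 < 1 + (1 - max t 0) * z) →
        Tendsto
          (fun m : ℕ =>
            (m : ℝ) * (qexpE t (c m + d m * z - γ (c m + d m * z))).toReal)
          atTop (𝓝 (qexp (max t 0) z)) := by
  have hα : 1 - t < 0 := by linarith
  set α := 1 - t with hαdef
  have hαne : α ≠ 0 := hα.ne
  have hp : 1/α < 0 := div_neg_of_pos_of_neg one_pos hα
  have hmax : max t 0 = t := max_eq_left (by linarith)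
  refine ⟨fun m => if m = 0 then 0 else ((m:ℝ)^(-α) - 1)/α,
    fun m => if m = 0 then 1 else (m:ℝ)^(-α), fun m => ?_, ?_⟩
  · by_cases h : m = 0
    · simp [h]
    · have : (0:ℝ) < m := by exact_mod_cast Nat.pos_of_ne_zero h
      simp only [if_neg h]
      positivity
  intro z hz
  rw [hmax] at hz
  have hX0 : 0 < 1 + α*z := by
    rcases hz with h | h
    · linarith
    · exact h
  set X := 1 + α*z with hX
  have hq : qexp (max t 0) z = X^(1/α) := by
    rw [hmax, qexp, if_neg (by linarith : t ≠ 1), max_eq_left hX0.le]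
  rw [hq]
  set Y := X^(1/α) with hY
  have hYpos : 0 < Y := Real.rpow_pos_of_pos hX0 _
  set w := fun m : ℕ => ((m:ℝ)^(-α) - 1)/α + (m:ℝ)^(-α) * z with hwdef
  set u := fun m : ℕ => (qexpE t (w m - γ (w m))).toReal with hudef
  have hgu : ∀ᶠ m : ℕ in atTop, (fun m : ℕ =>
      (m : ℝ) * (qexpE t ((if m = 0 then 0 else ((m:ℝ)^(-α) - 1)/α) +
        (if m = 0 then 1 else (m:ℝ)^(-α)) * z -
        γ ((if m = 0 then 0 else ((m:ℝ)^(-α) - 1)/α) +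
          (if m = 0 then 1 else (m:ℝ)^(-α)) * z))).toReal) m = (m:ℝ) * u m := by
    filter_upwards [eventually_ge_atTop 1] with m hm
    have hm' : m ≠ 0 := by omega
    simp only [if_neg hm', hudef, hwdef]
  rw [tendsto_congr' hgu]
  clear hgu
  have hkey : ∀ m : ℕ, m ≠ 0 → 1 + α * w m = (m:ℝ)^(-α) * X := by
    intro m hm
    have hmR : (0:ℝ) < m := by exact_mod_cast Nat.pos_of_ne_zero hm
    rw [hwdef]
    field_simp
    ring
  have hfacts : ∀ m : ℕ, 0 < u m ∧ u m < 1 ∧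
      (u m) ^ α = (1-u m)^α + α*(w m) :=
    fun m => tgt_facts ht hγ (w m) rfl
  -- upper bound
  have hub : ∀ m : ℕ, m ≠ 0 → u m ≤ (m:ℝ)⁻¹ * Y := by
    intro m hm'
    have hmR : (0:ℝ) < m := by exact_mod_cast Nat.pos_of_ne_zero hm'
    obtain ⟨f1, f2, f3⟩ := hfacts m
    have h1le : (1:ℝ) ≤ (1 - u m)^α :=
      Real.one_le_rpow_of_pos_of_le_one_of_nonpos (by linarith) (by linarith) hα.le
    have hXm : 0 < (m:ℝ)^(-α) * X :=
      mul_pos (Real.rpow_pos_of_pos hmR _) hX0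
    have huα : (m:ℝ)^(-α) * X ≤ (u m) ^ α := by
      have := hkey m hm'
      nlinarith
    have := Real.rpow_le_rpow_of_nonpos hXm huα (le_of_lt hp)
    rwa [one_div, Real.rpow_rpow_inv f1.le hαne, ← one_div,
      rpow_scale hαne hmR hX0.le] at this
  have hgub : ∀ m : ℕ, m ≠ 0 → (m:ℝ) * u m ≤ Y := by
    intro m hm'
    have hmR : (0:ℝ) < m := by exact_mod_cast Nat.pos_of_ne_zero hm'
    calc (m:ℝ) * u m ≤ (m:ℝ) * ((m:ℝ)⁻¹ * Y) :=
          mul_le_mul_of_nonneg_left (hub m hm') hmR.le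
      _ = Y := by field_simp
  set K := max (-α) 1 with hK
  have hKpos : (0:ℝ) < K := lt_of_lt_of_le one_pos (le_max_right _ _)
  have hevsmall : ∀ᶠ m : ℕ in atTop, (m:ℝ)⁻¹ * Y < 1/(2*K) := by
    have h1 : Tendsto (fun m : ℕ => (m:ℝ)⁻¹ * Y) atTop (𝓝 0) := by
      have := (tendsto_inv_atTop_zero.comp tendsto_natCast_atTop_atTop).mul_const Y
      simpa using this
    exact h1.eventually_lt_const (by positivity)
  have hlow : ∀ᶠ m : ℕ in atTop,
      (X + 2*K*Y*(m:ℝ)^(α-1))^(1/α) ≤ (m:ℝ) * u m := by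
    filter_upwards [hevsmall, eventually_ge_atTop 1] with m hsmall hm
    have hm' : m ≠ 0 := by omega
    have hmR : (0:ℝ) < m := by exact_mod_cast Nat.pos_of_ne_zero hm'
    obtain ⟨f1, f2, f3⟩ := hfacts m
    have husmall : u m ≤ 1/(2*K) := le_of_lt (lt_of_le_of_lt (hub m hm') hsmall)
    have hH1 : (1 - u m)^α ≤ 1 + 2*K*(u m) := H1 hα f1.le husmall
    have hkm := hkey m hm'
    have hmα1 : (0:ℝ) ≤ (m:ℝ)^(α-1) := Real.rpow_nonneg hmR.le _
    have hBpos : 0 < X + 2*K*Y*(m:ℝ)^(α-1) := by positivity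
    have hfac : (m:ℝ)^(-α) * (X + 2*K*Y*(m:ℝ)^(α-1)) = (m:ℝ)^(-α) * X + 2*K*((m:ℝ)⁻¹*Y) := by
      have e1 : (m:ℝ)^(-α) * (m:ℝ)^(α-1) = (m:ℝ)⁻¹ := by
        rw [← Real.rpow_add hmR, ← Real.rpow_neg_one (m:ℝ)]
        congr 1
        ring
      calc (m:ℝ)^(-α) * (X + 2*K*Y*(m:ℝ)^(α-1))
          = (m:ℝ)^(-α) * X + 2*K*Y*((m:ℝ)^(-α) * (m:ℝ)^(α-1)) := by ring
        _ = (m:ℝ)^(-α) * X + 2*K*((m:ℝ)⁻¹*Y) := by rw [e1]; ring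
    have huα : (u m) ^ α ≤ (m:ℝ)^(-α) * (X + 2*K*Y*(m:ℝ)^(α-1)) := by
      rw [hfac]
      have h9 := mul_le_mul_of_nonneg_left (hub m hm') (by positivity : (0:ℝ) ≤ 2*K)
      clear_value α X w u Y K
      linarith
    have hu0α : (0:ℝ) < (u m) ^ α := Real.rpow_pos_of_pos f1 _
    have := Real.rpow_le_rpow_of_nonpos hu0α huα (le_of_lt hp)
    rw [one_div, Real.rpow_rpow_inv f1.le hαne, ← one_div,
      rpow_scale hαne hmR hBpos.le] at this
    calc (X + 2*K*Y*(m:ℝ)^(α-1))^(1/α)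
        = (m:ℝ) * ((m:ℝ)⁻¹ * (X + 2*K*Y*(m:ℝ)^(α-1))^(1/α)) := by field_simp
      _ ≤ (m:ℝ) * u m := mul_le_mul_of_nonneg_left this hmR.le
  have hup2 : ∀ᶠ m : ℕ in atTop, (m:ℝ) * u m ≤ Y := by
    filter_upwards [eventually_ge_atTop 1] with m hm
    exact hgub m (by omega)
  have hlowlim : Tendsto (fun m : ℕ => (X + 2*K*Y*(m:ℝ)^(α-1))^(1/α)) atTop (𝓝 Y) := by
    have h1 := (tendsto_nat_rpow_neg (by linarith : α - 1 < 0)).const_mul (2*K*Y)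
    have h2 := (tendsto_const_nhds : Tendsto (fun _ : ℕ => X) atTop (𝓝 X)).add h1
    have h3 : Tendsto (fun m : ℕ => X + 2*K*Y*(m:ℝ)^(α-1)) atTop (𝓝 X) := by
      simpa using h2
    have h4 := h3.rpow_const (p := 1/α) (Or.inl hX0.ne')
    rwa [hY]
  exact tendsto_of_tendsto_of_tendsto_of_le_of_le' hlowlim tendsto_const_nhds hlow hup2

set_option maxHeartbeats 1000000 in
lemma case_neg (t : ℝ) (ht : t < 0) (γ : ℝ → ℝ)
    (hγ : ∀ z : ℝ, qexpE t (z - γ z) + qexpE t (-(γ z)) = 1) :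
    ∃ (c : ℕ → ℝ) (d : ℕ → ℝ), (∀ m, 0 < d m) ∧
      ∀ z : ℝ, (max t 0 ≤ 1 ∨ 0 < 1 + (1 - max t 0) * z) →
        Tendsto
          (fun m : ℕ =>
            (m : ℝ) * (qexpE t (c m + d m * z - γ (c m + d m * z))).toReal)
          atTop (𝓝 (qexp (max t 0) z)) := by
  have hα1 : 1 < 1 - t := by linarith
  have hα : 0 < 1 - t := by linarith
  set α := 1 - t with hαdef
  have hp : 0 < 1/α := by positivity
  have hmax : max t 0 = 0 := max_eq_right ht.le
  refine ⟨fun m => if m = 0 then 0 else -1/α + 1/m,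
    fun m => if m = 0 then 1 else 1/m, fun m => ?_, ?_⟩
  · by_cases h : m = 0
    · simp [h]
    · have : (0:ℝ) < m := by exact_mod_cast Nat.pos_of_ne_zero h
      simp only [if_neg h]
      positivity
  intro z _
  have hq : qexp (max t 0) z = max (1+z) 0 := by
    rw [hmax, qexp, if_neg one_ne_zero.symm]
    norm_num [Real.rpow_one]
  rw [hq]
  set w := fun m : ℕ => -1/α + 1/(m:ℝ) + (1/(m:ℝ)) * z with hwdef
  set u := fun m : ℕ => (qexpE t (w m - γ (w m))).toReal with hudef
  have hgu : ∀ᶠ m : ℕ in atTop, (fun m : ℕ =>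
      (m : ℝ) * (qexpE t ((if m = 0 then 0 else -1/α + 1/(m:ℝ)) +
        (if m = 0 then 1 else 1/(m:ℝ)) * z -
        γ ((if m = 0 then 0 else -1/α + 1/(m:ℝ)) +
          (if m = 0 then 1 else 1/(m:ℝ)) * z))).toReal) m = (m:ℝ) * u m := by
    filter_upwards [eventually_ge_atTop 1] with m hm
    have hm' : m ≠ 0 := by omega
    simp only [if_neg hm', hudef, hwdef]
  rw [tendsto_congr' hgu]
  clear hgu
  have hkey : ∀ m : ℕ, m ≠ 0 → 1 + α * w m = α * (1+z) / m := by
    intro m hm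
    have hmR : (0:ℝ) < m := by exact_mod_cast Nat.pos_of_ne_zero hm
    rw [hwdef]
    field_simp
    ring
  have hfacts : ∀ m : ℕ, 0 ≤ u m ∧ u m ≤ 1 ∧
      u m ≤ (max (1+α*(w m)) 0)^(1/α) ∧
      (u m < 1 → (1-u m)^α + α*(w m) ≤ (u m) ^ α) ∧
      (0 < u m → u m < 1 → (u m) ^ α = (1-u m)^α + α*(w m)) :=
    fun m => tlt_facts (by linarith) hγ (w m) rfl
  rcases le_or_gt (1+z) 0 with hz0 | hz0
  · rw [max_eq_right hz0]
    apply tendsto_const_nhds.congr'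
    filter_upwards [eventually_ge_atTop 1] with m hm
    have hm' : m ≠ 0 := by omega
    have hmR : (0:ℝ) < m := by exact_mod_cast Nat.pos_of_ne_zero hm'
    obtain ⟨f1, f2, f3, f4, f5⟩ := hfacts m
    rw [hkey m hm'] at f3
    have hb : α * (1+z) / m ≤ 0 := by
      apply div_nonpos_of_nonpos_of_nonneg _ hmR.le
      exact mul_nonpos_of_nonneg_of_nonpos hα.le hz0
    rw [max_eq_right hb, Real.zero_rpow hp.ne'] at f3
    rw [le_antisymm f3 f1, mul_zero]
  · rw [max_eq_left (by linarith)]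
    -- eventually the key inequalities hold
    have hεlim : Tendsto (fun m : ℕ => α*(1+z)/(m:ℝ)) atTop (𝓝 0) := by
      have := (tendsto_inv_atTop_zero.comp tendsto_natCast_atTop_atTop).const_mul (α*(1+z))
      simpa [div_eq_mul_inv] using this
    have hev1 : ∀ᶠ m : ℕ in atTop, α*(1+z)/(m:ℝ) < 1 :=
      hεlim.eventually_lt_const one_pos
    -- crude and refined bounds
    have hbounds : ∀ᶠ m : ℕ in atTop,
        (1+z) - (α*(1+z))^α/α * (m:ℝ)^(1-α) ≤ (m:ℝ) * u m ∧
        (m:ℝ) * u m ≤ (1+z) + α^3*(1+z)^2 * (m:ℝ)⁻¹ := by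
      filter_upwards [hev1, eventually_ge_atTop 1] with m hsm hm
      have hm' : m ≠ 0 := by omega
      have hmR : (0:ℝ) < m := by exact_mod_cast Nat.pos_of_ne_zero hm'
      obtain ⟨f1, f2, f3, f4, f5⟩ := hfacts m
      have hkm := hkey m hm'
      set ε := α*(1+z)/(m:ℝ) with hε
      have hεpos : 0 < ε := by positivity
      -- u < 1
      have huup : u m ≤ ε ^ (1/α) := by
        rw [hkm, max_eq_left hεpos.le] at f3
        exact f3
      have hu1 : u m < 1 := by
        apply lt_of_le_of_lt huup
        exact Real.rpow_lt_one hεpos.le hsm hp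
      -- u > 0
      have hu0 : 0 < u m := by
        rcases eq_or_lt_of_le f1 with h | h
        · exfalso
          have := f4 hu1
          rw [← h] at this
          rw [Real.zero_rpow hα.ne', sub_zero, Real.one_rpow] at this
          clear_value α w u
          linarith
        · exact h
      have heq := f5 hu0 hu1
      have h3 : α * w m = ε - 1 := by
        clear_value α w u ε
        linarith
      rw [h3] at heq
      obtain ⟨hcrude, hcl, hcu⟩ := neg_core hα1 hεpos f1 f2 hu1 heq
      have h5 : (m:ℝ) * ε = α * (1+z) := by
        rw [hε]; field_simp
      have h6 : (m:ℝ) * ε^α = (α*(1+z))^α * (m:ℝ)^(1-α) := by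
        rw [hε, Real.div_rpow (by positivity) hmR.le, Real.rpow_sub hmR, Real.rpow_one]
        field_simp
        rw [hαdef]; ring_nf
      have h6' : (m:ℝ) * (α^2*ε^2) = α^4*(1+z)^2 * (m:ℝ)⁻¹ := by
        rw [hε]; field_simp
      have hlow1 : α * ((m:ℝ) * u m) ≥ α*(1+z) - (α*(1+z))^α * (m:ℝ)^(1-α) := by
        have h7 := mul_le_mul_of_nonneg_left hcl hmR.le
        calc α*(1+z) - (α*(1+z))^α * (m:ℝ)^(1-α)
            = (m:ℝ) * ε - (m:ℝ) * ε^α := by rw [h5, h6]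
          _ ≤ (m:ℝ) * (α * u m) := by clear_value α w u ε; linarith
          _ = α * ((m:ℝ) * u m) := by ring
      have hup1 : α * ((m:ℝ) * u m) ≤ α*(1+z) + α^4*(1+z)^2 * (m:ℝ)⁻¹ := by
        have h7 := mul_le_mul_of_nonneg_left hcu hmR.le
        calc α * ((m:ℝ) * u m) = (m:ℝ) * (α * u m) := by ring
          _ ≤ (m:ℝ) * ε + (m:ℝ) * (α^2*ε^2) := by
              clear_value α w u ε; linarith
          _ = α*(1+z) + α^4*(1+z)^2 * (m:ℝ)⁻¹ := by rw [h5, h6']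
      clear_value α w u ε
      have e : α * ((1+z) - (α*(1+z))^α/α * (m:ℝ)^(1-α))
          = α*(1+z) - (α*(1+z))^α * (m:ℝ)^(1-α) := by
        field_simp
      have e2 : α * ((1+z) + α^3*(1+z)^2 * (m:ℝ)⁻¹)
          = α*(1+z) + α^4*(1+z)^2 * (m:ℝ)⁻¹ := by ring
      constructor
      · have h8 : α * ((1+z) - (α*(1+z))^α/α * (m:ℝ)^(1-α)) ≤ α * ((m:ℝ) * u m) := by
          rw [e]
          exact hlow1
        exact le_of_mul_le_mul_left h8 hα
      · have h8 : α * ((m:ℝ) * u m) ≤ α * ((1+z) + α^3*(1+z)^2 * (m:ℝ)⁻¹) := by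
          rw [e2]
          exact hup1
        exact le_of_mul_le_mul_left h8 hα
    have hlowlim := lim_aux1 (1+z) ((α*(1+z))^α/α) (by linarith : 1 - α < 0)
    have huplim := lim_aux2 (1+z) (α^3*(1+z)^2)
    exact tendsto_of_tendsto_of_tendsto_of_le_of_le' hlowlim huplim
      (hbounds.mono fun m h => h.1) (hbounds.mono fun m h => h.2)

/-- Theorem 2 of the paper: for every `t ∈ ℝ`, the `t`-logistic
distribution function `G_t(z) = exp_t(z - γ_t(z))` satisfies Assumption (GEV)
with index `q = max(t,0)`: there exist sequences `c_m ∈ ℝ` and `d_m > 0` such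
that `m · G_t(c_m + d_m z) → exp_{max(t,0)}(z)` as `m → ∞` for every `z` at
which `exp_{max(t,0)}(z)` is finite. -/
theorem t_logistic_satisfies_gev (t : ℝ) (γ : ℝ → ℝ)
    (hγ : ∀ z : ℝ, qexpE t (z - γ z) + qexpE t (-(γ z)) = 1) :
    ∃ (c : ℕ → ℝ) (d : ℕ → ℝ), (∀ m, 0 < d m) ∧
      ∀ z : ℝ, (max t 0 ≤ 1 ∨ 0 < 1 + (1 - max t 0) * z) →
        Tendsto
          (fun m : ℕ =>
            (m : ℝ) * (qexpE t (c m + d m * z - γ (c m + d m * z))).toReal)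
          atTop (𝓝 (qexp (max t 0) z)) := by
  rcases eq_or_ne t 1 with rfl | h1
  · exact case_t1 γ hγ
  rcases lt_or_gt_of_ne h1 with hlt | hgt
  · rcases lt_trichotomy t 0 with hneg | rfl | hpos
    · exact case_neg t hneg γ hγ
    · exact case_t0 γ hγ
    · exact case_mid t hpos hlt γ hγ
  · exact case_gt t hgt γ hγ
end

section
/- Let q ∈ ℝ and κ > 0. Let ξ_1, …, ξ_J ∈ ℝ^p be distinct points not contained in any affine hyperplane of ℝ^p, and let p_1, …, p_J > 0 with Σ_j p_j = 1. Let x_1, …, x_n ∈ {ξ_1, …, ξ_J} (n ≥ 0). Define Θ = {(α,β) ∈ ℝ × ℝ^p : 1 + (1−q)(α + βᵀξ_j) > 0 for all j = 1,…,J} and, on Θ, the penalized log-likelihood L(α,β) = −Σ_{j=1}^J p_j exp_q(α + βᵀξ_j) + Σ_{i=1}^n log exp_q(α + βᵀx_i) + κ Σ_{j=1}^J p_j log exp_q(α + βᵀξ_j). Then L attains its maximum on Θ, i.e., the additive-smoothing estimator exists. -/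
open Filter Topology

/-- The penalized log-likelihood
`L(α,β) = -Σ_j p_j exp_q(α+βᵀξ_j) + Σ_i log exp_q(α+βᵀx_i)
          + κ Σ_j p_j log exp_q(α+βᵀξ_j)`. -/
noncomputable def penLogLik (q κ : ℝ) {J p n : ℕ}
    (w : Fin J → ℝ) (ξ : Fin J → Fin p → ℝ) (x : Fin n → Fin p → ℝ)
    (ab : ℝ × (Fin p → ℝ)) : ℝ :=
  -(∑ j, w j * qexp q (ab.1 + ∑ i, ab.2 i * ξ j i))
    + (∑ i, Real.log (qexp q (ab.1 + ∑ k, ab.2 k * x i k)))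
    + κ * ∑ j, w j * Real.log (qexp q (ab.1 + ∑ i, ab.2 i * ξ j i))

lemma qexp_pos {q t : ℝ} (h : 0 < 1 + (1 - q) * t) : 0 < qexp q t := by
  unfold qexp
  split_ifs with hq
  · exact Real.exp_pos _
  · rw [max_eq_left h.le]
    exact Real.rpow_pos_of_pos h _

lemma qexp_zero (q : ℝ) : qexp q 0 = 1 := by
  unfold qexp
  split_ifs with hq
  · simp
  · simp

lemma qexp_contAt {q t : ℝ} (h : 0 < 1 + (1 - q) * t) : ContinuousAt (qexp q) t := by
  unfold qexp
  split_ifs with hq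
  · exact Real.continuous_exp.continuousAt
  · have hcont : Continuous fun z : ℝ => max (1 + (1 - q) * z) 0 := by continuity
    have hb : max (1 + (1 - q) * t) 0 ≠ 0 := by
      rw [max_eq_left h.le]; exact h.ne'
    exact hcont.continuousAt.rpow_const (Or.inl hb)

/-- The inverse of `t ↦ log (qexp q t)`. -/
noncomputable def minv (q u : ℝ) : ℝ :=
  if q = 1 then u else (Real.exp ((1 - q) * u) - 1) / (1 - q)

lemma minv_mem (q u : ℝ) : 0 < 1 + (1 - q) * minv q u := by
  unfold minv
  split_ifs with hq
  · simp [hq]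
  · have h1 : (1 : ℝ) - q ≠ 0 := sub_ne_zero.mpr fun hh => hq hh.symm
    rw [mul_div_cancel₀ _ h1]
    have := Real.exp_pos ((1 - q) * u)
    linarith

lemma minv_log_qexp {q t : ℝ} (h : 0 < 1 + (1 - q) * t) :
    minv q (Real.log (qexp q t)) = t := by
  unfold minv qexp
  split_ifs with hq
  · simp [Real.log_exp]
  · have h1 : (1 : ℝ) - q ≠ 0 := sub_ne_zero.mpr fun hh => hq hh.symm
    rw [max_eq_left h.le, Real.log_rpow h,
      show (1 - q) * (1 / (1 - q) * Real.log (1 + (1 - q) * t)) =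
        Real.log (1 + (1 - q) * t) by field_simp, Real.exp_log h]
    field_simp
    ring

lemma minv_zero (q : ℝ) : minv q 0 = 0 := by
  unfold minv; split_ifs <;> simp

lemma minv_continuous (q : ℝ) : Continuous (minv q) := by
  unfold minv
  split_ifs with hq
  · exact continuous_id
  · continuity

lemma superlevel_subset {ψ : ℝ → ℝ} (h1 : Tendsto ψ atBot atBot)
    (h2 : Tendsto ψ atTop atBot) (C : ℝ) :
    ∃ b a : ℝ, ∀ u, C ≤ ψ u → u ∈ Set.Icc b a := by
  obtain ⟨b, hb⟩ := eventually_atBot.mp (h1.eventually (eventually_lt_atBot C))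
  obtain ⟨a, ha⟩ := eventually_atTop.mp (h2.eventually (eventually_lt_atBot C))
  refine ⟨b, a, fun u hu => ⟨?_, ?_⟩⟩
  · by_contra hc
    exact absurd hu (not_le.mpr (hb u (le_of_not_ge hc)))
  · by_contra hc
    exact absurd hu (not_le.mpr (ha u (le_of_not_ge hc)))

lemma bdd_of_tendsto_atBot {ψ : ℝ → ℝ} (hc : Continuous ψ)
    (h1 : Tendsto ψ atBot atBot) (h2 : Tendsto ψ atTop atBot) :
    ∃ M : ℝ, 0 ≤ M ∧ ∀ u, ψ u ≤ M := by
  obtain ⟨b, hb⟩ := eventually_atBot.mp (h1.eventually (eventually_le_atBot (0 : ℝ)))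
  obtain ⟨a, ha⟩ := eventually_atTop.mp (h2.eventually (eventually_le_atBot (0 : ℝ)))
  obtain ⟨M0, hM0⟩ := (isCompact_Icc.image hc).bddAbove
  refine ⟨max M0 0, le_max_right _ _, fun u => ?_⟩
  rcases le_total u b with h | h
  · exact (hb u h).trans (le_max_right _ _)
  rcases le_total a u with h' | h'
  · exact (ha u h').trans (le_max_right _ _)
  · exact le_trans (hM0 (Set.mem_image_of_mem ψ ⟨h, h'⟩)) (le_max_left _ _)

lemma psi_tendsto_atBot (wmin κq : ℝ) (hw : 0 < wmin) (hκ : 0 < κq) (c : ℝ) :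
    Tendsto (fun u => -wmin * Real.exp u + κq * wmin * min u 0 + c * max u 0)
      atBot atBot := by
  apply tendsto_atBot_mono' atBot
    (f₁ := fun u => κq * wmin * u) ?_ ?_
  · filter_upwards [eventually_le_atBot (0 : ℝ)] with u hu
    rw [min_eq_left hu, max_eq_right hu]
    have := Real.exp_pos u
    nlinarith
  · exact (tendsto_const_mul_atBot_of_pos (by positivity)).2 tendsto_id

lemma psi_tendsto_atTop (wmin κq : ℝ) (hw : 0 < wmin) (hκ : 0 < κq) (c : ℝ)
    (hc : 0 ≤ c) :
    Tendsto (fun u => -wmin * Real.exp u + κq * wmin * min u 0 + c * max u 0)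
      atTop atBot := by
  have h0 : Tendsto (fun u : ℝ => u * Real.exp (-u)) atTop (𝓝 0) := by
    simpa using Real.tendsto_pow_mul_exp_neg_atTop_nhds_zero 1
  have h1 : Tendsto (fun u : ℝ => wmin - c * (u * Real.exp (-u))) atTop
      (𝓝 wmin) := by
    have := (h0.const_mul c)
    have h2 := (tendsto_const_nhds (x := wmin) (f := atTop)).sub this
    simpa using h2
  have h3 : Tendsto (fun u : ℝ => (wmin - c * (u * Real.exp (-u))) * Real.exp u)
      atTop atTop := h1.pos_mul_atTop hw Real.tendsto_exp_atTop
  have h4 : Tendsto (fun u : ℝ => wmin * Real.exp u - c * u) atTop atTop := by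
    apply h3.congr
    intro u
    have he : Real.exp (-u) * Real.exp u = 1 := by
      rw [← Real.exp_add]; simp
    have : (wmin - c * (u * Real.exp (-u))) * Real.exp u =
        wmin * Real.exp u - c * u * (Real.exp (-u) * Real.exp u) := by ring
    rw [this, he, mul_one]
  have h5 : Tendsto (fun u : ℝ => -(wmin * Real.exp u - c * u)) atTop atBot :=
    tendsto_neg_atTop_atBot.comp h4
  apply tendsto_atBot_mono' atTop (f₁ := fun u => -(wmin * Real.exp u - c * u)) ?_ h5
  filter_upwards [eventually_ge_atTop (0 : ℝ)] with u hu
  rw [min_eq_right hu, max_eq_left hu]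
  linarith

/-- existence of the additive-smoothing estimator: let `q ∈ ℝ`
and `κ > 0`, let `ξ_1, …, ξ_J ∈ ℝ^p` be distinct points not contained in any
affine hyperplane, let `p_1, …, p_J > 0` sum to `1`, and let
`x_1, …, x_n ∈ {ξ_1, …, ξ_J}`.  Then the penalized log-likelihood `L` attains
its maximum on `Θ = {(α,β) : 1 + (1-q)(α+βᵀξ_j) > 0 ∀j}`. -/
theorem additive_smoothing_estimator_exists
    (q κ : ℝ) (hκ : 0 < κ) (J p n : ℕ)
    (ξ : Fin J → Fin p → ℝ) (hξ_distinct : Function.Injective ξ)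
    (hξ_nohyp : ¬∃ (v : Fin p → ℝ) (c : ℝ), v ≠ 0 ∧ ∀ j, ∑ i, v i * ξ j i = c)
    (w : Fin J → ℝ) (hw_pos : ∀ j, 0 < w j) (hw_sum : ∑ j, w j = 1)
    (x : Fin n → Fin p → ℝ) (hx : ∀ i, ∃ j, x i = ξ j) :
    ∃ ab : ℝ × (Fin p → ℝ),
      (∀ j, 0 < 1 + (1 - q) * (ab.1 + ∑ i, ab.2 i * ξ j i)) ∧
      ∀ ab' : ℝ × (Fin p → ℝ),
        (∀ j, 0 < 1 + (1 - q) * (ab'.1 + ∑ i, ab'.2 i * ξ j i)) →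
        penLogLik q κ w ξ x ab' ≤ penLogLik q κ w ξ x ab := by
  classical
  -- `J` is positive
  have hJ : J ≠ 0 := by
    rintro rfl
    simp at hw_sum
  -- minimal weight
  obtain ⟨j₀, -, hj₀⟩ := Finset.exists_min_image Finset.univ w
    ⟨⟨0, Nat.pos_of_ne_zero hJ⟩, Finset.mem_univ _⟩
  set wmin := w j₀ with hwmin_def
  have hwmin : 0 < wmin := hw_pos j₀
  have hwle : ∀ j, wmin ≤ w j := fun j => hj₀ j (Finset.mem_univ j)
  have hw1 : ∀ j, w j ≤ 1 := by
    intro j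
    rw [← hw_sum]
    exact Finset.single_le_sum (fun k _ => (hw_pos k).le) (Finset.mem_univ j)
  -- the one-dimensional comparison function
  set ψ : ℝ → ℝ := fun u =>
    -wmin * Real.exp u + κ * wmin * min u 0 + (κ + (n : ℝ)) * max u 0 with hψdef
  have hψc : Continuous ψ := by
    rw [hψdef]
    exact ((continuous_const.mul Real.continuous_exp).add
      (continuous_const.mul (continuous_id.min continuous_const))).add
      (continuous_const.mul (continuous_id.max continuous_const))
  have hψ1 : Tendsto ψ atBot atBot := psi_tendsto_atBot wmin κ hwmin hκ _
  have hψ2 : Tendsto ψ atTop atBot := psi_tendsto_atTop wmin κ hwmin hκ _ (by positivity)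
  obtain ⟨M, hM0, hM⟩ := bdd_of_tendsto_atBot hψc hψ1 hψ2
  set L := penLogLik q κ w ξ x with hLdef
  set v := L ((0 : ℝ), fun _ => (0 : ℝ)) with hvdef
  set C := min (v - (J : ℝ) * M) (ψ 0) with hCdef
  obtain ⟨b, a, hba⟩ := superlevel_subset hψ1 hψ2 C
  -- the linear parameter map
  set T : (ℝ × (Fin p → ℝ)) →ₗ[ℝ] (Fin J → ℝ) :=
    { toFun := fun ab j => ab.1 + ∑ i, ab.2 i * ξ j i
      map_add' := by
        intro aa bb
        funext j
        simp [add_mul, Finset.sum_add_distrib]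
        ring
      map_smul' := by
        intro c aa
        funext j
        simp [smul_eq_mul, Finset.mul_sum, mul_add, mul_assoc] } with hTdef
  have hTapp : ∀ (ab : ℝ × (Fin p → ℝ)) (j : Fin J),
      T ab j = ab.1 + ∑ i, ab.2 i * ξ j i := fun _ _ => rfl
  have hker : LinearMap.ker T = ⊥ := by
    rw [LinearMap.ker_eq_bot']
    intro ab hab
    have habj : ∀ j, ab.1 + ∑ i, ab.2 i * ξ j i = 0 := by
      intro j
      rw [← hTapp ab j, hab]
      rfl
    have hb0 : ab.2 = 0 := by
      by_contra hb
      exact hξ_nohyp ⟨ab.2, -ab.1, hb, fun j => by linarith [habj j]⟩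
    have ha0 : ab.1 = 0 := by
      have := habj ⟨0, Nat.pos_of_ne_zero hJ⟩
      rw [hb0] at this
      simpa using this
    exact Prod.ext ha0 hb0
  obtain ⟨Kc, hKc0, hKanti⟩ := T.exists_antilipschitzWith hker
  have hTcont : Continuous T := T.continuous_of_finiteDimensional
  -- the compact window in each coordinate
  set Kset := minv q '' Set.Icc b a with hKsetdef
  have hKsetc : IsCompact Kset := isCompact_Icc.image (minv_continuous q)
  obtain ⟨r, hr⟩ := isBounded_iff_forall_norm_le.mp hKsetc.isBounded
  set A := {ab : ℝ × (Fin p → ℝ) | ∀ j, T ab j ∈ Kset} with hAdef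
  have hAclosed : IsClosed A := by
    have : A = ⋂ j, (fun ab => T ab j) ⁻¹' Kset := by
      ext ab
      simp [hAdef, Set.mem_iInter]
    rw [this]
    exact isClosed_iInter fun j =>
      hKsetc.isClosed.preimage ((continuous_apply j).comp hTcont)
  have hAbdd : Bornology.IsBounded A := by
    rw [isBounded_iff_forall_norm_le]
    refine ⟨Kc * max r 0, fun ab hab => ?_⟩
    have h1 : ‖T ab‖ ≤ max r 0 := by
      rw [pi_norm_le_iff_of_nonneg (le_max_right r 0)]
      intro j
      exact le_max_of_le_left (hr _ (hab j))
    calc ‖ab‖ = dist ab 0 := (dist_zero_right ab).symm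
      _ ≤ Kc * dist (T ab) (T 0) := hKanti.le_mul_dist ab 0
      _ = Kc * ‖T ab‖ := by rw [map_zero, dist_zero_right]
      _ ≤ Kc * max r 0 := by
          exact mul_le_mul_of_nonneg_left h1 Kc.coe_nonneg
  have hAcomp : IsCompact A := Metric.isCompact_of_isClosed_isBounded hAclosed hAbdd
  have hAΘ : ∀ ab ∈ A, ∀ j, 0 < 1 + (1 - q) * (ab.1 + ∑ i, ab.2 i * ξ j i) := by
    intro ab hab j
    obtain ⟨u, -, hu⟩ := hab j
    rw [← hTapp ab j, ← hu]
    exact minv_mem q u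
  -- continuity of the likelihood on Θ
  have hcont_t : ∀ g : Fin p → ℝ,
      Continuous (fun ab : ℝ × (Fin p → ℝ) => ab.1 + ∑ i, ab.2 i * g i) := by
    intro g
    exact continuous_fst.add (continuous_finset_sum _ fun i _ =>
      ((continuous_apply i).comp continuous_snd).mul continuous_const)
  have hLcontAt : ∀ ab : ℝ × (Fin p → ℝ),
      (∀ j, 0 < 1 + (1 - q) * (ab.1 + ∑ i, ab.2 i * ξ j i)) →
      ContinuousAt L ab := by
    intro ab hab
    have hx' : ∀ i, 0 < 1 + (1 - q) * (ab.1 + ∑ k, ab.2 k * x i k) := by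
      intro i
      obtain ⟨j, hj⟩ := hx i
      rw [hj]
      exact hab j
    have c1 : ∀ j : Fin J, ContinuousAt
        (fun ab : ℝ × (Fin p → ℝ) => qexp q (ab.1 + ∑ i, ab.2 i * ξ j i)) ab :=
      fun j => ContinuousAt.comp (g := qexp q) (qexp_contAt (hab j))
        (hcont_t (ξ j)).continuousAt
    have c2 : ∀ j : Fin J, ContinuousAt
        (fun ab : ℝ × (Fin p → ℝ) =>
          Real.log (qexp q (ab.1 + ∑ i, ab.2 i * ξ j i))) ab :=
      fun j => ContinuousAt.comp (g := Real.log)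
        (Real.continuousAt_log (qexp_pos (hab j)).ne') (c1 j)
    have c3 : ∀ i : Fin n, ContinuousAt
        (fun ab : ℝ × (Fin p → ℝ) =>
          Real.log (qexp q (ab.1 + ∑ k, ab.2 k * x i k))) ab := by
      intro i
      have c4 : ContinuousAt
          (fun ab : ℝ × (Fin p → ℝ) => qexp q (ab.1 + ∑ k, ab.2 k * x i k)) ab :=
        ContinuousAt.comp (g := qexp q) (qexp_contAt (hx' i))
          (hcont_t (x i)).continuousAt
      exact ContinuousAt.comp (g := Real.log)
        (Real.continuousAt_log (qexp_pos (hx' i)).ne') c4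
    rw [hLdef]
    unfold penLogLik
    apply ContinuousAt.add
    apply ContinuousAt.add
    · exact (tendsto_finset_sum _ fun j _ => continuousAt_const.mul (c1 j)).neg
    · exact tendsto_finset_sum _ fun i _ => c3 i
    · exact continuousAt_const.mul (tendsto_finset_sum _ fun j _ => continuousAt_const.mul (c2 j))
  -- the key coercivity bound
  have key : ∀ ab : ℝ × (Fin p → ℝ),
      (∀ j, 0 < 1 + (1 - q) * (ab.1 + ∑ i, ab.2 i * ξ j i)) →
      L ab ≤ ∑ j, ψ (Real.log (qexp q (ab.1 + ∑ i, ab.2 i * ξ j i))) := by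
    intro ab hab
    set u : Fin J → ℝ :=
      fun j => Real.log (qexp q (ab.1 + ∑ i, ab.2 i * ξ j i)) with hudef
    have hqe : ∀ j, qexp q (ab.1 + ∑ i, ab.2 i * ξ j i) = Real.exp (u j) :=
      fun j => (Real.exp_log (qexp_pos (hab j))).symm
    have hterm2 : (∑ i, Real.log (qexp q (ab.1 + ∑ k, ab.2 k * x i k)))
        ≤ (n : ℝ) * ∑ j, max (u j) 0 := by
      have h1 : ∀ i : Fin n,
          Real.log (qexp q (ab.1 + ∑ k, ab.2 k * x i k)) ≤ ∑ j, max (u j) 0 := by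
        intro i
        obtain ⟨j, hj⟩ := hx i
        have heq : Real.log (qexp q (ab.1 + ∑ k, ab.2 k * x i k)) = u j := by
          rw [hudef, hj]
        rw [heq]
        calc u j ≤ max (u j) 0 := le_max_left _ _
          _ ≤ ∑ j', max (u j') 0 :=
            Finset.single_le_sum (f := fun k => max (u k) 0)
              (fun k _ => le_max_right _ _) (Finset.mem_univ j)
      calc (∑ i, Real.log (qexp q (ab.1 + ∑ k, ab.2 k * x i k)))
          ≤ ∑ _i : Fin n, (∑ j, max (u j) 0) := Finset.sum_le_sum fun i _ => h1 i
        _ = (n : ℝ) * ∑ j, max (u j) 0 := by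
            rw [Finset.sum_const, Finset.card_univ, Fintype.card_fin, nsmul_eq_mul]
    have hL : L ab = -(∑ j, w j * Real.exp (u j))
        + (∑ i, Real.log (qexp q (ab.1 + ∑ k, ab.2 k * x i k)))
        + κ * ∑ j, w j * u j := by
      rw [hLdef]
      unfold penLogLik
      simp only [hqe, Real.log_exp]
    have hstep : ∀ j, -(w j * Real.exp (u j)) + (n : ℝ) * max (u j) 0
        + κ * (w j * u j) ≤ ψ (u j) := by
      intro j
      have h1 := hwle j
      have h2 := hw1 j
      have h3 := Real.exp_pos (u j)
      simp only [hψdef]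
      have h4 : 0 ≤ (w j - wmin) * Real.exp (u j) :=
        mul_nonneg (by linarith) h3.le
      rcases le_total (u j) 0 with h | h
      · rw [min_eq_left h, max_eq_right h]
        have h5 : κ * ((w j - wmin) * u j) ≤ 0 :=
          mul_nonpos_of_nonneg_of_nonpos hκ.le
            (mul_nonpos_of_nonneg_of_nonpos (by linarith) h)
        nlinarith [h4, h5]
      · rw [min_eq_right h, max_eq_left h]
        have h6 : 0 ≤ κ * ((1 - w j) * u j) :=
          mul_nonneg hκ.le (mul_nonneg (by linarith) h)
        nlinarith [h4, h6]
    have hsum : -(∑ j, w j * Real.exp (u j)) + ((n : ℝ) * ∑ j, max (u j) 0)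
        + κ * ∑ j, w j * u j
        = ∑ j, (-(w j * Real.exp (u j)) + (n : ℝ) * max (u j) 0
            + κ * (w j * u j)) := by
      rw [Finset.sum_add_distrib, Finset.sum_add_distrib, Finset.sum_neg_distrib,
        ← Finset.mul_sum, ← Finset.mul_sum]
    calc L ab = -(∑ j, w j * Real.exp (u j))
          + (∑ i, Real.log (qexp q (ab.1 + ∑ k, ab.2 k * x i k)))
          + κ * ∑ j, w j * u j := hL
      _ ≤ -(∑ j, w j * Real.exp (u j)) + ((n : ℝ) * ∑ j, max (u j) 0)
          + κ * ∑ j, w j * u j := by linarith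
      _ = ∑ j, (-(w j * Real.exp (u j)) + (n : ℝ) * max (u j) 0
          + κ * (w j * u j)) := hsum
      _ ≤ ∑ j, ψ (u j) := Finset.sum_le_sum fun j _ => hstep j
  -- points of Θ with large likelihood have all coordinates in the window
  have hsl : ∀ ab : ℝ × (Fin p → ℝ),
      (∀ j, 0 < 1 + (1 - q) * (ab.1 + ∑ i, ab.2 i * ξ j i)) → v ≤ L ab →
      ∀ j, Real.log (qexp q (ab.1 + ∑ i, ab.2 i * ξ j i)) ∈ Set.Icc b a := by
    intro ab hab hv j
    apply hba
    set u : Fin J → ℝ :=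
      fun j => Real.log (qexp q (ab.1 + ∑ i, ab.2 i * ξ j i)) with hudef
    have h1 := key ab hab
    have h2 : ∑ j', ψ (u j') ≤ ψ (u j) + (J : ℝ) * M := by
      rw [← Finset.add_sum_erase _ _ (Finset.mem_univ j)]
      have h3 : ∑ j' ∈ Finset.univ.erase j, ψ (u j')
          ≤ (Finset.univ.erase j).card • M :=
        Finset.sum_le_card_nsmul _ _ _ fun k _ => hM (u k)
      rw [nsmul_eq_mul] at h3
      have h4 : (((Finset.univ.erase j).card : ℕ) : ℝ) * M ≤ (J : ℝ) * M := by
        apply mul_le_mul_of_nonneg_right _ hM0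
        have : (Finset.univ.erase j).card ≤ J := by
          calc (Finset.univ.erase j).card ≤ (Finset.univ : Finset (Fin J)).card :=
            Finset.card_le_card (Finset.erase_subset _ _)
            _ = J := by rw [Finset.card_univ, Fintype.card_fin]
        exact_mod_cast this
      linarith
    have h5 : v - (J : ℝ) * M ≤ ψ (u j) := by linarith
    exact le_trans (min_le_left _ _) h5
  -- the candidate compact set
  set S := A ∩ {ab : ℝ × (Fin p → ℝ) | v ≤ L ab} with hSdef
  have hLconA : ContinuousOn L A := fun ab hab =>
    (hLcontAt ab (hAΘ ab hab)).continuousWithinAt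
  have hSclosed : IsClosed S := by
    have : S = A ∩ L ⁻¹' Set.Ici v := rfl
    rw [this]
    exact hLconA.preimage_isClosed_of_isClosed hAclosed isClosed_Ici
  have hScomp : IsCompact S := hAcomp.of_isClosed_subset hSclosed Set.inter_subset_left
  have hS0 : ((0 : ℝ), fun _ => (0 : ℝ)) ∈ S := by
    constructor
    · intro j
      have ht0 : T ((0 : ℝ), fun _ => (0 : ℝ)) j = 0 := by
        rw [hTapp]
        simp
      rw [ht0]
      have h0Icc : (0 : ℝ) ∈ Set.Icc b a := hba 0 (min_le_right _ _)
      exact ⟨0, h0Icc, minv_zero q⟩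
    · exact le_refl v
  obtain ⟨abm, habmS, hmax⟩ :=
    hScomp.exists_isMaxOn ⟨_, hS0⟩ (hLconA.mono Set.inter_subset_left)
  refine ⟨abm, hAΘ abm habmS.1, ?_⟩
  intro ab' hab'
  rcases le_total (L ab') v with h | h
  · calc penLogLik q κ w ξ x ab' = L ab' := rfl
      _ ≤ v := h
      _ ≤ L abm := hmax hS0
  · have hab'S : ab' ∈ S := by
      constructor
      · intro j
        rw [hTapp]
        exact ⟨Real.log (qexp q (ab'.1 + ∑ i, ab'.2 i * ξ j i)),
          hsl ab' hab' h j, minv_log_qexp (hab' j)⟩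
      · exact h
    exact hmax hab'S
end

section
/- Let 0 ≤ q ≤ 1 and κ > 0. Let ξ_1, …, ξ_J ∈ ℝ^p be distinct points not contained in any affine hyperplane of ℝ^p, and let p_1, …, p_J > 0 with Σ_j p_j = 1. Let x_1, …, x_n ∈ {ξ_1, …, ξ_J} (n ≥ 0). Define Θ = {(α,β) ∈ ℝ × ℝ^p : 1 + (1−q)(α + βᵀξ_j) > 0 for all j = 1,…,J} and, on Θ, L(α,β) = −Σ_{j=1}^J p_j exp_q(α + βᵀξ_j) + Σ_{i=1}^n log exp_q(α + βᵀx_i) + κ Σ_{j=1}^J p_j log exp_q(α + βᵀξ_j). Then L is a concave function on the convex set Θ (since −exp_q(z) is concave when q ≥ 0 and log exp_q(z) is concave when q ≤ 1), and the maximizer of L on Θ is unique. -/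
open Filter Topology

lemma qexp_eq_of_ne {q : ℝ} (hq : q ≠ 1) {z : ℝ} (hz : 0 < 1 + (1 - q) * z) :
    qexp q z = (1 + (1 - q) * z) ^ (1 / (1 - q)) := by
  unfold qexp; rw [if_neg hq, max_eq_left hz.le]

lemma log_qexp_eq {q : ℝ} (hq : q ≠ 1) {z : ℝ} (hz : 0 < 1 + (1 - q) * z) :
    Real.log (qexp q z) = (1 / (1 - q)) * Real.log (1 + (1 - q) * z) := by
  rw [qexp_eq_of_ne hq hz, Real.log_rpow hz]

/-- `G` is the strictly concave one-dimensional piece. -/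
noncomputable def G (q κ z : ℝ) : ℝ := -qexp q z + κ * Real.log (qexp q z)

lemma qexp_one (z : ℝ) : qexp 1 z = Real.exp z := by
  unfold qexp; rw [if_pos rfl]

lemma comb_mem {q x y s t : ℝ} (hx : 0 < 1 + (1 - q) * x) (hy : 0 < 1 + (1 - q) * y)
    (hs : 0 ≤ s) (ht : 0 ≤ t) (hst : s + t = 1) :
    0 < 1 + (1 - q) * (s * x + t * y) := by
  have key : 1 + (1 - q) * (s * x + t * y)
      = s * (1 + (1 - q) * x) + t * (1 + (1 - q) * y) := by linear_combination (-1 : ℝ) * hst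
  rw [key]
  rcases hs.lt_or_eq with hs' | hs'
  · have := mul_nonneg ht hy.le
    nlinarith [mul_pos hs' hx]
  · have hts : t = 1 := by linarith
    rw [← hs', hts]; linarith

lemma Hle {q : ℝ} (hq1 : q ≤ 1) {x y s t : ℝ} (hx : 0 < 1 + (1 - q) * x)
    (hy : 0 < 1 + (1 - q) * y) (hs : 0 ≤ s) (ht : 0 ≤ t) (hst : s + t = 1) :
    s * Real.log (qexp q x) + t * Real.log (qexp q y)
      ≤ Real.log (qexp q (s * x + t * y)) := by
  rcases eq_or_lt_of_le hq1 with hq | hq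
  · subst hq
    simp only [qexp_one, Real.log_exp]
    exact le_of_eq rfl
  · have hq' : q ≠ 1 := ne_of_lt hq
    have hm := comb_mem hx hy hs ht hst
    rw [log_qexp_eq hq' hx, log_qexp_eq hq' hy, log_qexp_eq hq' hm]
    have hr : (0:ℝ) ≤ 1 / (1 - q) := div_nonneg zero_le_one (by linarith)
    have key : 1 + (1 - q) * (s * x + t * y)
        = s * (1 + (1 - q) * x) + t * (1 + (1 - q) * y) := by linear_combination (-1 : ℝ) * hst
    have hlog := (strictConcaveOn_log_Ioi.concaveOn).2 (Set.mem_Ioi.2 hx) (Set.mem_Ioi.2 hy)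
      hs ht hst
    simp only [smul_eq_mul] at hlog
    rw [key]
    nlinarith [mul_le_mul_of_nonneg_left hlog hr]

lemma Gstrict {q κ : ℝ} (hq0 : 0 ≤ q) (hq1 : q ≤ 1) (hκ : 0 < κ) {x y s t : ℝ}
    (hx : 0 < 1 + (1 - q) * x) (hy : 0 < 1 + (1 - q) * y) (hxy : x ≠ y)
    (hs : 0 < s) (ht : 0 < t) (hst : s + t = 1) :
    s * G q κ x + t * G q κ y < G q κ (s * x + t * y) := by
  rcases eq_or_lt_of_le hq1 with hq | hq
  · subst hq
    simp only [G, qexp_one, Real.log_exp]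
    have hexp := strictConvexOn_exp.2 (Set.mem_univ x) (Set.mem_univ y) hxy hs ht hst
    simp only [smul_eq_mul] at hexp
    nlinarith [hexp]
  · have hq' : q ≠ 1 := ne_of_lt hq
    have hc : 0 < 1 - q := by linarith
    have hm := comb_mem hx hy hs.le ht.le hst
    have hr1 : 1 ≤ 1 / (1 - q) := by rw [le_div_iff₀ hc]; linarith
    have hrpos : (0:ℝ) < 1 / (1 - q) := by positivity
    have key : 1 + (1 - q) * (s * x + t * y)
        = s * (1 + (1 - q) * x) + t * (1 + (1 - q) * y) := by linear_combination (-1 : ℝ) * hst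
    have hne : 1 + (1 - q) * x ≠ 1 + (1 - q) * y := by
      intro h; apply hxy
      have : (1 - q) * x = (1 - q) * y := by linarith
      exact mul_left_cancel₀ hc.ne' this
    have hlog := strictConcaveOn_log_Ioi.2 (Set.mem_Ioi.2 hx) (Set.mem_Ioi.2 hy) hne hs ht hst
    simp only [smul_eq_mul] at hlog
    have hpow := (convexOn_rpow hr1).2 (Set.mem_Ici.2 hx.le) (Set.mem_Ici.2 hy.le)
      hs.le ht.le hst
    simp only [smul_eq_mul] at hpow
    simp only [G]
    rw [log_qexp_eq hq' hx, log_qexp_eq hq' hy, log_qexp_eq hq' hm,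
      qexp_eq_of_ne hq' hx, qexp_eq_of_ne hq' hy, qexp_eq_of_ne hq' hm, key]
    nlinarith [mul_lt_mul_of_pos_left hlog (mul_pos hκ hrpos)]

lemma Gle {q κ : ℝ} (hq0 : 0 ≤ q) (hq1 : q ≤ 1) (hκ : 0 < κ) {x y s t : ℝ}
    (hx : 0 < 1 + (1 - q) * x) (hy : 0 < 1 + (1 - q) * y)
    (hs : 0 ≤ s) (ht : 0 ≤ t) (hst : s + t = 1) :
    s * G q κ x + t * G q κ y ≤ G q κ (s * x + t * y) := by
  rcases eq_or_ne x y with rfl | hxy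
  · have : s * x + t * x = x := by linear_combination x * hst
    rw [this]; linear_combination (G q κ x) * hst
  · rcases hs.lt_or_eq with hs' | hs'
    · rcases ht.lt_or_eq with ht' | ht'
      · exact (Gstrict hq0 hq1 hκ hx hy hxy hs' ht' hst).le
      · have : s = 1 := by linarith
        rw [← ht', this]; simp
    · have : t = 1 := by linarith
      rw [← hs', this]; simp

section Part2
variable {q κ : ℝ} {J p n : ℕ}

lemma comb_eval (s t : ℝ) (a b : ℝ × (Fin p → ℝ)) (v : Fin p → ℝ) :
    (s • a + t • b).1 + ∑ i, (s • a + t • b).2 i * v i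
      = s * (a.1 + ∑ i, a.2 i * v i) + t * (b.1 + ∑ i, b.2 i * v i) := by
  simp only [Prod.fst_add, Prod.snd_add, Prod.smul_fst, Prod.smul_snd, Pi.add_apply,
    Pi.smul_apply, smul_eq_mul, add_mul, mul_add, mul_assoc, Finset.sum_add_distrib, Finset.mul_sum]
  ring

lemma penLogLik_eq (w : Fin J → ℝ) (ξ : Fin J → Fin p → ℝ) (x : Fin n → Fin p → ℝ)
    (ab : ℝ × (Fin p → ℝ)) :
    penLogLik q κ w ξ x ab
      = (∑ j, w j * G q κ (ab.1 + ∑ i, ab.2 i * ξ j i))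
        + ∑ i, Real.log (qexp q (ab.1 + ∑ k, ab.2 k * x i k)) := by
  unfold penLogLik G
  rw [show (∑ j, w j * (-qexp q (ab.1 + ∑ i, ab.2 i * ξ j i)
      + κ * Real.log (qexp q (ab.1 + ∑ i, ab.2 i * ξ j i))))
    = -(∑ j, w j * qexp q (ab.1 + ∑ i, ab.2 i * ξ j i))
      + κ * ∑ j, w j * Real.log (qexp q (ab.1 + ∑ i, ab.2 i * ξ j i)) from by
    rw [Finset.mul_sum, ← Finset.sum_neg_distrib, ← Finset.sum_add_distrib]
    exact Finset.sum_congr rfl fun j _ => by ring]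
  ring

lemma sum_comb (s t : ℝ) (w : Fin J → ℝ) (f g : Fin J → ℝ) :
    ∑ j, w j * (s * f j + t * g j) = s * ∑ j, w j * f j + t * ∑ j, w j * g j := by
  rw [Finset.mul_sum, Finset.mul_sum, ← Finset.sum_add_distrib]
  exact Finset.sum_congr rfl fun j _ => by ring

end Part2

/-- concavity, and uniqueness of the additive-smoothing
estimator, for `0 ≤ q ≤ 1`: with `Θ = {(α,β) : 1 + (1-q)(α+βᵀξ_j) > 0 ∀j}`,
the penalized log-likelihood `L` is concave on the convex set `Θ`, and the
maximizer of `L` on `Θ` is unique. -/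
theorem additive_smoothing_estimator_concave_unique
    (q κ : ℝ) (hq0 : 0 ≤ q) (hq1 : q ≤ 1) (hκ : 0 < κ) (J p n : ℕ)
    (ξ : Fin J → Fin p → ℝ) (hξ_distinct : Function.Injective ξ)
    (hξ_nohyp : ¬∃ (v : Fin p → ℝ) (c : ℝ), v ≠ 0 ∧ ∀ j, ∑ i, v i * ξ j i = c)
    (w : Fin J → ℝ) (hw_pos : ∀ j, 0 < w j) (hw_sum : ∑ j, w j = 1)
    (x : Fin n → Fin p → ℝ) (hx : ∀ i, ∃ j, x i = ξ j) :
    ConcaveOn ℝ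
        {ab : ℝ × (Fin p → ℝ) | ∀ j, 0 < 1 + (1 - q) * (ab.1 + ∑ i, ab.2 i * ξ j i)}
        (penLogLik q κ w ξ x) ∧
      ∀ ab ∈ {ab : ℝ × (Fin p → ℝ) |
          ∀ j, 0 < 1 + (1 - q) * (ab.1 + ∑ i, ab.2 i * ξ j i)},
        ∀ ab' ∈ {ab : ℝ × (Fin p → ℝ) |
          ∀ j, 0 < 1 + (1 - q) * (ab.1 + ∑ i, ab.2 i * ξ j i)},
        (∀ c ∈ {ab : ℝ × (Fin p → ℝ) |
            ∀ j, 0 < 1 + (1 - q) * (ab.1 + ∑ i, ab.2 i * ξ j i)},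
          penLogLik q κ w ξ x c ≤ penLogLik q κ w ξ x ab) →
        (∀ c ∈ {ab : ℝ × (Fin p → ℝ) |
            ∀ j, 0 < 1 + (1 - q) * (ab.1 + ∑ i, ab.2 i * ξ j i)},
          penLogLik q κ w ξ x c ≤ penLogLik q κ w ξ x ab') →
        ab = ab' := by
  set Θ : Set (ℝ × (Fin p → ℝ)) :=
    {ab : ℝ × (Fin p → ℝ) | ∀ j, 0 < 1 + (1 - q) * (ab.1 + ∑ i, ab.2 i * ξ j i)} with hΘ
  -- membership of the x_i points in the ξ family
  have hxmem : ∀ (ab : ℝ × (Fin p → ℝ)), ab ∈ Θ → ∀ i,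
      0 < 1 + (1 - q) * (ab.1 + ∑ k, ab.2 k * x i k) := by
    intro ab hab i
    obtain ⟨j, hj⟩ := hx i
    rw [hj]
    exact hab j
  have hΘconv : Convex ℝ Θ := by
    intro a ha b hb s t hs ht hst
    intro j
    rw [comb_eval]
    exact comb_mem (ha j) (hb j) hs ht hst
  -- the main concavity inequality, for strictly positive weights
  have hmain : ∀ a ∈ Θ, ∀ b ∈ Θ, ∀ s t : ℝ, 0 ≤ s → 0 ≤ t → s + t = 1 →
      s * penLogLik q κ w ξ x a + t * penLogLik q κ w ξ x b
        ≤ penLogLik q κ w ξ x (s • a + t • b) := by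
    intro a ha b hb s t hs ht hst
    rw [penLogLik_eq, penLogLik_eq, penLogLik_eq]
    simp only [comb_eval]
    have h1 : ∑ j, w j * (s * G q κ (a.1 + ∑ i, a.2 i * ξ j i)
        + t * G q κ (b.1 + ∑ i, b.2 i * ξ j i))
        ≤ ∑ j, w j * G q κ (s * (a.1 + ∑ i, a.2 i * ξ j i)
            + t * (b.1 + ∑ i, b.2 i * ξ j i)) := by
      refine Finset.sum_le_sum fun j _ => ?_
      exact mul_le_mul_of_nonneg_left (Gle hq0 hq1 hκ (ha j) (hb j) hs ht hst) (hw_pos j).le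
    have h2 : ∑ i, (s * Real.log (qexp q (a.1 + ∑ k, a.2 k * x i k))
        + t * Real.log (qexp q (b.1 + ∑ k, b.2 k * x i k)))
        ≤ ∑ i, Real.log (qexp q (s * (a.1 + ∑ k, a.2 k * x i k)
            + t * (b.1 + ∑ k, b.2 k * x i k))) := by
      refine Finset.sum_le_sum fun i _ => ?_
      exact Hle hq1 (hxmem a ha i) (hxmem b hb i) hs ht hst
    rw [sum_comb] at h1
    rw [Finset.sum_add_distrib, ← Finset.mul_sum, ← Finset.mul_sum] at h2
    linarith
  have hconc : ConcaveOn ℝ Θ (penLogLik q κ w ξ x) := by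
    refine ⟨hΘconv, fun a ha b hb s t hs ht hst => ?_⟩
    simpa only [smul_eq_mul] using hmain a ha b hb s t hs ht hst
  refine ⟨hconc, ?_⟩
  intro a ha b hb hamax hbmax
  -- equal evaluations imply equal parameters
  have key : (∀ j, a.1 + ∑ i, a.2 i * ξ j i = b.1 + ∑ i, b.2 i * ξ j i) → a = b := by
    intro h'
    have h2 : a.2 = b.2 := by
      by_contra hv
      apply hξ_nohyp
      refine ⟨fun i => a.2 i - b.2 i, b.1 - a.1, ?_, ?_⟩
      · intro h0
        apply hv
        funext i
        have := congrFun h0 i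
        simpa [sub_eq_zero] using this
      · intro j
        have hj := h' j
        have : ∑ i, (a.2 i - b.2 i) * ξ j i
            = (∑ i, a.2 i * ξ j i) - ∑ i, b.2 i * ξ j i := by
          rw [← Finset.sum_sub_distrib]
          exact Finset.sum_congr rfl fun i _ => by ring
        rw [this]
        linarith
    have hJpos : 0 < J := by
      rcases Nat.eq_zero_or_pos J with h | h
      · subst h; simp at hw_sum
      · exact h
    have h1 : a.1 = b.1 := by
      have := h' ⟨0, hJpos⟩
      rw [h2] at this
      linarith
    exact Prod.ext h1 h2
  by_contra hne
  have hex : ∃ j, a.1 + ∑ i, a.2 i * ξ j i ≠ b.1 + ∑ i, b.2 i * ξ j i := by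
    by_contra h
    push_neg at h
    exact hne (key h)
  obtain ⟨j0, hj0⟩ := hex
  set m := (1/2 : ℝ) • a + (1/2 : ℝ) • b with hm
  have hmem : m ∈ Θ := hΘconv ha hb (by norm_num) (by norm_num) (by norm_num)
  have hLab : penLogLik q κ w ξ x b ≤ penLogLik q κ w ξ x a := hamax b hb
  have hLba : penLogLik q κ w ξ x a ≤ penLogLik q κ w ξ x b := hbmax a ha
  have hml : penLogLik q κ w ξ x m ≤ penLogLik q κ w ξ x a := hamax m hmem
  -- strict inequality at the midpoint
  have h1 : ∑ j, w j * ((1/2 : ℝ) * G q κ (a.1 + ∑ i, a.2 i * ξ j i)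
      + (1/2 : ℝ) * G q κ (b.1 + ∑ i, b.2 i * ξ j i))
      < ∑ j, w j * G q κ ((1/2 : ℝ) * (a.1 + ∑ i, a.2 i * ξ j i)
          + (1/2 : ℝ) * (b.1 + ∑ i, b.2 i * ξ j i)) := by
    refine Finset.sum_lt_sum (fun j _ => mul_le_mul_of_nonneg_left
      (Gle hq0 hq1 hκ (ha j) (hb j) (by norm_num) (by norm_num) (by norm_num)) (hw_pos j).le)
      ⟨j0, Finset.mem_univ j0, ?_⟩
    exact mul_lt_mul_of_pos_left
      (Gstrict hq0 hq1 hκ (ha j0) (hb j0) hj0 (by norm_num) (by norm_num) (by norm_num))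
      (hw_pos j0)
  have h2 : ∑ i, ((1/2 : ℝ) * Real.log (qexp q (a.1 + ∑ k, a.2 k * x i k))
      + (1/2 : ℝ) * Real.log (qexp q (b.1 + ∑ k, b.2 k * x i k)))
      ≤ ∑ i, Real.log (qexp q ((1/2 : ℝ) * (a.1 + ∑ k, a.2 k * x i k)
          + (1/2 : ℝ) * (b.1 + ∑ k, b.2 k * x i k))) := by
    refine Finset.sum_le_sum fun i _ => ?_
    exact Hle hq1 (hxmem a ha i) (hxmem b hb i) (by norm_num) (by norm_num) (by norm_num)
  have hstrict : (1/2 : ℝ) * penLogLik q κ w ξ x a + (1/2 : ℝ) * penLogLik q κ w ξ x b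
      < penLogLik q κ w ξ x m := by
    rw [penLogLik_eq, penLogLik_eq, penLogLik_eq]
    simp only [hm, comb_eval]
    rw [sum_comb] at h1
    rw [Finset.sum_add_distrib, ← Finset.mul_sum, ← Finset.mul_sum] at h2
    linarith
  linarith
end

section
/- Let n_0^*, n_1^*, n_2^* > 0 be real numbers, and define f(θ,φ) = −(θ+φ)/2 + n_0^* log θ + n_1^* log((θ+φ)/2) + n_2^* log φ for θ > 0, φ > 0. Then f attains its maximum over {(θ,φ) : θ > 0, φ > 0} uniquely at θ̂ = 2 n_0^* (n_0^* + n_1^* + n_2^*)/(n_0^* + n_2^*) and φ̂ = 2 n_2^* (n_0^* + n_1^* + n_2^*)/(n_0^* + n_2^*). -/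
open Real

private lemma tangent_le (a t th : ℝ) (ha : 0 < a) (ht : 0 < t) (hth : 0 < th) :
    a * Real.log t ≤ a * Real.log th + a / th * (t - th) := by
  have h := Real.log_le_sub_one_of_pos (div_pos ht hth)
  rw [Real.log_div ht.ne' hth.ne'] at h
  have h2 := mul_le_mul_of_nonneg_left h ha.le
  have h3 : a * (t / th - 1) = a / th * (t - th) := by field_simp
  nlinarith [h2]

private lemma tangent_lt (a t th : ℝ) (ha : 0 < a) (ht : 0 < t) (hth : 0 < th)
    (hne : t ≠ th) :
    a * Real.log t < a * Real.log th + a / th * (t - th) := by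
  have hq : t / th ≠ 1 := by
    intro heq
    apply hne
    field_simp at heq
    exact heq
  have h := Real.log_lt_sub_one_of_pos (div_pos ht hth) hq
  rw [Real.log_div ht.ne' hth.ne'] at h
  have h2 := mul_lt_mul_of_pos_left h ha
  have h3 : a * (t / th - 1) = a / th * (t - th) := by field_simp
  nlinarith [h2]

/-- Example on the three-point `q = 0` model: for real numbers
`n_0*, n_1*, n_2* > 0`, the function
`f(θ,φ) = -(θ+φ)/2 + n_0* log θ + n_1* log((θ+φ)/2) + n_2* log φ` on
`{θ > 0, φ > 0}` attains its maximum uniquely at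
`θ̂ = 2 n_0* (n_0*+n_1*+n_2*)/(n_0*+n_2*)` and
`φ̂ = 2 n_2* (n_0*+n_1*+n_2*)/(n_0*+n_2*)`. -/
theorem three_point_additive_smoothing_maximizer
    (n0 n1 n2 : ℝ) (h0 : 0 < n0) (h1 : 0 < n1) (h2 : 0 < n2) :
    (∀ θ φ : ℝ, 0 < θ → 0 < φ →
        -(θ + φ) / 2 + n0 * Real.log θ + n1 * Real.log ((θ + φ) / 2) +
            n2 * Real.log φ ≤
          -(2 * n0 * (n0 + n1 + n2) / (n0 + n2) +
                2 * n2 * (n0 + n1 + n2) / (n0 + n2)) / 2 +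
            n0 * Real.log (2 * n0 * (n0 + n1 + n2) / (n0 + n2)) +
            n1 * Real.log ((2 * n0 * (n0 + n1 + n2) / (n0 + n2) +
                2 * n2 * (n0 + n1 + n2) / (n0 + n2)) / 2) +
            n2 * Real.log (2 * n2 * (n0 + n1 + n2) / (n0 + n2))) ∧
      ∀ θ φ : ℝ, 0 < θ → 0 < φ →
        (-(θ + φ) / 2 + n0 * Real.log θ + n1 * Real.log ((θ + φ) / 2) +
            n2 * Real.log φ =
          -(2 * n0 * (n0 + n1 + n2) / (n0 + n2) +
                2 * n2 * (n0 + n1 + n2) / (n0 + n2)) / 2 +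
            n0 * Real.log (2 * n0 * (n0 + n1 + n2) / (n0 + n2)) +
            n1 * Real.log ((2 * n0 * (n0 + n1 + n2) / (n0 + n2) +
                2 * n2 * (n0 + n1 + n2) / (n0 + n2)) / 2) +
            n2 * Real.log (2 * n2 * (n0 + n1 + n2) / (n0 + n2))) →
        θ = 2 * n0 * (n0 + n1 + n2) / (n0 + n2) ∧
        φ = 2 * n2 * (n0 + n1 + n2) / (n0 + n2) := by

  have hN : 0 < n0 + n1 + n2 := by linarith
  have hc : 0 < n0 + n2 := by linarith
  set N := n0 + n1 + n2 with hNdef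
  set c := n0 + n2 with hcdef
  have hN' : N ≠ 0 := hN.ne'
  have hc' : c ≠ 0 := hc.ne'
  set A := 2 * n0 * N / c with hAdef
  set B := 2 * n2 * N / c with hBdef
  have hApos : 0 < A := div_pos (by positivity) hc
  have hBpos : 0 < B := div_pos (by positivity) hc
  have hAB : A + B = 2 * N := by
    rw [hAdef, hBdef, hNdef, hcdef]; field_simp
  have hhalf : (A + B) / 2 = N := by rw [hAB]; ring
  have hsA : n0 / A = c / (2 * N) := by
    rw [hAdef]; field_simp
  have hsB : n2 / B = c / (2 * N) := by
    rw [hBdef]; field_simp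
  have key : ∀ θ φ : ℝ,
      c / (2 * N) * (θ - A) + c / (2 * N) * (φ - B) + n1 / N * ((θ + φ) / 2 - N)
        = (θ + φ) / 2 - N := by
    intro θ φ
    rw [hAdef, hBdef, hcdef, hNdef]
    field_simp
    ring
  rw [hhalf]
  constructor
  · intro θ φ hθ hφ
    have ha := tangent_le n0 θ A h0 hθ hApos
    rw [hsA] at ha
    have hb := tangent_le n2 φ B h2 hφ hBpos
    rw [hsB] at hb
    have hm := tangent_le n1 ((θ + φ) / 2) N h1 (by positivity) hN
    linarith [key θ φ, hAB]
  · intro θ φ hθ hφ heq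
    have hb := tangent_le n2 φ B h2 hφ hBpos
    rw [hsB] at hb
    have ha := tangent_le n0 θ A h0 hθ hApos
    rw [hsA] at ha
    have hm := tangent_le n1 ((θ + φ) / 2) N h1 (by positivity) hN
    constructor
    · by_contra hne
      have ha' := tangent_lt n0 θ A h0 hθ hApos hne
      rw [hsA] at ha'
      linarith [key θ φ, hAB]
    · by_contra hne
      have hb' := tangent_lt n2 φ B h2 hφ hBpos hne
      rw [hsB] at hb'
      linarith [key θ φ, hAB]
end
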